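/- arXiv:2411.18244 — 10 statements merged into one kernel-verified Lean document; each statement's English description precedes it below -/
import Mathlib

section
/- Let n ≥ 3 be a natural number that is not prime (so the set V₂ of elements of ZMod n that are neither the additive identity 0 nor additive generators is nonempty), let l = φ(n) + 1, and let d_avg = (∑_{v ∈ V₂} deg(v)) / (n − l) be the average degree in the power graph P(C_n) of the elements of V₂. Then the spectral radius satisfies λ₁(P(C_n)) ≥ ((d_avg − 1) + √((d_avg + 1 − 2l)² + 4l(n − l))) / 2. -/
open scoped Classical
open scoped Pointwise
open Matrix

noncomputable section

/-- The power graph of an additive group: distinct `x, y` are adjacent iff one is a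
natural-number multiple (additive power) of the other. -/
def addPowerGraph (G : Type*) [AddGroup G] : SimpleGraph G where
  Adj x y := x ≠ y ∧ ∃ m : ℕ, x = m • y ∨ y = m • x
  symm := by
    constructor
    rintro x y ⟨hxy, m, hm⟩
    exact ⟨hxy.symm, m, hm.symm⟩
  loopless := by
    constructor
    rintro x ⟨hx, -⟩
    exact hx rfl

set_option maxHeartbeats 1000000

lemma rayleigh_bound {V : Type*} [Fintype V] [DecidableEq V] (A : Matrix V V ℝ)
    (hA : A.IsHermitian) (lam : ℝ) (hlam : ∀ μ ∈ spectrum ℝ A, μ ≤ lam)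
    (x : V → ℝ) : x ⬝ᵥ A.mulVec x ≤ lam * (x ⬝ᵥ x) := by
  set M : Matrix V V ℝ := lam • (1 : Matrix V V ℝ) - A with hM
  have hMH : M.IsHermitian := by
    have h1 : (lam • (1 : Matrix V V ℝ)).IsHermitian := by
      unfold Matrix.IsHermitian
      ext i j
      by_cases h : i = j <;> simp [Matrix.one_apply, h, eq_comm]
    exact h1.sub hA
  have hps : M.PosSemidef := by
    refine hMH.posSemidef_iff_eigenvalues_nonneg.mpr (fun i => ?_)
    show (0:ℝ) ≤ hMH.eigenvalues i
    have hmem : hMH.eigenvalues i ∈ spectrum ℝ M := hMH.eigenvalues_mem_spectrum_real i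
    have hseq : spectrum ℝ M = ({lam} : Set ℝ) - spectrum ℝ A := by
      have halg : M = (algebraMap ℝ (Matrix V V ℝ)) lam - A := by
        rw [hM, Algebra.algebraMap_eq_smul_one]
      rw [halg, ← spectrum.singleton_sub_eq]
    rw [hseq] at hmem
    obtain ⟨r, hr, s, hs, hrs⟩ := Set.mem_sub.mp hmem
    simp only [Set.mem_singleton_iff] at hr
    subst hr
    have := hlam s hs
    linarith [hrs]
  have h0 := hps.dotProduct_mulVec_nonneg x
  have hsx : star x = x := by simp
  rw [hsx] at h0
  have h1 : x ⬝ᵥ M.mulVec x = lam * (x ⬝ᵥ x) - x ⬝ᵥ A.mulVec x := by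
    simp [hM, Matrix.sub_mulVec, Matrix.smul_mulVec, Matrix.one_mulVec,
      dotProduct_sub, dotProduct_smul, smul_eq_mul]
  rw [h1] at h0
  linarith

variable {n : ℕ} [NeZero n]

lemma V1_adj (u v : ZMod n) (hu : u = 0 ∨ addOrderOf u = n) (huv : u ≠ v) :
    (addPowerGraph (ZMod n)).Adj u v := by
  refine ⟨huv, ?_⟩
  rcases hu with rfl | hu
  · exact ⟨0, Or.inl (by simp)⟩
  · have hval : ((u.val : ℕ) : ZMod n) = u := ZMod.natCast_val u |>.trans (ZMod.cast_id _ _)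
    have hord : addOrderOf ((u.val : ℕ) : ZMod n) = n / n.gcd u.val :=
      ZMod.addOrderOf_coe u.val (NeZero.ne n)
    rw [hval, hu] at hord
    have hg1 : n.gcd u.val = 1 := by
      rcases (Nat.div_eq_self.mp hord.symm) with h | h
      · exact absurd h (NeZero.ne n)
      · exact h
    have hunit : IsUnit u := by
      rw [← hval, ZMod.isUnit_iff_coprime]
      exact Nat.Coprime.symm hg1
    obtain ⟨w, hw⟩ := hunit
    refine ⟨(v * ↑w⁻¹).val, Or.inr ?_⟩
    rw [nsmul_eq_mul, ZMod.natCast_val, ZMod.cast_id, ← hw, mul_assoc]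
    simp

lemma card_V1 (hn : 3 ≤ n) :
    (Finset.univ.filter (fun v : ZMod n => ¬(v ≠ 0 ∧ addOrderOf v ≠ n))).card
      = Nat.totient n + 1 := by
  have h1 : (Finset.univ.filter (fun v : ZMod n => ¬(v ≠ 0 ∧ addOrderOf v ≠ n)))
      = Finset.univ.filter (fun v : ZMod n => v = 0 ∨ addOrderOf v = n) := by
    apply Finset.filter_congr
    intro v _
    constructor
    · intro h
      by_contra hc
      push_neg at hc
      exact h ⟨hc.1, hc.2⟩
    · rintro (rfl | h) ⟨h1, h2⟩
      · exact h1 rfl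
      · exact h2 h
  rw [h1, Finset.filter_or, Finset.card_union_of_disjoint]
  · have h2 : (Finset.univ.filter (fun v : ZMod n => v = 0)) = {(0 : ZMod n)} := by
      ext v; simp
    have h3 : (Finset.univ.filter (fun v : ZMod n => addOrderOf v = n)).card = Nat.totient n := by
      exact IsAddCyclic.card_addOrderOf_eq_totient (α := ZMod n) (d := n) (by rw [ZMod.card])
    rw [h2, h3]
    simp [Nat.add_comm]
  · rw [Finset.disjoint_left]
    rintro v hv hv2
    simp only [Finset.mem_filter] at hv hv2
    rw [hv.2] at hv2
    have : addOrderOf (0 : ZMod n) = 1 := addOrderOf_zero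
    omega


/-- Spectral-radius lower bound for the power graph of the cyclic group `ZMod n`. -/
theorem spectralRadius_powerGraph_cyclic_lower_bound
    (n : ℕ) [NeZero n] (hn : 3 ≤ n) (hnp : ¬ n.Prime) (lam l davg : ℝ)
    (hlam : IsGreatest (spectrum ℝ ((addPowerGraph (ZMod n)).adjMatrix ℝ)) lam)
    (hl : l = (Nat.totient n : ℝ) + 1)
    (hdavg : davg =
      (∑ v ∈ Finset.univ.filter (fun v : ZMod n => v ≠ 0 ∧ addOrderOf v ≠ n),
        ((addPowerGraph (ZMod n)).degree v : ℝ)) / ((n : ℝ) - l)) :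
    ((davg - 1) + Real.sqrt ((davg + 1 - 2 * l) ^ 2 + 4 * l * ((n : ℝ) - l))) / 2 ≤ lam := by
  classical
  set G := addPowerGraph (ZMod n) with hG
  set A := G.adjMatrix ℝ with hAdef
  set P : ZMod n → Prop := fun v => v ≠ 0 ∧ addOrderOf v ≠ n with hPdef
  set V2 : Finset (ZMod n) := Finset.univ.filter P with hV2def
  set V1 : Finset (ZMod n) := Finset.univ.filter (fun v => ¬ P v) with hV1def
  -- cardinalities
  have hcard1 : V1.card = Nat.totient n + 1 := card_V1 hn
  have hcardsum : V2.card + V1.card = n := by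
    rw [hV2def, hV1def, Finset.card_filter_add_card_filter_not]
    simp [ZMod.card]
  have hto : Nat.totient n + 2 ≤ n := by
    have h1 := Nat.totient_lt n (by omega)
    have h2 : Nat.totient n ≠ n - 1 := fun h =>
      hnp ((Nat.totient_eq_iff_prime (by omega)).mp h)
    omega
  have hV2pos : 1 ≤ V2.card := by omega
  -- real versions
  have hc1 : (V1.card : ℝ) = l := by rw [hcard1, hl]; push_cast; ring
  have hc2 : (V2.card : ℝ) = (n : ℝ) - l := by
    have h := hcardsum
    have : (V2.card : ℝ) + (V1.card : ℝ) = (n : ℝ) := by exact_mod_cast congrArg (Nat.cast : ℕ → ℝ) h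
    linarith [hc1, this]
  have hlpos : (0:ℝ) < l := by rw [hl]; positivity
  have hnlpos : (0:ℝ) < (n : ℝ) - l := by
    rw [← hc2]
    exact_mod_cast hV2pos
  -- adjacency rows for V1 elements
  have hnotP : ∀ u : ZMod n, ¬ P u → (u = 0 ∨ addOrderOf u = n) := by
    intro u hu
    by_contra hc
    push_neg at hc
    exact hu ⟨hc.1, hc.2⟩
  have hrow : ∀ u v : ZMod n, ¬ P u → A u v = if u = v then (0:ℝ) else 1 := by
    intro u v hu
    by_cases h : u = v
    · subst h; simp [hAdef]
    · have hadj : G.Adj u v := V1_adj u v (hnotP u hu) h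
      simp [hAdef, hadj, h]
  have hcol : ∀ u v : ZMod n, ¬ P v → A u v = if u = v then (0:ℝ) else 1 := by
    intro u v hv
    have h1 : A u v = A v u := by
      simp [hAdef, SimpleGraph.adjMatrix_apply, G.adj_comm]
    rw [h1, hrow v u hv]
    by_cases h : u = v <;> simp [h, Ne.symm, eq_comm]
  -- block sums
  have hper11 : ∀ u ∈ V1, ∑ v ∈ V1, A u v = (V1.card : ℝ) - 1 := by
    intro u hu
    have huP : ¬ P u := (Finset.mem_filter.mp hu).2
    calc ∑ v ∈ V1, A u v = ∑ v ∈ V1, ((1:ℝ) - if u = v then 1 else 0) := by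
          refine Finset.sum_congr rfl (fun v _ => ?_)
          rw [hrow u v huP]
          by_cases h : u = v <;> simp [h]
      _ = (V1.card : ℝ) - 1 := by
          rw [Finset.sum_sub_distrib, Finset.sum_const, Finset.sum_ite_eq, if_pos hu]
          simp
  have hS11 : ∑ u ∈ V1, ∑ v ∈ V1, A u v = (V1.card : ℝ) * ((V1.card : ℝ) - 1) := by
    rw [Finset.sum_congr rfl hper11, Finset.sum_const, nsmul_eq_mul]
  have hper12 : ∀ u ∈ V1, ∑ v ∈ V2, A u v = (V2.card : ℝ) := by
    intro u hu
    have huP : ¬ P u := (Finset.mem_filter.mp hu).2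
    calc ∑ v ∈ V2, A u v = ∑ v ∈ V2, (1:ℝ) := by
          refine Finset.sum_congr rfl (fun v hv => ?_)
          have hvP : P v := (Finset.mem_filter.mp hv).2
          rw [hrow u v huP, if_neg (fun h : u = v => huP (h ▸ hvP))]
      _ = (V2.card : ℝ) := by simp
  have hS12 : ∑ u ∈ V1, ∑ v ∈ V2, A u v = (V1.card : ℝ) * (V2.card : ℝ) := by
    rw [Finset.sum_congr rfl hper12, Finset.sum_const, nsmul_eq_mul]
  have hper21 : ∀ u ∈ V2, ∑ v ∈ V1, A u v = (V1.card : ℝ) := by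
    intro u hu
    have huP : P u := (Finset.mem_filter.mp hu).2
    calc ∑ v ∈ V1, A u v = ∑ v ∈ V1, (1:ℝ) := by
          refine Finset.sum_congr rfl (fun v hv => ?_)
          have hvP : ¬ P v := (Finset.mem_filter.mp hv).2
          rw [hcol u v hvP, if_neg (fun h : u = v => hvP (h ▸ huP))]
      _ = (V1.card : ℝ) := by simp
  have hS21 : ∑ u ∈ V2, ∑ v ∈ V1, A u v = (V2.card : ℝ) * (V1.card : ℝ) := by
    rw [Finset.sum_congr rfl hper21, Finset.sum_const, nsmul_eq_mul]
  have hdegsum : ∀ u : ZMod n, ∑ v, A u v = (G.degree u : ℝ) := by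
    intro u
    have h1 : ∑ v, A u v = ((Finset.univ.filter (G.Adj u)).card : ℝ) := by
      simp [hAdef, SimpleGraph.adjMatrix_apply, Finset.sum_boole]
    rw [h1, SimpleGraph.degree, SimpleGraph.neighborFinset_eq_filter]
  have hsplitsum : ∀ f : ZMod n → ℝ, ∑ v, f v = (∑ v ∈ V2, f v) + ∑ v ∈ V1, f v := by
    intro f
    rw [hV2def, hV1def]
    exact (Finset.sum_filter_add_sum_filter_not Finset.univ P f).symm
  have hS22 : ∑ u ∈ V2, ∑ v ∈ V2, A u v
      = (∑ u ∈ V2, (G.degree u : ℝ)) - (V2.card : ℝ) * (V1.card : ℝ) := by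
    have hsplit : ∀ u ∈ V2,
        ∑ v ∈ V2, A u v = (G.degree u : ℝ) - (V1.card : ℝ) := by
      intro u hu
      have h1 : (∑ v ∈ V2, A u v) + ∑ v ∈ V1, A u v = ∑ v, A u v :=
        (hsplitsum (fun v => A u v)).symm
      rw [hdegsum u, hper21 u hu] at h1
      linarith
    rw [Finset.sum_congr rfl hsplit, Finset.sum_sub_distrib, Finset.sum_const, nsmul_eq_mul]
  -- the test vector
  set s : ℝ := Real.sqrt ((davg + 1 - 2 * l) ^ 2 + 4 * l * ((n : ℝ) - l)) with hs
  set μ : ℝ := ((davg - 1) + s) / 2 with hμ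
  have hs2 : s ^ 2 = (davg + 1 - 2 * l) ^ 2 + 4 * l * ((n : ℝ) - l) := by
    rw [hs]
    exact Real.sq_sqrt (by positivity)
  have hroot : μ ^ 2 - (davg - 1) * μ + ((l - 1) * (davg - l) - l * ((n:ℝ) - l)) = 0 := by
    rw [hμ]
    linear_combination hs2 / 4
  set x : ZMod n → ℝ := fun v => if P v then μ - l + 1 else (n : ℝ) - l with hx
  have hxval1 : ∀ u ∈ V1, x u = (n : ℝ) - l := by
    intro u hu
    simp only [hx]
    rw [if_neg (Finset.mem_filter.mp hu).2]
  have hxval2 : ∀ u ∈ V2, x u = μ - l + 1 := by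
    intro u hu
    simp only [hx]
    rw [if_pos (Finset.mem_filter.mp hu).2]
  have hinner : ∀ u : ZMod n,
      (A.mulVec x) u = (∑ v ∈ V2, A u v) * (μ - l + 1) + (∑ v ∈ V1, A u v) * ((n:ℝ) - l) := by
    intro u
    show ∑ v, A u v * x v = _
    rw [hsplitsum (fun v => A u v * x v)]
    congr 1
    · rw [Finset.sum_mul]
      exact Finset.sum_congr rfl (fun v hv => by rw [hxval2 v hv])
    · rw [Finset.sum_mul]
      exact Finset.sum_congr rfl (fun v hv => by rw [hxval1 v hv])
  have hQ : x ⬝ᵥ A.mulVec x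
      = (μ - l + 1) * ((∑ u ∈ V2, ∑ v ∈ V2, A u v) * (μ - l + 1)
          + (∑ u ∈ V2, ∑ v ∈ V1, A u v) * ((n:ℝ) - l))
      + ((n:ℝ) - l) * ((∑ u ∈ V1, ∑ v ∈ V2, A u v) * (μ - l + 1)
          + (∑ u ∈ V1, ∑ v ∈ V1, A u v) * ((n:ℝ) - l)) := by
    show ∑ u, x u * (A.mulVec x) u = _
    rw [hsplitsum (fun u => x u * (A.mulVec x) u)]
    congr 1
    · rw [Finset.sum_congr rfl (fun u hu => by rw [hxval2 u hu, hinner u])]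
      rw [← Finset.mul_sum, Finset.sum_add_distrib, ← Finset.sum_mul, ← Finset.sum_mul]
    · rw [Finset.sum_congr rfl (fun u hu => by rw [hxval1 u hu, hinner u])]
      rw [← Finset.mul_sum, Finset.sum_add_distrib, ← Finset.sum_mul, ← Finset.sum_mul]
  have hN : x ⬝ᵥ x = (V2.card : ℝ) * (μ - l + 1) ^ 2 + (V1.card : ℝ) * ((n:ℝ) - l) ^ 2 := by
    show ∑ v, x v * x v = _
    rw [hsplitsum (fun v => x v * x v)]
    congr 1
    · rw [Finset.sum_congr rfl (fun v hv => by rw [hxval2 v hv]), Finset.sum_const,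
        nsmul_eq_mul]
      ring
    · rw [Finset.sum_congr rfl (fun v hv => by rw [hxval1 v hv]), Finset.sum_const,
        nsmul_eq_mul]
      ring
  -- degree sum in terms of davg
  have hSdeg : ∑ u ∈ V2, (G.degree u : ℝ) = davg * ((n : ℝ) - l) := by
    rw [hdavg]
    field_simp
  -- Hermitian
  have hH : A.IsHermitian := by
    unfold Matrix.IsHermitian
    ext i j
    simp [hAdef, SimpleGraph.adjMatrix_apply, G.adj_comm]
  -- Rayleigh
  have hray := rayleigh_bound A hH lam hlam.2 x
  have hQ' : x ⬝ᵥ A.mulVec x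
      = μ * (((n:ℝ) - l) * (μ - l + 1) ^ 2 + l * ((n:ℝ) - l) ^ 2) := by
    rw [hQ, hS11, hS12, hS21, hS22, hSdeg, hc1, hc2]
    linear_combination (-(((n:ℝ) - l) * (μ - l + 1))) * hroot
  have hN' : x ⬝ᵥ x = ((n:ℝ) - l) * (μ - l + 1) ^ 2 + l * ((n:ℝ) - l) ^ 2 := by
    rw [hN, hc1, hc2]
  rw [hQ', hN'] at hray
  have hNpos : (0:ℝ) < ((n:ℝ) - l) * (μ - l + 1) ^ 2 + l * ((n:ℝ) - l) ^ 2 := by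
    have h1 : (0:ℝ) < l * ((n:ℝ) - l) ^ 2 := by positivity
    nlinarith [sq_nonneg (μ - l + 1)]
  have hμlam : μ ≤ lam := by
    by_contra hc
    push_neg at hc
    have := mul_lt_mul_of_pos_right hc hNpos
    linarith
  rw [hμ] at hμlam
  exact hμlam
end
end

section
/- Let p be a prime and m ≥ 2 a natural number, and set n = p^m, l = φ(n) + 1. Let V₂ be the (nonempty) set of elements of ZMod n that are neither 0 nor additive generators, and let d_avg = (∑_{v ∈ V₂} deg(v)) / (n − l). Then equality holds in the spectral-radius bound: λ₁(P(C_n)) = ((d_avg − 1) + √((d_avg + 1 − 2l)² + 4l(n − l))) / 2, and both sides equal n − 1. -/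
open scoped Classical

noncomputable section

/-- In `ZMod p^m`, if the `p`-adic valuation of `y.val` is at most that of `x.val`,
then `x` is a natural multiple of `y`. -/
lemma mult_of {n p m : ℕ} [NeZero n] (hp : p.Prime) (hn : n = p ^ m)
    (x y : ZMod n) (hx : x ≠ 0) (hy : y ≠ 0)
    (h : y.val.factorization p ≤ x.val.factorization p) :
    ∃ k : ℕ, x = k • y := by
  set a := x.val with ha
  set b := y.val with hb
  have ha0 : a ≠ 0 := by simpa [ha, ZMod.val_eq_zero] using hx
  have hb0 : b ≠ 0 := by simpa [hb, ZMod.val_eq_zero] using hy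
  set i := a.factorization p with hi
  set j := b.factorization p with hj
  have hafact : p ^ i * (a / p ^ i) = a := Nat.ordProj_mul_ordCompl_eq_self a p
  have hbfact : p ^ j * (b / p ^ j) = b := Nat.ordProj_mul_ordCompl_eq_self b p
  have hadvd : ¬ p ∣ (a / p ^ i) := Nat.not_dvd_ordCompl hp ha0
  have hbdvd : ¬ p ∣ (b / p ^ j) := Nat.not_dvd_ordCompl hp hb0
  have hunit : IsUnit ((b / p ^ j : ℕ) : ZMod n) := by
    rw [ZMod.isUnit_iff_coprime, hn]
    exact (Nat.Coprime.pow_right _ ((hp.coprime_iff_not_dvd.mpr hbdvd).symm))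
  obtain ⟨u, hu⟩ := hunit
  set c : ZMod n := (p : ZMod n) ^ (i - j) * ((a / p ^ i : ℕ) : ZMod n) * ↑u⁻¹ with hc
  refine ⟨c.val, ?_⟩
  have hcy : c * y = x := by
    have hxcast : ((a : ℕ) : ZMod n) = x := by
      rw [ha, ZMod.natCast_val, ZMod.cast_id]
    have hycast : ((b : ℕ) : ZMod n) = y := by
      rw [hb, ZMod.natCast_val, ZMod.cast_id]
    have hy' : y = (p : ZMod n) ^ j * ↑u := by
      rw [← hycast]; conv_lhs => rw [← hbfact]
      rw [hu]; push_cast; ring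
    have hx' : x = (p : ZMod n) ^ i * ((a / p ^ i : ℕ) : ZMod n) := by
      rw [← hxcast]; conv_lhs => rw [← hafact]
      push_cast; ring
    rw [hc, hy', hx']
    have : (p : ZMod n) ^ (i - j) * (p : ZMod n) ^ j = (p : ZMod n) ^ i := by
      rw [← pow_add, Nat.sub_add_cancel h]
    calc (p : ZMod n) ^ (i - j) * ((a / p ^ i : ℕ) : ZMod n) * ↑u⁻¹ * ((p : ZMod n) ^ j * ↑u)
        = ((p : ZMod n) ^ (i - j) * (p : ZMod n) ^ j) * ((a / p ^ i : ℕ) : ZMod n) * (↑u⁻¹ * ↑u) := by ring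
      _ = (p : ZMod n) ^ i * ((a / p ^ i : ℕ) : ZMod n) := by
          rw [this, u.inv_mul]; ring
  rw [nsmul_eq_mul, ZMod.natCast_val, ZMod.cast_id, hcy]

/-- The power graph of a cyclic group of prime-power order is complete. -/
lemma powerGraph_top {n p m : ℕ} [NeZero n] (hp : p.Prime) (hn : n = p ^ m) :
    addPowerGraph (ZMod n) = ⊤ := by
  ext x y
  show (x ≠ y ∧ ∃ k : ℕ, x = k • y ∨ y = k • x) ↔ x ≠ y
  constructor
  · exact fun h => h.1
  · intro hxy
    refine ⟨hxy, ?_⟩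
    by_cases hx : x = 0
    · exact ⟨0, Or.inl (by simp [hx])⟩
    by_cases hy : y = 0
    · exact ⟨0, Or.inr (by simp [hy])⟩
    rcases le_total (y.val.factorization p) (x.val.factorization p) with h | h
    · obtain ⟨k, hk⟩ := mult_of hp hn x y hx hy h
      exact ⟨k, Or.inl hk⟩
    · obtain ⟨k, hk⟩ := mult_of hp hn y x hy hx h
      exact ⟨k, Or.inr hk⟩

/-- The all-ones matrix minus the identity (the adjacency matrix of the complete graph)
has greatest spectral value `card V - 1`. -/
lemma isGreatest_J_sub_one (V : Type*) [Fintype V] [Nonempty V] [DecidableEq V] :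
    IsGreatest (spectrum ℝ ((Matrix.of fun _ _ => (1:ℝ)) - 1 : Matrix V V ℝ))
      ((Fintype.card V : ℝ) - 1) := by
  set J : Matrix V V ℝ := Matrix.of fun _ _ => (1:ℝ) with hJ
  set N : ℝ := (Fintype.card V : ℝ) with hN
  have hN1 : 1 ≤ N := by
    rw [hN]; exact_mod_cast Fintype.card_pos
  have hJJ : J * J = N • J := by
    ext i j
    simp [hJ, Matrix.mul_apply, hN]
  constructor
  · rw [spectrum.mem_iff]
    intro hU
    have hM : algebraMap ℝ (Matrix V V ℝ) (N - 1) - (J - 1) = N • 1 - J := by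
      rw [Algebra.algebraMap_eq_smul_one]
      module
    rw [hM] at hU
    have hker : Matrix.mulVec (N • 1 - J) (fun _ => (1:ℝ)) = 0 := by
      funext i
      simp [Matrix.mulVec, dotProduct, Matrix.sub_apply, Matrix.smul_apply,
        Matrix.one_apply, hJ, Finset.sum_sub_distrib, hN]
    have hinj := Matrix.mulVec_injective_iff_isUnit.mpr hU
    have : (fun _ => (1:ℝ)) = (0 : V → ℝ) := by
      apply hinj
      rw [hker, Matrix.mulVec_zero]
    have := congrFun this (Classical.arbitrary V)
    norm_num at this
  · intro μ hμ
    by_contra hcon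
    push_neg at hcon
    rw [spectrum.mem_iff] at hμ
    apply hμ
    set c : ℝ := μ + 1 with hc
    have hcN : N < c := by linarith
    have hc0 : c ≠ 0 := by linarith
    have hcN0 : c - N ≠ 0 := by linarith
    set a : ℝ := 1 / (c * (c - N)) with ha
    have hM : algebraMap ℝ (Matrix V V ℝ) μ - (J - 1) = c • 1 - J := by
      rw [Algebra.algebraMap_eq_smul_one, hc]
      module
    rw [hM]
    have hmul : (c • 1 - J) * ((1/c) • (1 : Matrix V V ℝ) + a • J) = 1 := ?_
    · exact ⟨⟨_, _, hmul, mul_eq_one_comm.mp hmul⟩, rfl⟩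
    have expand : (c • 1 - J) * ((1/c) • (1 : Matrix V V ℝ) + a • J)
        = (c * (1/c)) • (1 : Matrix V V ℝ) + (c * a - 1/c - a * N) • J := by
      simp only [Matrix.mul_add, Matrix.sub_mul, Matrix.smul_mul, Matrix.mul_smul,
        Matrix.one_mul, Matrix.mul_one, hJJ, smul_smul]
      module
    rw [expand]
    have h1 : c * (1/c) = 1 := by field_simp
    have h2 : c * a - 1/c - a * N = 0 := by
      rw [ha]; field_simp; ring
    rw [h1, h2, one_smul, zero_smul, add_zero]

lemma totient_succ_lt (p m : ℕ) (hp : p.Prime) (hm : 2 ≤ m) :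
    (p ^ m).totient + 1 < p ^ m := by
  have h0 : 0 < m := by omega
  obtain ⟨q, rfl⟩ : ∃ q, p = q + 1 := ⟨p - 1, by have := hp.pos; omega⟩
  rw [Nat.totient_prime_pow hp h0]
  have h1 : 2 ≤ (q + 1) ^ (m - 1) := le_trans hp.two_le (Nat.le_self_pow (by omega) _)
  have h2 : (q + 1) ^ m = (q + 1) ^ (m - 1) * (q + 1) := by
    rw [← pow_succ]; congr 1; omega
  have h3 : (q + 1) ^ (m - 1) * (q + 1) = (q + 1) ^ (m - 1) * q + (q + 1) ^ (m - 1) := by ring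
  have h4 : q + 1 - 1 = q := by omega
  rw [h4]
  omega

/-- For `n = p ^ m` a prime power (`m ≥ 2`), equality holds in the spectral-radius
lower bound, and both sides equal `n - 1`. -/
theorem spectralRadius_powerGraph_cyclic_primePower_eq
    (n p m : ℕ) [NeZero n] (hp : p.Prime) (hm : 2 ≤ m) (hn : n = p ^ m)
    (lam l davg : ℝ)
    (hlam : IsGreatest (spectrum ℝ ((addPowerGraph (ZMod n)).adjMatrix ℝ)) lam)
    (hl : l = (Nat.totient n : ℝ) + 1)
    (hdavg : davg =
      (∑ v ∈ Finset.univ.filter (fun v : ZMod n => v ≠ 0 ∧ addOrderOf v ≠ n),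
        ((addPowerGraph (ZMod n)).degree v : ℝ)) / ((n : ℝ) - l)) :
    lam = ((davg - 1) + Real.sqrt ((davg + 1 - 2 * l) ^ 2 + 4 * l * ((n : ℝ) - l))) / 2 ∧
    lam = (n : ℝ) - 1 := by
  have htotlt : n.totient + 1 < n := by rw [hn]; exact totient_succ_lt p m hp hm
  have hn2 : 2 ≤ n := by omega
  have hadj : ∀ x y : ZMod n, (addPowerGraph (ZMod n)).Adj x y ↔ x ≠ y := by
    intro x y; rw [powerGraph_top hp hn]; exact SimpleGraph.top_adj x y
  -- the adjacency matrix is J - I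
  have hA : (addPowerGraph (ZMod n)).adjMatrix ℝ
      = ((Matrix.of fun _ _ => (1:ℝ)) - 1 : Matrix (ZMod n) (ZMod n) ℝ) := by
    ext i j
    by_cases hij : i = j <;>
      simp [SimpleGraph.adjMatrix_apply, hadj, hij, Matrix.one_apply, Matrix.sub_apply]
  have hG := isGreatest_J_sub_one (ZMod n)
  rw [ZMod.card] at hG
  rw [hA] at hlam
  have hlamval : lam = (n : ℝ) - 1 := hlam.unique hG
  -- degrees
  have hdeg : ∀ v : ZMod n, (addPowerGraph (ZMod n)).degree v = n - 1 := by
    intro v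
    have hNB : (addPowerGraph (ZMod n)).neighborFinset v = Finset.univ.erase v := by
      ext w
      simp only [SimpleGraph.mem_neighborFinset, hadj, Finset.mem_erase, Finset.mem_univ,
        and_true]
      exact ne_comm
    rw [SimpleGraph.degree, hNB, Finset.card_erase_of_mem (Finset.mem_univ v),
      Finset.card_univ, ZMod.card]
  -- counting non-generators
  set S := Finset.univ.filter (fun v : ZMod n => v ≠ 0 ∧ addOrderOf v ≠ n) with hSdef
  have horder : (Finset.univ.filter fun v : ZMod n => addOrderOf v = n).card = n.totient := by
    have := IsAddCyclic.card_addOrderOf_eq_totient (α := ZMod n) (d := n)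
      (by rw [ZMod.card])
    simpa using this
  have hScard : S.card = n - (n.totient + 1) := by
    have hcompl : S = (Finset.univ.filter (fun v : ZMod n => v = 0 ∨ addOrderOf v = n))ᶜ := by
      ext v
      simp only [hSdef, Finset.mem_filter, Finset.mem_compl, Finset.mem_univ, true_and]
      tauto
    rw [hcompl, Finset.card_compl, ZMod.card]
    congr 1
    rw [Finset.filter_or, Finset.card_union_of_disjoint, Finset.filter_eq',
      if_pos (Finset.mem_univ (0 : ZMod n)), Finset.card_singleton, horder]
    · omega
    rw [Finset.disjoint_left]
    intro v hv hv'
    rw [Finset.filter_eq'] at hv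
    simp only [Finset.mem_univ, if_true, Finset.mem_singleton] at hv
    simp only [Finset.mem_filter] at hv'
    rw [hv, addOrderOf_zero] at hv'
    omega
  -- evaluate the average degree
  have hsum : (∑ v ∈ S, ((addPowerGraph (ZMod n)).degree v : ℝ))
      = (S.card : ℝ) * ((n : ℝ) - 1) := by
    have hconst : ∀ v ∈ S, ((addPowerGraph (ZMod n)).degree v : ℝ) = (n : ℝ) - 1 := by
      intro v _
      rw [hdeg v, Nat.cast_sub (by omega)]
      norm_num
    rw [Finset.sum_congr rfl hconst, Finset.sum_const, nsmul_eq_mul]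
  have hcast : (S.card : ℝ) = (n : ℝ) - l := by
    rw [hScard, hl, Nat.cast_sub (le_of_lt htotlt)]
    push_cast
    ring
  have hne : (n : ℝ) - l ≠ 0 := by
    rw [hl]
    have : ((n.totient : ℝ) + 1) < (n : ℝ) := by exact_mod_cast htotlt
    linarith
  have hdavg' : davg = (n : ℝ) - 1 := by
    rw [hdavg, hsum, hcast, mul_div_cancel_left₀ _ hne]
  refine ⟨?_, hlamval⟩
  rw [hlamval, hdavg']
  have harg : (((n : ℝ) - 1) + 1 - 2 * l) ^ 2 + 4 * l * ((n : ℝ) - l) = (n : ℝ) ^ 2 := by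
    ring
  rw [harg, Real.sqrt_sq (by positivity)]
  ring
end
end

section
/- Let n ≥ 3 and let D_avg = (∑_{v ∈ ZMod n} deg(v)) / n be the average degree of the power graph P(C_n) of the cyclic group ZMod n. Then the spectral radius of the power graph of the dihedral group of order 2n satisfies λ₁(P(D_{2n})) ≥ (D_avg + √(D_avg² + 4)) / 2. -/
open scoped Classical

noncomputable section

/-- The power graph of a (multiplicative) group: distinct `x, y` are adjacent iff one is
a natural-number power of the other. -/
def powerGraph (G : Type*) [Group G] : SimpleGraph G where
  Adj x y := x ≠ y ∧ ∃ m : ℕ, x = y ^ m ∨ y = x ^ m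
  symm := by
    constructor
    rintro x y ⟨hxy, m, hm⟩
    exact ⟨hxy.symm, m, hm.symm⟩
  loopless := by
    constructor
    rintro x ⟨hx, -⟩
    exact hx rfl

namespace PGAux


open DihedralGroup

variable {n : ℕ}

lemma r_pow (i : ZMod n) (m : ℕ) : (r i : DihedralGroup n) ^ m = r (m • i) := by
  induction m with
  | zero => simp
  | succ k ih => rw [pow_succ, ih, r_mul_r, succ_nsmul]

lemma sr_pow (i : ZMod n) (m : ℕ) :
    (sr i : DihedralGroup n) ^ m = if Even m then 1 else sr i := by
  induction m with
  | zero => simp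
  | succ k ih =>
    rw [pow_succ, ih]
    rcases Nat.even_or_odd k with h | h
    · simp [h, Nat.even_add_one, one_mul]
    · simp [Nat.even_add_one, Nat.not_even_iff_odd.2 h, sr_mul_self]

lemma adj_rr (i j : ZMod n) :
    (powerGraph (DihedralGroup n)).Adj (r i) (r j) ↔ (addPowerGraph (ZMod n)).Adj i j := by
  constructor
  · rintro ⟨hne, m, h | h⟩
    · exact ⟨fun e => hne (congrArg r e), m, Or.inl (by rwa [r_pow, r.injEq] at h)⟩
    · exact ⟨fun e => hne (congrArg r e), m, Or.inr (by rwa [r_pow, r.injEq] at h)⟩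
  · rintro ⟨hne, m, h | h⟩
    · exact ⟨fun e => hne (r.inj e), m, Or.inl (by rw [r_pow, ← h])⟩
    · exact ⟨fun e => hne (r.inj e), m, Or.inr (by rw [r_pow, ← h])⟩

lemma adj_r_sr (i j : ZMod n) :
    (powerGraph (DihedralGroup n)).Adj (r i) (sr j) ↔ i = 0 := by
  constructor
  · rintro ⟨hne, m, h | h⟩
    · rw [sr_pow] at h
      split_ifs at h
      · rw [one_def] at h
        exact r.inj h
    · rw [r_pow] at h
      exact absurd h (by simp)
  · rintro rfl
    exact ⟨(by intro h'; cases h'), 0, Or.inl (by rw [pow_zero, one_def])⟩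

lemma not_adj_sr_sr (i j : ZMod n) :
    ¬ (powerGraph (DihedralGroup n)).Adj (sr i) (sr j) := by
  rintro ⟨hne, m, h | h⟩
  · rw [sr_pow] at h
    split_ifs at h
    · rw [one_def] at h
      exact absurd h (by intro h'; cases h')
    · exact hne h
  · rw [sr_pow] at h
    split_ifs at h
    · rw [one_def] at h
      exact absurd h (by intro h'; cases h')
    · exact hne h.symm

lemma sum_dihedral [NeZero n] {M : Type*} [AddCommMonoid M] (f : DihedralGroup n → M) :
    ∑ g, f g = (∑ i : ZMod n, f (r i)) + ∑ i : ZMod n, f (sr i) := by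
  let e : ZMod n ⊕ ZMod n ≃ DihedralGroup n :=
    ⟨Sum.elim r sr, fun g => match g with | .r i => .inl i | .sr i => .inr i,
      by rintro (i | i) <;> rfl, by rintro (i | i) <;> rfl⟩
  rw [← Equiv.sum_comp e f, Fintype.sum_sum_type]
  rfl

lemma deg_sum {V : Type*} [Fintype V] (G : SimpleGraph V) [DecidableRel G.Adj] (v : V) :
    ∑ u, (if G.Adj v u then (1 : ℝ) else 0) = G.degree v := by
  rw [Finset.sum_boole, SimpleGraph.degree, SimpleGraph.neighborFinset_eq_filter]

end PGAux

section Main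

open PGAux DihedralGroup

/-- Spectral-radius lower bound for the power graph of the dihedral group of order `2n`,
in terms of the average degree of the power graph of `ZMod n`. -/
theorem spectralRadius_powerGraph_dihedral_lower_bound
    (n : ℕ) [NeZero n] (hn : 3 ≤ n) (lam Davg : ℝ)
    (hlam : IsGreatest (spectrum ℝ ((powerGraph (DihedralGroup n)).adjMatrix ℝ)) lam)
    (hDavg : Davg =
      (∑ v : ZMod n, ((addPowerGraph (ZMod n)).degree v : ℝ)) / (n : ℝ)) :
    (Davg + Real.sqrt (Davg ^ 2 + 4)) / 2 ≤ lam := by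
  set A : Matrix (DihedralGroup n) (DihedralGroup n) ℝ :=
    (powerGraph (DihedralGroup n)).adjMatrix ℝ with hAdef
  obtain ⟨t, htdef⟩ : ∃ t : ℝ, t = (Davg + Real.sqrt (Davg ^ 2 + 4)) / 2 := ⟨_, rfl⟩
  rw [← htdef]
  set E := EuclideanSpace ℝ (DihedralGroup n)
  set T : E →ₗ[ℝ] E := Matrix.toEuclideanLin A with hTdef
  -- basic numerical facts
  have hn0 : (0 : ℝ) < n := by
    have := Nat.pos_of_ne_zero (NeZero.ne n); exact_mod_cast this
  have hD0 : 0 ≤ Davg := by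
    rw [hDavg]
    apply div_nonneg _ hn0.le
    exact Finset.sum_nonneg fun v _ => by positivity
  have hs : Real.sqrt (Davg ^ 2 + 4) ^ 2 = Davg ^ 2 + 4 := Real.sq_sqrt (by positivity)
  have hsnn : 0 ≤ Real.sqrt (Davg ^ 2 + 4) := Real.sqrt_nonneg _
  have ht2 : t ^ 2 = Davg * t + 1 := by rw [htdef]; nlinarith [hs]
  have ht0 : 0 < t := by rw [htdef]; nlinarith [hs, hsnn, hD0]
  -- degree sum
  have hdegsum : (∑ v : ZMod n, ((addPowerGraph (ZMod n)).degree v : ℝ)) = Davg * n := by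
    rw [hDavg]; field_simp
  -- the test vector
  set x₀ : E := (WithLp.equiv 2 (DihedralGroup n → ℝ)).symm
      (fun g => match g with | .r _ => t | .sr _ => 1) with hx₀def
  have hx₀r : ∀ i : ZMod n, x₀ (r i) = t := fun _ => rfl
  have hx₀sr : ∀ i : ZMod n, x₀ (sr i) = 1 := fun _ => rfl
  have hx₀ne : x₀ ≠ 0 := by
    intro h
    have : x₀ (sr 0) = 1 := hx₀sr 0
    rw [h] at this
    rw [PiLp.zero_apply] at this
    exact zero_ne_one this
  -- Hermitian
  have hA : A.IsHermitian := by
    ext g h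
    simp [Matrix.conjTranspose_apply, hAdef, SimpleGraph.adjMatrix_apply,
      SimpleGraph.adj_comm]
  have hT : T.IsSymmetric := Matrix.isHermitian_iff_isSymmetric.1 hA
  -- entries of A
  have hArr : ∀ i j : ZMod n,
      A (r i) (r j) = if (addPowerGraph (ZMod n)).Adj i j then (1 : ℝ) else 0 := by
    intro i j
    simp [hAdef, SimpleGraph.adjMatrix_apply, adj_rr]
  have hArsr : ∀ i j : ZMod n, A (r i) (sr j) = if i = 0 then (1 : ℝ) else 0 := by
    intro i j
    simp [hAdef, SimpleGraph.adjMatrix_apply, adj_r_sr]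
  have hAsrr : ∀ i j : ZMod n, A (sr i) (r j) = if j = 0 then (1 : ℝ) else 0 := by
    intro i j
    simp [hAdef, SimpleGraph.adjMatrix_apply, SimpleGraph.adj_comm, adj_r_sr]
  have hAsrsr : ∀ i j : ZMod n, A (sr i) (sr j) = 0 := by
    intro i j
    simp [hAdef, SimpleGraph.adjMatrix_apply, not_adj_sr_sr]
  -- applying T
  have happ : ∀ v : E, ∀ g, (T v) g = ∑ h, A g h * v h := by
    intro v g
    rw [hTdef, Matrix.toEuclideanLin_apply]
    rfl
  have hcardZ : (((Finset.univ : Finset (ZMod n)).card : ℕ) : ℝ) = (n : ℝ) := by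
    rw [Finset.card_univ, ZMod.card]
  -- row sums against x₀
  have hrowr : ∀ i : ZMod n, (T x₀) (r i)
      = ((addPowerGraph (ZMod n)).degree i : ℝ) * t + (if i = 0 then (n : ℝ) else 0) := by
    intro i
    rw [happ, sum_dihedral (fun h => A (r i) h * x₀ h)]
    congr 1
    · have hj : ∀ j : ZMod n, A (r i) (r j) * x₀ (r j)
          = (if (addPowerGraph (ZMod n)).Adj i j then (1 : ℝ) else 0) * t := by
        intro j; rw [hArr, hx₀r]
      rw [Finset.sum_congr rfl fun j _ => hj j, ← Finset.sum_mul,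
        deg_sum (addPowerGraph (ZMod n)) i]
    · have : ∀ j : ZMod n, A (r i) (sr j) * x₀ (sr j) = if i = 0 then (1 : ℝ) else 0 := by
        intro j; rw [hArsr, hx₀sr, mul_one]
      rw [Finset.sum_congr rfl fun j _ => this j, Finset.sum_const, nsmul_eq_mul, hcardZ]
      split_ifs <;> ring
  have hrowsr : ∀ i : ZMod n, (T x₀) (sr i) = t := by
    intro i
    rw [happ, sum_dihedral (fun h => A (sr i) h * x₀ h)]
    have h1 : ∀ j : ZMod n, A (sr i) (r j) * x₀ (r j) = if j = 0 then t else 0 := by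
      intro j; rw [hAsrr, hx₀r]; split_ifs <;> ring
    have h2 : ∀ j : ZMod n, A (sr i) (sr j) * x₀ (sr j) = 0 := by
      intro j; rw [hAsrsr, zero_mul]
    rw [Finset.sum_congr rfl fun j _ => h1 j, Finset.sum_congr rfl fun j _ => h2 j,
      Finset.sum_const, smul_zero, add_zero, Finset.sum_ite_eq' Finset.univ (0 : ZMod n)]
    simp
  -- the numerator
  have hnum : (inner ℝ (T x₀) x₀ : ℝ) = t ^ 2 * (Davg * n) + 2 * n * t := by
    rw [PiLp.inner_apply]
    simp only [RCLike.inner_apply', conj_trivial]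
    rw [sum_dihedral (fun g => (T x₀) g * x₀ g)]
    have h1 : ∀ i : ZMod n, (T x₀) (r i) * x₀ (r i)
        = ((addPowerGraph (ZMod n)).degree i : ℝ) * t * t + (if i = 0 then (n : ℝ) * t else 0) := by
      intro i; rw [hrowr, hx₀r]; split_ifs <;> ring
    have h2 : ∀ i : ZMod n, (T x₀) (sr i) * x₀ (sr i) = t := by
      intro i; rw [hrowsr, hx₀sr, mul_one]
    rw [Finset.sum_congr rfl fun i _ => h1 i, Finset.sum_congr rfl fun i _ => h2 i,
      Finset.sum_add_distrib, Finset.sum_ite_eq' Finset.univ (0 : ZMod n),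
      Finset.sum_const, nsmul_eq_mul, hcardZ]
    simp only [Finset.mem_univ, if_true]
    have h3 : ∀ i : ZMod n, ((addPowerGraph (ZMod n)).degree i : ℝ) * t * t
        = ((addPowerGraph (ZMod n)).degree i : ℝ) * (t * t) := fun i => by ring
    rw [Finset.sum_congr rfl fun i _ => h3 i, ← Finset.sum_mul, hdegsum]
    ring
  -- the denominator
  have hden : ‖x₀‖ ^ 2 = (n : ℝ) * (t ^ 2 + 1) := by
    rw [← real_inner_self_eq_norm_sq, PiLp.inner_apply]
    simp only [RCLike.inner_apply', conj_trivial]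
    rw [sum_dihedral (fun g => x₀ g * x₀ g)]
    have h1 : ∀ i : ZMod n, x₀ (r i) * x₀ (r i) = t * t := fun i => by rw [hx₀r]
    have h2 : ∀ i : ZMod n, x₀ (sr i) * x₀ (sr i) = 1 := fun i => by rw [hx₀sr]; ring
    rw [Finset.sum_congr rfl fun i _ => h1 i, Finset.sum_congr rfl fun i _ => h2 i,
      Finset.sum_const, Finset.sum_const, nsmul_eq_mul, nsmul_eq_mul, hcardZ]
    ring
  -- Rayleigh quotient at x₀ equals t
  have hray : (RCLike.re (inner ℝ (T x₀) x₀ : ℝ)) / ‖x₀‖ ^ 2 = t := by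
    simp only [RCLike.re_to_real]
    rw [hnum, hden, div_eq_iff (by positivity)]
    linear_combination (-(n : ℝ) * t) * ht2
  -- boundedness of the Rayleigh quotient
  have hbdd : BddAbove (Set.range fun x : {x : E // x ≠ 0} =>
      RCLike.re (inner ℝ (T x) (x : E) : ℝ) / ‖(x : E)‖ ^ 2) := by
    refine ⟨‖LinearMap.toContinuousLinearMap T‖, ?_⟩
    rintro y ⟨x, rfl⟩
    have hx : (0 : ℝ) < ‖(x : E)‖ ^ 2 := by
      have := norm_pos_iff.2 x.2
      positivity
    rw [div_le_iff₀ hx]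
    simp only [RCLike.re_to_real]
    calc (inner ℝ (T x) (x : E) : ℝ) ≤ ‖T (x : E)‖ * ‖(x : E)‖ := real_inner_le_norm _ _
      _ ≤ ‖LinearMap.toContinuousLinearMap T‖ * ‖(x : E)‖ * ‖(x : E)‖ := by
          have := (LinearMap.toContinuousLinearMap T).le_opNorm (x : E)
          rw [LinearMap.coe_toContinuousLinearMap'] at this
          nlinarith [norm_nonneg (x : E)]
      _ = ‖LinearMap.toContinuousLinearMap T‖ * ‖(x : E)‖ ^ 2 := by ring
  -- the sup is an eigenvalue, hence in the spectrum
  haveI : Nontrivial E := ⟨x₀, 0, hx₀ne⟩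
  have heig := hT.hasEigenvalue_iSup_of_finiteDimensional
  have hμmem : (⨆ x : {x : E // x ≠ 0},
      RCLike.re (inner ℝ (T x) (x : E) : ℝ) / ‖(x : E)‖ ^ 2) ∈ spectrum ℝ A := by
    rw [← Matrix.spectrum_toEuclideanLin (𝕜 := ℝ) (A := A)]
    have := heig.mem_spectrum
    simpa using this
  have hμle := hlam.2 hμmem
  calc t = RCLike.re (inner ℝ (T x₀) x₀ : ℝ) / ‖x₀‖ ^ 2 := hray.symm
    _ ≤ ⨆ x : {x : E // x ≠ 0},
        RCLike.re (inner ℝ (T x) (x : E) : ℝ) / ‖(x : E)‖ ^ 2 :=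
      le_ciSup hbdd ⟨x₀, hx₀ne⟩
    _ ≤ lam := hμle

end Main
end
end

section
/- Let n ≥ 3. Then the spectral radius of the power graph of the dihedral group of order 2n satisfies λ₁(P(D_{2n})) ≤ n. -/
open scoped Classical
open Matrix

noncomputable section

/-- Perron-type bound: if `A` is entrywise nonnegative and `A w ≤ c • w` for a positive
vector `w`, then every real element of the spectrum of `A` is at most `c`. -/
lemma spectrum_le_of_mulVec_le {V : Type*} [Fintype V] [DecidableEq V]
    (A : Matrix V V ℝ) (hA : ∀ i j, 0 ≤ A i j) (w : V → ℝ) (hw : ∀ i, 0 < w i)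
    (c : ℝ) (h : ∀ i, (A *ᵥ w) i ≤ c * w i) {lam : ℝ}
    (hlam : lam ∈ spectrum ℝ A) : lam ≤ c := by
  rw [← AlgEquiv.spectrum_eq (Matrix.toLinAlgEquiv' : Matrix V V ℝ ≃ₐ[ℝ] _)] at hlam
  obtain ⟨v, hv⟩ := (Module.End.hasEigenvalue_iff_mem_spectrum.mpr hlam).exists_hasEigenvector
  have hveq : ∀ i, (A *ᵥ v) i = lam * v i := by
    intro i
    have := hv.apply_eq_smul
    rw [Matrix.toLinAlgEquiv'_apply] at this
    exact congrFun this i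
  obtain ⟨j0, hj0⟩ := Function.ne_iff.mp hv.2
  obtain ⟨i, -, hi⟩ := Finset.exists_max_image (Finset.univ : Finset V)
    (fun j => |v j| / w j) ⟨j0, Finset.mem_univ j0⟩
  set M := |v i| / w i with hM
  have hMpos : 0 < M :=
    lt_of_lt_of_le (div_pos (abs_pos.mpr hj0) (hw j0)) (hi j0 (Finset.mem_univ j0))
  have hle : ∀ j, |v j| ≤ M * w j := fun j =>
    (div_le_iff₀ (hw j)).mp (hi j (Finset.mem_univ j))
  have hvi : |v i| = M * w i := (div_mul_cancel₀ _ (hw i).ne').symm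
  have key : |lam| * |v i| ≤ c * (M * w i) := by
    calc |lam| * |v i| = |(A *ᵥ v) i| := by rw [hveq i, abs_mul]
      _ ≤ ∑ j, A i j * |v j| := by
          rw [Matrix.mulVec, dotProduct]
          refine (Finset.abs_sum_le_sum_abs _ _).trans (le_of_eq ?_)
          refine Finset.sum_congr rfl fun j _ => ?_
          rw [abs_mul, abs_of_nonneg (hA i j)]
      _ ≤ ∑ j, A i j * (M * w j) := by
          refine Finset.sum_le_sum fun j _ => ?_
          exact mul_le_mul_of_nonneg_left (hle j) (hA i j)
      _ = M * (A *ᵥ w) i := by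
          rw [Matrix.mulVec, dotProduct, Finset.mul_sum]
          exact Finset.sum_congr rfl fun j _ => by ring
      _ ≤ M * (c * w i) := mul_le_mul_of_nonneg_left (h i) hMpos.le
      _ = c * (M * w i) := by ring
  rw [hvi] at key
  have hpos : 0 < M * w i := mul_pos hMpos (hw i)
  have : |lam| ≤ c := le_of_mul_le_mul_right (by linarith) hpos
  exact (le_abs_self lam).trans this

lemma dihedral_sr_pow {n : ℕ} (a : ZMod n) (m : ℕ) :
    (DihedralGroup.sr a) ^ m = 1 ∨ (DihedralGroup.sr a) ^ m = DihedralGroup.sr a := by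
  rcases Nat.even_or_odd m with ⟨t, rfl⟩ | ⟨t, rfl⟩
  · left
    rw [← two_mul, pow_mul, pow_two, DihedralGroup.sr_mul_self, one_pow]
  · right
    rw [pow_succ, pow_mul, pow_two, DihedralGroup.sr_mul_self, one_pow, one_mul]

lemma dihedral_r_pow {n : ℕ} (a : ZMod n) (m : ℕ) :
    ∃ b, (DihedralGroup.r a : DihedralGroup n) ^ m = DihedralGroup.r b := by
  induction m with
  | zero => exact ⟨0, by rw [pow_zero, DihedralGroup.one_def]⟩
  | succ m ih =>
      obtain ⟨b, hb⟩ := ih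
      exact ⟨b + a, by rw [pow_succ, hb, DihedralGroup.r_mul_r]⟩

lemma sum_w_eq {G : Type*} [Group G] [DecidableEq G] (s : Finset G) :
    ∑ j ∈ s, (if j = 1 then (2:ℝ) else 1)
      = (s.card : ℝ) + (if (1:G) ∈ s then (1:ℝ) else 0) := by
  have h : ∀ j : G, (if j = (1:G) then (2:ℝ) else 1) = 1 + (if j = 1 then (1:ℝ) else 0) := by
    intro j; split <;> norm_num
  simp_rw [h, Finset.sum_add_distrib, Finset.sum_const, nsmul_eq_mul, mul_one,
    Finset.sum_ite_eq' s (1:G) (fun _ => (1:ℝ))]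

/-- Spectral-radius upper bound for the power graph of the dihedral group of order `2n`. -/
theorem spectralRadius_powerGraph_dihedral_upper_bound
    (n : ℕ) [NeZero n] (hn : 3 ≤ n) (lam : ℝ)
    (hlam : IsGreatest (spectrum ℝ ((powerGraph (DihedralGroup n)).adjMatrix ℝ)) lam) :
    lam ≤ (n : ℝ) := by
  set G := powerGraph (DihedralGroup n)
  set w : DihedralGroup n → ℝ := fun x => if x = 1 then 2 else 1 with hw_def
  refine spectrum_le_of_mulVec_le (G.adjMatrix ℝ) (fun i j => by simp only [SimpleGraph.adjMatrix_apply]; split <;> norm_num) w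
    (fun i => by by_cases h : i = 1 <;> simp [hw_def, h]) (n : ℝ) ?_ hlam.1
  intro i
  rw [SimpleGraph.adjMatrix_mulVec_apply]
  show (∑ j ∈ G.neighborFinset i, (if j = 1 then (2:ℝ) else 1)) ≤ (n : ℝ) * w i
  rw [sum_w_eq]
  by_cases hi1 : i = 1
  · subst hi1
    have h1 : (1 : DihedralGroup n) ∉ G.neighborFinset 1 :=
      G.notMem_neighborFinset_self 1
    rw [if_neg h1]
    have hdeg : (G.neighborFinset 1).card < 2 * n := by
      rw [SimpleGraph.card_neighborFinset_eq_degree, ← DihedralGroup.card (n := n)]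
      exact G.degree_lt_card_verts 1
    have h2 : ((G.neighborFinset 1).card : ℝ) + 1 ≤ 2 * (n : ℝ) := by
      have := Nat.lt_iff_add_one_le.mp hdeg
      exact_mod_cast this
    have hw1 : w (1 : DihedralGroup n) = 2 := by simp [hw_def]
    rw [hw1]
    have hn' : (1:ℝ) ≤ n := by exact_mod_cast Nat.one_le_of_lt hn
    linarith
  · have hwi : w i = 1 := by simp [hw_def, hi1]
    rw [hwi, mul_one]
    have hiflee : (if (1 : DihedralGroup n) ∈ G.neighborFinset i then (1:ℝ) else 0) ≤ 1 := by
      split <;> norm_num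
    cases i with
    | r k =>
        -- neighbors are rotations different from r k
        have hsub : G.neighborFinset (DihedralGroup.r k) ⊆
            (Finset.univ.image (DihedralGroup.r : ZMod n → DihedralGroup n)).erase
              (DihedralGroup.r k) := by
          intro j hj
          rw [SimpleGraph.mem_neighborFinset] at hj
          obtain ⟨hne, m, hm | hm⟩ := hj
          · -- r k = j ^ m
            cases j with
            | r a =>
                exact Finset.mem_erase.mpr ⟨hne.symm, Finset.mem_image.mpr
                  ⟨a, Finset.mem_univ a, rfl⟩⟩
            | sr a =>
                rcases dihedral_sr_pow a m with h1 | h1 <;> rw [h1] at hm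
                · exact absurd hm hi1
                · exact absurd hm (by simp)
          · -- j = (r k) ^ m
            obtain ⟨b, hb⟩ := dihedral_r_pow k m
            rw [hb] at hm
            subst hm
            exact Finset.mem_erase.mpr ⟨hne.symm, Finset.mem_image.mpr
              ⟨b, Finset.mem_univ b, rfl⟩⟩
        have hinj : Function.Injective (DihedralGroup.r : ZMod n → DihedralGroup n) := by
          intro a b hab; injection hab
        have hmem : DihedralGroup.r k ∈
            Finset.univ.image (DihedralGroup.r : ZMod n → DihedralGroup n) :=
          Finset.mem_image.mpr ⟨k, Finset.mem_univ k, rfl⟩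
        have hcard : (G.neighborFinset (DihedralGroup.r k)).card ≤ n - 1 := by
          refine (Finset.card_le_card hsub).trans ?_
          rw [Finset.card_erase_of_mem hmem, Finset.card_image_of_injective _ hinj,
            Finset.card_univ, ZMod.card]
        have hcard' : ((G.neighborFinset (DihedralGroup.r k)).card : ℝ) ≤ (n : ℝ) - 1 := by
          have hn1 : 1 ≤ n := Nat.one_le_of_lt hn
          have h3 : ((G.neighborFinset (DihedralGroup.r k)).card : ℝ) ≤ ((n - 1 : ℕ) : ℝ) :=
            Nat.cast_le.mpr hcard
          rwa [Nat.cast_sub hn1, Nat.cast_one] at h3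
        linarith
    | sr k =>
        have hsub : G.neighborFinset (DihedralGroup.sr k) ⊆ {1} := by
          intro j hj
          rw [SimpleGraph.mem_neighborFinset] at hj
          obtain ⟨hne, m, hm | hm⟩ := hj
          · -- sr k = j ^ m
            cases j with
            | r a =>
                obtain ⟨b, hb⟩ := dihedral_r_pow a m
                rw [hb] at hm
                exact absurd hm (by simp)
            | sr a =>
                rcases dihedral_sr_pow a m with h1 | h1 <;> rw [h1] at hm
                · exact absurd hm (fun h => by rw [DihedralGroup.one_def] at h; cases h)
                · exact absurd hm hne
          · -- j = (sr k) ^ m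
            rcases dihedral_sr_pow k m with h1 | h1 <;> rw [h1] at hm
            · simp [hm]
            · exact absurd hm hne.symm
        have hcard : ((G.neighborFinset (DihedralGroup.sr k)).card : ℝ) ≤ 1 := by
          exact_mod_cast Nat.cast_le.mpr
            ((Finset.card_le_card hsub).trans (by simp))
        have hn3 : (3:ℝ) ≤ n := by exact_mod_cast hn
        linarith
end
end

section
/- Let n ≥ 2. Then the spectral radius of the power graph of the dicyclic group of order 4n satisfies λ₁(P(Q_{4n})) ≤ 2n + 1. -/
open scoped Classical

noncomputable section

namespace PGQ

open QuaternionGroup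

variable {n : ℕ}

lemma nn_zero : ((n : ZMod (2*n)) + n = 0) := by
  have : ((2*n : ℕ) : ZMod (2*n)) = 0 := ZMod.natCast_self _
  push_cast at this
  linear_combination this

lemma a_pow_mem (j : ZMod (2*n)) (m : ℕ) : ∃ k, (a j : QuaternionGroup n) ^ m = a k := by
  induction m with
  | zero => exact ⟨0, rfl⟩
  | succ m ih =>
    obtain ⟨k, hk⟩ := ih
    exact ⟨k + j, by rw [pow_succ, hk, a_mul_a]⟩

lemma xa_pow_mem (i : ZMod (2*n)) (m : ℕ) :
    (xa i : QuaternionGroup n) ^ m = a 0 ∨ (xa i : QuaternionGroup n) ^ m = a n ∨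
    (xa i : QuaternionGroup n) ^ m = xa i ∨ (xa i : QuaternionGroup n) ^ m = xa (i + (n : ZMod (2*n))) := by
  induction m with
  | zero => left; rfl
  | succ m ih =>
    rcases ih with h | h | h | h <;> rw [pow_succ, h]
    · right; right; left; rw [a_mul_xa, sub_zero]
    · right; right; right; rw [a_mul_xa]
      congr 1
      have h2 := nn_zero (n := n)
      linear_combination -h2
    · right; left; rw [xa_mul_xa]
      congr 1; ring
    · left; rw [xa_mul_xa]
      congr 1
      ring

lemma adj_a_xa {j i : ZMod (2*n)} (h : (powerGraph (QuaternionGroup n)).Adj (a j) (xa i)) :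
    j = 0 ∨ j = (n : ZMod (2*n)) := by
  obtain ⟨-, m, hm | hm⟩ := h
  · rcases xa_pow_mem i m with h' | h' | h' | h' <;> rw [h'] at hm <;>
      first
        | (left; exact (a.inj hm))
        | (right; exact (a.inj hm))
        | (exact absurd hm (by simp))
  · obtain ⟨k, hk⟩ := a_pow_mem j m
    rw [hk] at hm
    exact absurd hm (by simp)

lemma adj_xa_xa {i k : ZMod (2*n)} (h : (powerGraph (QuaternionGroup n)).Adj (xa i) (xa k)) :
    k = i + (n : ZMod (2*n)) := by
  obtain ⟨hne, m, hm | hm⟩ := h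
  · rcases xa_pow_mem k m with h' | h' | h' | h' <;> rw [h'] at hm
    · exact absurd hm (by intro h; cases h)
    · exact absurd hm (by simp)
    · exact absurd (xa.inj hm) (fun hik => hne (by rw [hik]))
    · have h1 : i = k + (n : ZMod (2*n)) := xa.inj hm
      have h2 := nn_zero (n := n)
      linear_combination -h1 - h2
  · rcases xa_pow_mem i m with h' | h' | h' | h' <;> rw [h'] at hm
    · exact absurd hm (by intro h; cases h)
    · exact absurd hm (by simp)
    · exact absurd (xa.inj hm) (fun hik => hne (by rw [hik]))
    · exact xa.inj hm

end PGQ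

namespace PGQ

open QuaternionGroup

variable {n : ℕ}

def qEquiv (n : ℕ) : ZMod (2*n) ⊕ ZMod (2*n) ≃ QuaternionGroup n where
  toFun := Sum.elim a xa
  invFun x := match x with | a j => Sum.inl j | xa j => Sum.inr j
  left_inv := by rintro (j|j) <;> rfl
  right_inv := by rintro (j|j) <;> rfl

variable [NeZero n]

lemma sum_split (f : QuaternionGroup n → ℝ) :
    ∑ t, f t = (∑ j : ZMod (2*n), f (a j)) + ∑ j : ZMod (2*n), f (xa j) := by
  rw [← Equiv.sum_comp (qEquiv n) f, Fintype.sum_sum_type]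
  rfl

lemma card_zmod : (Fintype.card (ZMod (2*n)) : ℝ) = 2*(n:ℝ) := by
  haveI : NeZero (2*n) := ⟨Nat.mul_ne_zero two_ne_zero (NeZero.ne n)⟩
  rw [ZMod.card]
  push_cast; ring

lemma n_ne_zero (hn : 2 ≤ n) : ((n : ZMod (2*n)) ≠ 0) := by
  haveI : NeZero (2*n) := ⟨Nat.mul_ne_zero two_ne_zero (NeZero.ne n)⟩
  intro h
  rw [ZMod.natCast_eq_zero_iff] at h
  have := Nat.le_of_dvd (by omega) h
  omega

/-- degree upper bound function -/
def g (n : ℕ) : QuaternionGroup n → ℝ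
  | .a j => if j = 0 ∨ j = (n : ZMod (2*n)) then 4*(n:ℝ)-1 else 2*(n:ℝ)-1
  | .xa _ => 3

lemma g_nonneg (hn : 2 ≤ n) (t : QuaternionGroup n) : 0 ≤ g n t := by
  have hnR : (2:ℝ) ≤ n := by exact_mod_cast hn
  cases t with
  | a j => by_cases h : j = 0 ∨ j = (n : ZMod (2*n)) <;> simp only [g, h, if_pos, if_neg,
      not_false_iff] <;> simp [h] <;> linarith
  | xa j => norm_num [g]

def AM (n : ℕ) : Matrix (QuaternionGroup n) (QuaternionGroup n) ℝ :=
  (powerGraph (QuaternionGroup n)).adjMatrix ℝ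

lemma A_nonneg (u w : QuaternionGroup n) : 0 ≤ AM n u w := by
  simp only [AM, SimpleGraph.adjMatrix_apply]
  split <;> norm_num

lemma A_le_one (u w : QuaternionGroup n) : AM n u w ≤ 1 := by
  simp only [AM, SimpleGraph.adjMatrix_apply]
  split <;> norm_num

lemma A_self (u : QuaternionGroup n) : AM n u u = 0 := by
  simp [AM, SimpleGraph.adjMatrix_apply]

lemma A_eq_zero {u w : QuaternionGroup n} (h : ¬ (powerGraph (QuaternionGroup n)).Adj u w) :
    AM n u w = 0 := by
  simp [AM, SimpleGraph.adjMatrix_apply, h]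

lemma rowsum_le (hn : 2 ≤ n) (t : QuaternionGroup n) : ∑ w, AM n t w ≤ g n t := by
  have hnR : (2:ℝ) ≤ n := by exact_mod_cast hn
  have hcard : (Fintype.card (QuaternionGroup n) : ℝ) = 4*(n:ℝ) := by
    rw [QuaternionGroup.card]; push_cast; ring
  cases t with
  | a j =>
    by_cases hj : j = 0 ∨ j = (n : ZMod (2*n))
    · -- bound by card - 1
      have key : ∑ w, AM n (a j) w ≤ ∑ w : QuaternionGroup n, (1 - if w = a j then 1 else 0) := by
        apply Finset.sum_le_sum
        intro w _
        by_cases hw : w = a j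
        · simp [hw, A_self]
        · simp [hw, A_le_one]
      rw [Finset.sum_sub_distrib, Finset.sum_const, Finset.sum_ite_eq'] at key
      simp only [Finset.mem_univ, if_true, Finset.card_univ, nsmul_eq_mul, mul_one] at key
      simp only [g, hj, if_pos]
      calc ∑ w, AM n (a j) w ≤ (Fintype.card (QuaternionGroup n) : ℝ) - 1 := key
        _ = 4*(n:ℝ)-1 := by rw [hcard]
    · rw [sum_split]
      have h2 : ∑ k : ZMod (2*n), AM n (a j) (xa k) = 0 := by
        apply Finset.sum_eq_zero
        intro k _
        apply A_eq_zero
        intro had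
        exact hj (adj_a_xa had)
      have h1 : ∑ k : ZMod (2*n), AM n (a j) (a k) ≤
          ∑ k : ZMod (2*n), (1 - if k = j then 1 else 0) := by
        apply Finset.sum_le_sum
        intro k _
        by_cases hk : k = j
        · simp [hk, A_self]
        · simp [hk, A_le_one]
      rw [Finset.sum_sub_distrib, Finset.sum_const, Finset.sum_ite_eq'] at h1
      simp only [Finset.mem_univ, if_true, Finset.card_univ, nsmul_eq_mul, mul_one] at h1
      simp only [g, hj, if_neg, not_false_iff]
      rw [h2, add_zero]
      calc ∑ k : ZMod (2*n), AM n (a j) (a k) ≤ (Fintype.card (ZMod (2*n)) : ℝ) - 1 := h1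
        _ = 2*(n:ℝ)-1 := by rw [card_zmod]
  | xa i =>
    rw [sum_split]
    have h1 : ∑ k : ZMod (2*n), AM n (xa i) (a k) ≤
        ∑ k : ZMod (2*n), ((if k = 0 then 1 else 0) + (if k = (n : ZMod (2*n)) then 1 else 0)) := by
      apply Finset.sum_le_sum
      intro k _
      by_cases had : (powerGraph (QuaternionGroup n)).Adj (xa i) (a k)
      · have hk : k = 0 ∨ k = (n : ZMod (2*n)) := adj_a_xa had.symm
        rcases hk with hk | hk
        · rw [hk]
          simp only [if_pos rfl]
          have : ¬ ((0:ZMod (2*n)) = (n : ZMod (2*n))) := fun h => n_ne_zero hn h.symm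
          rw [if_neg this, add_zero]
          exact A_le_one _ _
        · rw [hk]
          rw [if_neg (n_ne_zero hn), if_pos rfl, zero_add]
          exact A_le_one _ _
      · rw [A_eq_zero had]
        positivity
    rw [Finset.sum_add_distrib, Finset.sum_ite_eq', Finset.sum_ite_eq'] at h1
    simp only [Finset.mem_univ, if_true] at h1
    have h2 : ∑ k : ZMod (2*n), AM n (xa i) (xa k) ≤
        ∑ k : ZMod (2*n), (if k = i + (n : ZMod (2*n)) then 1 else 0) := by
      apply Finset.sum_le_sum
      intro k _
      by_cases had : (powerGraph (QuaternionGroup n)).Adj (xa i) (xa k)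
      · rw [if_pos (adj_xa_xa had)]
        exact A_le_one _ _
      · rw [A_eq_zero had]
        positivity
    rw [Finset.sum_ite_eq'] at h2
    simp only [Finset.mem_univ, if_true] at h2
    have : g n (xa i) = 3 := rfl
    rw [this]
    linarith

end PGQ

namespace PGQ

open QuaternionGroup

variable {n : ℕ} [NeZero n]

lemma sum_g_a (hn : 2 ≤ n) :
    ∑ k : ZMod (2*n), g n (a k) = 4*(n:ℝ)^2 + 2*(n:ℝ) := by
  have hnR : (2:ℝ) ≤ n := by exact_mod_cast hn
  have hpt : ∀ k : ZMod (2*n), g n (a k) =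
      (2*(n:ℝ)-1) + ((if k = 0 then 2*(n:ℝ) else 0) + (if k = (n : ZMod (2*n)) then 2*(n:ℝ) else 0)) := by
    intro k
    by_cases h0 : k = 0
    · have hne : ¬ (k = (n : ZMod (2*n))) := by
        rw [h0]; exact fun h => n_ne_zero hn h.symm
      have hg : g n (a k) = 4*(n:ℝ)-1 := by
        simp only [g]; rw [if_pos (Or.inl h0)]
      rw [hg, if_pos h0, if_neg hne]
      ring
    · by_cases h1 : k = (n : ZMod (2*n))
      · have hg : g n (a k) = 4*(n:ℝ)-1 := by
          simp only [g]; rw [if_pos (Or.inr h1)]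
        rw [hg, if_neg h0, if_pos h1]
        ring
      · have hor : ¬ (k = 0 ∨ k = (n : ZMod (2*n))) := by tauto
        have hg : g n (a k) = 2*(n:ℝ)-1 := by
          simp only [g]; rw [if_neg hor]
        rw [hg, if_neg h0, if_neg h1]
        ring

  rw [Finset.sum_congr rfl (fun k _ => hpt k)]
  rw [Finset.sum_add_distrib, Finset.sum_add_distrib, Finset.sum_const,
    Finset.sum_ite_eq', Finset.sum_ite_eq']
  simp only [Finset.mem_univ, if_true, Finset.card_univ, nsmul_eq_mul]
  rw [card_zmod]
  ring

lemma master (hn : 2 ≤ n) (u : QuaternionGroup n) :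
    ∑ t, AM n u t * g n t ≤ (2*(n:ℝ)+1)^2 := by
  have hnR : (2:ℝ) ≤ n := by exact_mod_cast hn
  rw [sum_split]
  cases u with
  | a j =>
    have h1 : ∑ k : ZMod (2*n), AM n (a j) (a k) * g n (a k) ≤
        ∑ k : ZMod (2*n), (g n (a k) - (if k = j then g n (a k) else 0)) := by
      apply Finset.sum_le_sum
      intro k _
      by_cases hk : k = j
      · subst hk
        rw [A_self, if_pos rfl]
        simp
      · rw [if_neg hk, sub_zero]
        calc AM n (a j) (a k) * g n (a k) ≤ 1 * g n (a k) :=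
              mul_le_mul_of_nonneg_right (A_le_one _ _) (g_nonneg hn _)
          _ = g n (a k) := one_mul _
    rw [Finset.sum_sub_distrib, Finset.sum_ite_eq', sum_g_a hn] at h1
    simp only [Finset.mem_univ, if_true] at h1
    by_cases hj : j = 0 ∨ j = (n : ZMod (2*n))
    · have hgj : g n (a j) = 4*(n:ℝ)-1 := by simp only [g, if_pos hj]
      have h2 : ∑ k : ZMod (2*n), AM n (a j) (xa k) * g n (xa k) ≤
          ∑ k : ZMod (2*n), (3:ℝ) := by
        apply Finset.sum_le_sum
        intro k _
        have : g n (xa k) = 3 := rfl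
        rw [this]
        calc AM n (a j) (xa k) * 3 ≤ 1 * 3 := by
              apply mul_le_mul_of_nonneg_right (A_le_one _ _); norm_num
          _ = 3 := one_mul _
      rw [Finset.sum_const, Finset.card_univ, nsmul_eq_mul, card_zmod] at h2
      rw [hgj] at h1
      nlinarith
    · have hgj : g n (a j) = 2*(n:ℝ)-1 := by simp only [g, if_neg hj]
      have h2 : ∑ k : ZMod (2*n), AM n (a j) (xa k) * g n (xa k) = 0 := by
        apply Finset.sum_eq_zero
        intro k _
        rw [A_eq_zero (fun had => hj (adj_a_xa had)), zero_mul]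
      rw [hgj] at h1
      rw [h2]
      nlinarith
  | xa i =>
    have h1 : ∑ k : ZMod (2*n), AM n (xa i) (a k) * g n (a k) ≤
        ∑ k : ZMod (2*n), ((if k = 0 then 4*(n:ℝ)-1 else 0) + (if k = (n : ZMod (2*n)) then 4*(n:ℝ)-1 else 0)) := by
      apply Finset.sum_le_sum
      intro k _
      by_cases had : (powerGraph (QuaternionGroup n)).Adj (xa i) (a k)
      · have hk : k = 0 ∨ k = (n : ZMod (2*n)) := adj_a_xa had.symm
        have hgk : g n (a k) = 4*(n:ℝ)-1 := by simp only [g, if_pos hk]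
        have hb : AM n (xa i) (a k) * g n (a k) ≤ 4*(n:ℝ)-1 := by
          rw [hgk]
          calc AM n (xa i) (a k) * (4*(n:ℝ)-1) ≤ 1 * (4*(n:ℝ)-1) := by
                apply mul_le_mul_of_nonneg_right (A_le_one _ _); linarith
            _ = 4*(n:ℝ)-1 := one_mul _
        rcases hk with hk | hk
        · rw [hk]
          have hne : ¬ ((0:ZMod (2*n)) = (n : ZMod (2*n))) := fun h => n_ne_zero hn h.symm
          rw [if_pos rfl, if_neg hne, add_zero]
          simpa [hk] using hb
        · rw [hk, if_neg (n_ne_zero hn), if_pos rfl, zero_add]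
          simpa [hk] using hb
      · rw [A_eq_zero had, zero_mul]
        apply add_nonneg <;> (split <;> linarith)
    rw [Finset.sum_add_distrib, Finset.sum_ite_eq', Finset.sum_ite_eq'] at h1
    simp only [Finset.mem_univ, if_true] at h1
    have h2 : ∑ k : ZMod (2*n), AM n (xa i) (xa k) * g n (xa k) ≤
        ∑ k : ZMod (2*n), (if k = i + (n : ZMod (2*n)) then (3:ℝ) else 0) := by
      apply Finset.sum_le_sum
      intro k _
      have hg : g n (xa k) = 3 := rfl
      by_cases had : (powerGraph (QuaternionGroup n)).Adj (xa i) (xa k)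
      · rw [if_pos (adj_xa_xa had), hg]
        calc AM n (xa i) (xa k) * 3 ≤ 1 * 3 := by
              apply mul_le_mul_of_nonneg_right (A_le_one _ _); norm_num
          _ = 3 := one_mul _
      · rw [A_eq_zero had, zero_mul]
        positivity
    rw [Finset.sum_ite_eq'] at h2
    simp only [Finset.mem_univ, if_true] at h2
    nlinarith

end PGQ


/-- Spectral-radius upper bound for the power graph of the dicyclic group of order `4n`. -/
theorem spectralRadius_powerGraph_dicyclic_upper_bound
    (n : ℕ) [NeZero n] (hn : 2 ≤ n) (lam : ℝ)
    (hlam : IsGreatest (spectrum ℝ ((powerGraph (QuaternionGroup n)).adjMatrix ℝ)) lam) :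
    lam ≤ 2 * (n : ℝ) + 1 := by

  have hnR : (2:ℝ) ≤ n := by exact_mod_cast hn
  have hmem := hlam.1
  rw [spectrum.mem_iff, Matrix.isUnit_iff_isUnit_det, isUnit_iff_ne_zero, not_not] at hmem
  obtain ⟨v, hv0, hv⟩ := Matrix.exists_mulVec_eq_zero_iff.2 hmem
  set A : Matrix (QuaternionGroup n) (QuaternionGroup n) ℝ :=
    (powerGraph (QuaternionGroup n)).adjMatrix ℝ with hA
  have hAM : A = PGQ.AM n := rfl
  have hAv : A.mulVec v = lam • v := by
    rw [Matrix.sub_mulVec] at hv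
    have h1 : Matrix.mulVec ((algebraMap ℝ (Matrix (QuaternionGroup n) (QuaternionGroup n) ℝ)) lam) v
        = lam • v := by
      rw [Algebra.algebraMap_eq_smul_one, Matrix.smul_mulVec, Matrix.one_mulVec]
    rw [h1] at hv
    have := sub_eq_zero.mp hv
    exact this.symm
  -- pick index of max absolute value
  obtain ⟨u, -, hu⟩ := Finset.exists_max_image Finset.univ (fun w => |v w|) Finset.univ_nonempty
  have hu' : ∀ w, |v w| ≤ |v u| := fun w => hu w (Finset.mem_univ w)
  have hB : 0 < |v u| := by
    obtain ⟨w, hw⟩ := Function.ne_iff.mp hv0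
    exact lt_of_lt_of_le (abs_pos.mpr hw) (hu' w)
  set B := |v u| with hBdef
  -- first layer bound
  have claim1 : ∀ t, |(A.mulVec v) t| ≤ PGQ.g n t * B := by
    intro t
    have h1 : |(A.mulVec v) t| ≤ ∑ w, A t w * |v w| := by
      have : (A.mulVec v) t = ∑ w, A t w * v w := rfl
      rw [this]
      refine (Finset.abs_sum_le_sum_abs _ _).trans ?_
      apply Finset.sum_le_sum
      intro w _
      rw [abs_mul, abs_of_nonneg (hAM ▸ PGQ.A_nonneg t w)]
    have h2 : ∑ w, A t w * |v w| ≤ ∑ w, A t w * B := by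
      apply Finset.sum_le_sum
      intro w _
      exact mul_le_mul_of_nonneg_left (hu' w) (hAM ▸ PGQ.A_nonneg t w)
    have h3 : ∑ w, A t w * B = (∑ w, A t w) * B := by rw [Finset.sum_mul]
    have h4 : (∑ w, A t w) * B ≤ PGQ.g n t * B := by
      apply mul_le_mul_of_nonneg_right _ hB.le
      rw [hAM]
      exact PGQ.rowsum_le hn t
    linarith
  -- second layer
  have key : lam^2 * B ≤ (2*(n:ℝ)+1)^2 * B := by
    have hv2 : (A.mulVec (A.mulVec v)) u = lam^2 * v u := by
      rw [hAv, Matrix.mulVec_smul, hAv, smul_smul]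
      simp [Pi.smul_apply, sq]
    have h0 : lam^2 * B = |lam^2 * v u| := by
      rw [abs_mul, abs_of_nonneg (sq_nonneg lam)]
    rw [h0, ← hv2]
    have h1 : |(A.mulVec (A.mulVec v)) u| ≤ ∑ t, A u t * |(A.mulVec v) t| := by
      have : (A.mulVec (A.mulVec v)) u = ∑ t, A u t * (A.mulVec v) t := rfl
      rw [this]
      refine (Finset.abs_sum_le_sum_abs _ _).trans ?_
      apply Finset.sum_le_sum
      intro t _
      rw [abs_mul, abs_of_nonneg (hAM ▸ PGQ.A_nonneg u t)]
    have h2 : ∑ t, A u t * |(A.mulVec v) t| ≤ ∑ t, A u t * (PGQ.g n t * B) := by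
      apply Finset.sum_le_sum
      intro t _
      exact mul_le_mul_of_nonneg_left (claim1 t) (hAM ▸ PGQ.A_nonneg u t)
    have h3 : ∑ t, A u t * (PGQ.g n t * B) = (∑ t, A u t * PGQ.g n t) * B := by
      rw [Finset.sum_mul]
      congr 1
      ext t
      ring
    have h4 : (∑ t, A u t * PGQ.g n t) * B ≤ (2*(n:ℝ)+1)^2 * B := by
      apply mul_le_mul_of_nonneg_right _ hB.le
      rw [hAM]
      exact PGQ.master hn u
    linarith
  have hsq : lam^2 ≤ (2*(n:ℝ)+1)^2 := le_of_mul_le_mul_right key hB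
  nlinarith
end
end

section
/- Let p and q be distinct primes and let λ₁ be the spectral radius of the power graph P(Z_{pq}) of the cyclic group ZMod (p·q). Then λ₁ satisfies the cubic equation λ₁³ − (pq − 3)·λ₁² − (pq + p + q − 4)·λ₁ + (p²q² − 2p²q − 2pq² + p² + 5pq + q² − 4p − 4q + 4) = 0. -/
open scoped Classical

noncomputable section

open Matrix in
lemma PGaux.exists_eigvec {N : Type*} [Fintype N] [DecidableEq N] {M : Matrix N N ℝ} {μ : ℝ}
    (h : μ ∈ spectrum ℝ M) : ∃ v : N → ℝ, v ≠ 0 ∧ M *ᵥ v = μ • v := by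
  rw [spectrum.mem_iff] at h
  have hdet : (algebraMap ℝ (Matrix N N ℝ) μ - M).det = 0 := by
    by_contra hd
    exact h ((Matrix.isUnit_iff_isUnit_det _).mpr (Ne.isUnit hd))
  obtain ⟨v, hv0, hv⟩ := (Matrix.exists_mulVec_eq_zero_iff).mpr hdet
  refine ⟨v, hv0, ?_⟩
  rw [Algebra.algebraMap_eq_smul_one, Matrix.sub_mulVec, Matrix.smul_mulVec,
    Matrix.one_mulVec, sub_eq_zero] at hv
  exact hv.symm

lemma PGaux.trace_eq_sum_eigs {N : Type*} [Fintype N] [DecidableEq N] {M : Matrix N N ℝ}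
    (h : M.IsHermitian) : M.trace = ∑ i, h.eigenvalues i := by
  conv_lhs => rw [h.spectral_theorem]
  rw [Unitary.conjStarAlgAut_apply, Matrix.trace_mul_cycle, Unitary.coe_star_mul_self, one_mul, Matrix.trace_diagonal]
  simp

lemma PGaux.herm_of_adj {N : Type*} [Fintype N] [DecidableEq N] (G : SimpleGraph N)
    [DecidableRel G.Adj] : (G.adjMatrix ℝ).IsHermitian := by
  unfold Matrix.IsHermitian
  rw [Matrix.conjTranspose_eq_transpose_of_trivial]
  exact SimpleGraph.isSymm_adjMatrix G

lemma PGaux.sum_ite_one {K : Type*} [Fintype K] [DecidableEq K] (a : K) (A C : ℝ) :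
    ∑ z : K, (if z = a then A else C) = A + ((Fintype.card K - 1 : ℕ) : ℝ) * C := by
  rw [← Finset.add_sum_erase _ _ (Finset.mem_univ a), if_pos rfl]
  congr 1
  rw [Finset.sum_congr rfl (fun z hz => if_neg (Finset.ne_of_mem_erase hz)),
    Finset.sum_const, Finset.card_erase_of_mem (Finset.mem_univ a), Finset.card_univ,
    nsmul_eq_mul]

lemma PGaux.sum_ite_two {K : Type*} [Fintype K] [DecidableEq K] (a b : K) (hab : a ≠ b)
    (A B C : ℝ) :
    ∑ z : K, (if z = a then A else if z = b then B else C)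
      = A + B + ((Fintype.card K - 2 : ℕ) : ℝ) * C := by
  rw [← Finset.add_sum_erase _ _ (Finset.mem_univ a), if_pos rfl]
  rw [Finset.sum_congr rfl (fun z hz => if_neg (Finset.ne_of_mem_erase hz))]
  rw [← Finset.add_sum_erase _ _ (by simp [Ne.symm hab] : b ∈ (Finset.univ.erase a))]
  rw [if_pos rfl, Finset.sum_congr rfl (fun z hz => if_neg (Finset.ne_of_mem_erase hz)),
    Finset.sum_const, Finset.card_erase_of_mem (by simp [Ne.symm hab]),
    Finset.card_erase_of_mem (Finset.mem_univ a), Finset.card_univ, nsmul_eq_mul]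
  push_cast [Nat.sub_sub]
  ring

namespace PGaux
variable {p q : ℕ} [Fact p.Prime] [Fact q.Prime]

lemma exists_nsmul_iff (hpq : p ≠ q) (u z : ZMod p × ZMod q) :
    (∃ m : ℕ, u = m • z) ↔ ((z.1 ≠ 0 ∨ u.1 = 0) ∧ (z.2 ≠ 0 ∨ u.2 = 0)) := by
  have hco : Nat.Coprime p q := (Nat.coprime_primes Fact.out Fact.out).mpr hpq
  constructor
  · rintro ⟨m, rfl⟩
    constructor
    · by_cases h : z.1 = 0
      · right; simp [Prod.smul_fst, h]
      · left; exact h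
    · by_cases h : z.2 = 0
      · right; simp [Prod.smul_snd, h]
      · left; exact h
  · rintro ⟨h1, h2⟩
    set m1 : ℕ := if z.1 = 0 then 0 else (u.1 * z.1⁻¹).val with hm1
    set m2 : ℕ := if z.2 = 0 then 0 else (u.2 * z.2⁻¹).val with hm2
    have e1 : (m1 : ZMod p) * z.1 = u.1 := by
      by_cases h : z.1 = 0
      · have : u.1 = 0 := h1.resolve_left (by simpa using h)
        simp [hm1, h, this]
      · rw [hm1, if_neg h, ZMod.natCast_rightInverse _]
        field_simp
    have e2 : (m2 : ZMod q) * z.2 = u.2 := by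
      by_cases h : z.2 = 0
      · have : u.2 = 0 := h2.resolve_left (by simpa using h)
        simp [hm2, h, this]
      · rw [hm2, if_neg h, ZMod.natCast_rightInverse _]
        field_simp
    obtain ⟨m, hmp, hmq⟩ := Nat.chineseRemainder hco m1 m2
    refine ⟨m, Prod.ext ?_ ?_⟩
    · rw [Prod.smul_fst, nsmul_eq_mul, (ZMod.natCast_eq_natCast_iff _ _ _).mpr hmp, e1]
    · rw [Prod.smul_snd, nsmul_eq_mul, (ZMod.natCast_eq_natCast_iff _ _ _).mpr hmq, e2]

/-- type of an element of the product: `0` = zero-or-generator, `1` = order `p`,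
`2` = order `q`. -/
def mty (u : ZMod p × ZMod q) : ℕ :=
  if u.1 ≠ 0 ∧ u.2 = 0 then 1 else if u.1 = 0 ∧ u.2 ≠ 0 then 2 else 0

lemma adj_pairs (hpq : p ≠ q) (u z : ZMod p × ZMod q) :
    (∃ m : ℕ, u = m • z ∨ z = m • u) ↔
      (mty u = 0 ∨ mty z = 0 ∨ mty u = mty z) := by
  rw [exists_or, exists_nsmul_iff hpq, exists_nsmul_iff hpq]
  by_cases h1 : u.1 = 0 <;> by_cases h2 : u.2 = 0 <;>
    by_cases h3 : z.1 = 0 <;> by_cases h4 : z.2 = 0 <;>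
    simp [mty, h1, h2, h3, h4]

end PGaux

open Matrix PGaux in
/-- The spectral radius of the power graph of `ZMod (p * q)` (`p, q` distinct primes)
is a root of the stated cubic. -/
theorem spectralRadius_powerGraph_zmod_pq_cubic
    (p q : ℕ) [Fact p.Prime] [Fact q.Prime] (hpq : p ≠ q) (lam : ℝ)
    (hlam : IsGreatest (spectrum ℝ ((addPowerGraph (ZMod (p * q))).adjMatrix ℝ)) lam) :
    lam ^ 3 - ((p : ℝ) * q - 3) * lam ^ 2 - ((p : ℝ) * q + p + q - 4) * lam +
      ((p : ℝ) ^ 2 * q ^ 2 - 2 * p ^ 2 * q - 2 * p * q ^ 2 + p ^ 2 + 5 * p * q + q ^ 2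
        - 4 * p - 4 * q + 4) = 0 := by
  have hp : p.Prime := Fact.out
  have hq : q.Prime := Fact.out
  have hco : Nat.Coprime p q := (Nat.coprime_primes hp hq).mpr hpq
  set G := addPowerGraph (ZMod (p * q)) with hGdef
  set M := G.adjMatrix ℝ with hMdef
  -- the CRT equivalence
  set e := ZMod.chineseRemainder hco with hedef
  -- adjacency characterization
  have hadj : ∀ x y : ZMod (p * q), G.Adj x y ↔
      (e x ≠ e y ∧ (mty (e x) = 0 ∨ mty (e y) = 0 ∨ mty (e x) = mty (e y))) := by
    intro x y
    have h1 : G.Adj x y ↔ (x ≠ y ∧ ∃ m : ℕ, x = m • y ∨ y = m • x) := Iff.rfl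
    have h2 : (∃ m : ℕ, x = m • y ∨ y = m • x) ↔
        (∃ m : ℕ, e x = m • (e y) ∨ e y = m • (e x)) := by
      refine exists_congr fun m => or_congr ?_ ?_
      · rw [← map_nsmul e, (EmbeddingLike.apply_eq_iff_eq e)]
      · rw [← map_nsmul e, (EmbeddingLike.apply_eq_iff_eq e)]
    rw [h1, h2, adj_pairs hpq]
    exact and_congr (not_congr (EmbeddingLike.apply_eq_iff_eq e)).symm Iff.rfl
  -- `lam` is strictly bigger than `-1`
  have hherm : M.IsHermitian := PGaux.herm_of_adj G
  have hlam1 : lam ≠ -1 := by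
    have htr : (0 : ℝ) = ∑ i, hherm.eigenvalues i := by
      rw [← PGaux.trace_eq_sum_eigs hherm, hMdef, SimpleGraph.trace_adjMatrix]
    have hcard : 0 < Fintype.card (ZMod (p * q)) := Fintype.card_pos
    have hex : ∃ i, -1 < hherm.eigenvalues i := by
      by_contra hno
      push_neg at hno
      have : ∑ i, hherm.eigenvalues i ≤ ∑ _i : ZMod (p * q), (-1 : ℝ) :=
        Finset.sum_le_sum fun i _ => hno i
      rw [Finset.sum_const, Finset.card_univ, nsmul_eq_mul] at this
      have : (0 : ℝ) < Fintype.card (ZMod (p * q)) := by exact_mod_cast hcard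
      linarith [htr ▸ ‹∑ i, hherm.eigenvalues i ≤ (Fintype.card (ZMod (p * q)) : ℝ) * (-1)›]
    obtain ⟨i, hi⟩ := hex
    have := hlam.2 (hherm.eigenvalues_mem_spectrum_real i)
    intro h
    rw [h] at this
    linarith
  -- eigenvector
  obtain ⟨v, hv0, hv⟩ := PGaux.exists_eigvec hlam.1
  set w : ZMod p × ZMod q → ℝ := fun z => v (e.symm z) with hwdef
  -- the eigenvalue equation, transported to the product group
  have heig : ∀ u : ZMod p × ZMod q,
      ∑ z : ZMod p × ZMod q,
        (if (u ≠ z ∧ (mty u = 0 ∨ mty z = 0 ∨ mty u = mty z)) then w z else 0)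
        = lam * w u := by
    intro u
    have h1 := congrFun hv (e.symm u)
    rw [Pi.smul_apply, smul_eq_mul] at h1
    have h2 : (M *ᵥ v) (e.symm u) = ∑ y, M (e.symm u) y * v y := rfl
    have h3 : ∀ z : ZMod p × ZMod q,
        (if (u ≠ z ∧ (mty u = 0 ∨ mty z = 0 ∨ mty u = mty z)) then w z else 0)
          = M (e.symm u) (e.symm z) * v (e.symm z) := by
      intro z
      rw [hMdef, SimpleGraph.adjMatrix_apply]
      have hiff : G.Adj (e.symm u) (e.symm z) ↔
          (u ≠ z ∧ (mty u = 0 ∨ mty z = 0 ∨ mty u = mty z)) := by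
        rw [hadj]
        simp
      by_cases hc : (u ≠ z ∧ (mty u = 0 ∨ mty z = 0 ∨ mty u = mty z))
      · rw [if_pos hc, if_pos (hiff.mpr hc), one_mul]
      · rw [if_neg hc, if_neg (fun h => hc (hiff.mp h)), zero_mul]
    calc ∑ z : ZMod p × ZMod q,
          (if (u ≠ z ∧ (mty u = 0 ∨ mty z = 0 ∨ mty u = mty z)) then w z else 0)
        = ∑ z : ZMod p × ZMod q, M (e.symm u) (e.symm z) * v (e.symm z) :=
          Finset.sum_congr rfl (fun z _ => h3 z)
      _ = ∑ y, M (e.symm u) y * v y := by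
          simpa using Equiv.sum_comp e.symm.toEquiv (fun y => M (e.symm u) y * v y)
      _ = lam * v (e.symm u) := by rw [← h2, h1]
      _ = lam * w u := rfl
  -- `w` is constant on each type class
  have hconst : ∀ x y : ZMod p × ZMod q, mty x = mty y → w x = w y := by
    intro x y ht
    by_cases hxy : x = y
    · rw [hxy]
    have key : ∑ z : ZMod p × ZMod q,
        ((if (x ≠ z ∧ (mty x = 0 ∨ mty z = 0 ∨ mty x = mty z)) then w z else 0)
          - (if (y ≠ z ∧ (mty y = 0 ∨ mty z = 0 ∨ mty y = mty z)) then w z else 0))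
        = -(w x) + w y + ((Fintype.card (ZMod p × ZMod q) - 2 : ℕ) : ℝ) * 0 := by
      rw [← PGaux.sum_ite_two x y hxy (-(w x)) (w y) 0]
      refine Finset.sum_congr rfl fun z _ => ?_
      by_cases hzx : z = x
      · subst hzx
        rw [if_pos rfl, if_neg (by simp), if_pos ⟨Ne.symm hxy, Or.inr (Or.inr ht.symm)⟩]
        ring
      · by_cases hzy : z = y
        · subst hzy
          rw [if_neg hzx, if_pos rfl, if_pos ⟨hxy, Or.inr (Or.inr ht)⟩,
            if_neg (by simp)]
          ring
        · rw [if_neg hzx, if_neg hzy]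
          have c1 : ¬ x = z := fun h => hzx h.symm
          have c2 : ¬ y = z := fun h => hzy h.symm
          simp [ne_eq, c1, c2, ht]
    rw [Finset.sum_sub_distrib, heig, heig] at key
    have : (lam + 1) * (w x - w y) = 0 := by linarith [key]
    rcases mul_eq_zero.mp this with h | h
    · exact absurd (by linarith : lam = -1) hlam1
    · linarith
  -- representatives of the three types
  have hp1 : (1 : ZMod p) ≠ 0 := one_ne_zero
  have hq1 : (1 : ZMod q) ≠ 0 := one_ne_zero
  have hcp : Fintype.card (ZMod p) = p := ZMod.card p
  have hcq : Fintype.card (ZMod q) = q := ZMod.card q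
  set α := w ((0 : ZMod p), (0 : ZMod q)) with hαdef
  set β := w ((1 : ZMod p), (0 : ZMod q)) with hβdef
  set γ := w ((0 : ZMod p), (1 : ZMod q)) with hγdef
  have hmty00 : mty ((0 : ZMod p), (0 : ZMod q)) = 0 := by simp [mty]
  have hmty10 : mty ((1 : ZMod p), (0 : ZMod q)) = 1 := by simp [mty, hp1]
  have hmty01 : mty ((0 : ZMod p), (1 : ZMod q)) = 2 := by simp [mty, hq1]
  have hw : ∀ z : ZMod p × ZMod q,
      w z = if z.1 = 0 then (if z.2 = 0 then α else γ) else (if z.2 = 0 then β else α) := by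
    intro z
    by_cases h1 : z.1 = 0 <;> by_cases h2 : z.2 = 0
    · rw [if_pos h1, if_pos h2, hαdef]
      have : z = ((0 : ZMod p), (0 : ZMod q)) := Prod.ext h1 h2
      rw [this]
    · rw [if_pos h1, if_neg h2, hγdef]
      exact hconst _ _ (by simp [mty, h1, h2, hq1])
    · rw [if_neg h1, if_pos h2, hβdef]
      exact hconst _ _ (by simp [mty, h1, h2, hp1])
    · rw [if_neg h1, if_neg h2, hαdef]
      exact hconst _ _ (by simp [mty, h1, h2])
  -- at least one of the three values is nonzero
  have hnz : ¬ (α = 0 ∧ β = 0 ∧ γ = 0) := by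
    rintro ⟨ha, hb, hg⟩
    apply hv0
    funext x
    have hx := hw (e x)
    rw [ha, hb, hg] at hx
    have hx0 : w (e x) = 0 := by rw [hx]; split_ifs <;> rfl
    have : w (e x) = v x := by rw [hwdef]; simp
    rw [this] at hx0
    simpa using hx0
  -- the three quotient equations
  have E1 : ((0 : ℝ) + ((q - 1 : ℕ) : ℝ) * γ) + ((p - 1 : ℕ) : ℝ) * (β + ((q - 1 : ℕ) : ℝ) * α)
      = lam * α := by
    have h0 := heig ((0 : ZMod p), (0 : ZMod q))
    rw [← hαdef] at h0
    refine Eq.trans ?_ h0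
    rw [Fintype.sum_prod_type]
    have inner : ∀ z1 : ZMod p,
        (∑ z2 : ZMod q, if (((0 : ZMod p), (0 : ZMod q)) ≠ (z1, z2) ∧
            (mty ((0 : ZMod p), (0 : ZMod q)) = 0 ∨ mty (z1, z2) = 0 ∨
              mty ((0 : ZMod p), (0 : ZMod q)) = mty (z1, z2))) then w (z1, z2) else 0)
          = if z1 = 0 then ((0 : ℝ) + ((q - 1 : ℕ) : ℝ) * γ)
            else (β + ((q - 1 : ℕ) : ℝ) * α) := by
      intro z1
      by_cases h1 : z1 = 0
      · subst h1
        rw [if_pos rfl]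
        have hz : ∀ z2 : ZMod q, (if (((0 : ZMod p), (0 : ZMod q)) ≠ ((0 : ZMod p), z2) ∧
            (mty ((0 : ZMod p), (0 : ZMod q)) = 0 ∨ mty ((0 : ZMod p), z2) = 0 ∨
              mty ((0 : ZMod p), (0 : ZMod q)) = mty ((0 : ZMod p), z2))) then
              w ((0 : ZMod p), z2) else 0)
            = if z2 = (0 : ZMod q) then (0 : ℝ) else γ := by
          intro z2
          by_cases h2 : z2 = 0
          · subst h2
            rw [if_neg (by simp), if_pos rfl]
          · rw [if_pos ⟨by simp [Prod.ext_iff, Ne.symm h2], Or.inl hmty00⟩, if_neg h2, hw]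
            simp [h2]
        rw [Finset.sum_congr rfl (fun z2 _ => hz z2), PGaux.sum_ite_one, hcq]
      · rw [if_neg h1]
        have hz : ∀ z2 : ZMod q, (if (((0 : ZMod p), (0 : ZMod q)) ≠ (z1, z2) ∧
            (mty ((0 : ZMod p), (0 : ZMod q)) = 0 ∨ mty (z1, z2) = 0 ∨
              mty ((0 : ZMod p), (0 : ZMod q)) = mty (z1, z2))) then w (z1, z2) else 0)
            = if z2 = (0 : ZMod q) then β else α := by
          intro z2
          rw [if_pos ⟨by simp [Prod.ext_iff, Ne.symm h1], Or.inl hmty00⟩, hw]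
          by_cases h2 : z2 = 0 <;> simp [h1, h2]
        rw [Finset.sum_congr rfl (fun z2 _ => hz z2), PGaux.sum_ite_one, hcq]
    rw [Finset.sum_congr rfl (fun z1 _ => inner z1), PGaux.sum_ite_one, hcp]
  have E2 : ((α + ((q - 1 : ℕ) : ℝ) * 0) + ((0 : ℝ) + ((q - 1 : ℕ) : ℝ) * α))
      + ((p - 2 : ℕ) : ℝ) * (β + ((q - 1 : ℕ) : ℝ) * α) = lam * β := by
    have h0 := heig ((1 : ZMod p), (0 : ZMod q))
    rw [← hβdef] at h0
    refine Eq.trans ?_ h0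
    rw [Fintype.sum_prod_type]
    have inner : ∀ z1 : ZMod p,
        (∑ z2 : ZMod q, if (((1 : ZMod p), (0 : ZMod q)) ≠ (z1, z2) ∧
            (mty ((1 : ZMod p), (0 : ZMod q)) = 0 ∨ mty (z1, z2) = 0 ∨
              mty ((1 : ZMod p), (0 : ZMod q)) = mty (z1, z2))) then w (z1, z2) else 0)
          = if z1 = 0 then (α + ((q - 1 : ℕ) : ℝ) * 0)
            else if z1 = 1 then ((0 : ℝ) + ((q - 1 : ℕ) : ℝ) * α)
            else (β + ((q - 1 : ℕ) : ℝ) * α) := by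
      intro z1
      by_cases h1 : z1 = 0
      · subst h1
        rw [if_pos rfl]
        have hz : ∀ z2 : ZMod q, (if (((1 : ZMod p), (0 : ZMod q)) ≠ ((0 : ZMod p), z2) ∧
            (mty ((1 : ZMod p), (0 : ZMod q)) = 0 ∨ mty ((0 : ZMod p), z2) = 0 ∨
              mty ((1 : ZMod p), (0 : ZMod q)) = mty ((0 : ZMod p), z2))) then
              w ((0 : ZMod p), z2) else 0)
            = if z2 = (0 : ZMod q) then α else (0 : ℝ) := by
          intro z2
          by_cases h2 : z2 = 0
          · subst h2
            rw [if_pos ⟨by simp [Prod.ext_iff, hp1], Or.inr (Or.inl hmty00)⟩, if_pos rfl, hw]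
            simp
          · have hm2 : mty ((0 : ZMod p), z2) = 2 := by simp [mty, h2]
            rw [if_neg (by
              rintro ⟨-, hc | hc | hc⟩
              · rw [hmty10] at hc; exact one_ne_zero hc
              · rw [hm2] at hc; exact two_ne_zero hc
              · rw [hmty10, hm2] at hc; exact absurd hc (by norm_num)), if_neg h2]
        rw [Finset.sum_congr rfl (fun z2 _ => hz z2), PGaux.sum_ite_one, hcq]
      · rw [if_neg h1]
        by_cases h1' : z1 = 1
        · subst h1'
          rw [if_pos rfl]
          have hz : ∀ z2 : ZMod q, (if (((1 : ZMod p), (0 : ZMod q)) ≠ ((1 : ZMod p), z2) ∧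
              (mty ((1 : ZMod p), (0 : ZMod q)) = 0 ∨ mty ((1 : ZMod p), z2) = 0 ∨
                mty ((1 : ZMod p), (0 : ZMod q)) = mty ((1 : ZMod p), z2))) then
                w ((1 : ZMod p), z2) else 0)
              = if z2 = (0 : ZMod q) then (0 : ℝ) else α := by
            intro z2
            by_cases h2 : z2 = 0
            · subst h2
              rw [if_neg (by simp), if_pos rfl]
            · have hm0 : mty ((1 : ZMod p), z2) = 0 := by simp [mty, hp1, h2]
              rw [if_pos ⟨by simp [Prod.ext_iff, Ne.symm h2], Or.inr (Or.inl hm0)⟩,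
                if_neg h2, hw]
              simp [hp1, h2]
          rw [Finset.sum_congr rfl (fun z2 _ => hz z2), PGaux.sum_ite_one, hcq]
        · rw [if_neg h1']
          have hz : ∀ z2 : ZMod q, (if (((1 : ZMod p), (0 : ZMod q)) ≠ (z1, z2) ∧
              (mty ((1 : ZMod p), (0 : ZMod q)) = 0 ∨ mty (z1, z2) = 0 ∨
                mty ((1 : ZMod p), (0 : ZMod q)) = mty (z1, z2))) then w (z1, z2) else 0)
              = if z2 = (0 : ZMod q) then β else α := by
            intro z2
            by_cases h2 : z2 = 0
            · subst h2
              have hm1 : mty (z1, (0 : ZMod q)) = 1 := by simp [mty, h1]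
              rw [if_pos ⟨by simp [Prod.ext_iff, Ne.symm h1'], Or.inr (Or.inr
                (by rw [hmty10, hm1]))⟩, if_pos rfl, hw]
              simp [h1]
            · have hm0 : mty (z1, z2) = 0 := by simp [mty, h1, h2]
              rw [if_pos ⟨by simp [Prod.ext_iff, Ne.symm h2], Or.inr (Or.inl hm0)⟩,
                if_neg h2, hw]
              simp [h1, h2]
          rw [Finset.sum_congr rfl (fun z2 _ => hz z2), PGaux.sum_ite_one, hcq]
    rw [Finset.sum_congr rfl (fun z1 _ => inner z1),
      PGaux.sum_ite_two (0 : ZMod p) 1 (Ne.symm hp1), hcp]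
  have E3 : ((α + (0 : ℝ)) + ((q - 2 : ℕ) : ℝ) * γ)
      + ((p - 1 : ℕ) : ℝ) * ((0 : ℝ) + ((q - 1 : ℕ) : ℝ) * α) = lam * γ := by
    have h0 := heig ((0 : ZMod p), (1 : ZMod q))
    rw [← hγdef] at h0
    refine Eq.trans ?_ h0
    rw [Fintype.sum_prod_type]
    have inner : ∀ z1 : ZMod p,
        (∑ z2 : ZMod q, if (((0 : ZMod p), (1 : ZMod q)) ≠ (z1, z2) ∧
            (mty ((0 : ZMod p), (1 : ZMod q)) = 0 ∨ mty (z1, z2) = 0 ∨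
              mty ((0 : ZMod p), (1 : ZMod q)) = mty (z1, z2))) then w (z1, z2) else 0)
          = if z1 = 0 then ((α + (0 : ℝ)) + ((q - 2 : ℕ) : ℝ) * γ)
            else ((0 : ℝ) + ((q - 1 : ℕ) : ℝ) * α) := by
      intro z1
      by_cases h1 : z1 = 0
      · subst h1
        rw [if_pos rfl]
        have hz : ∀ z2 : ZMod q, (if (((0 : ZMod p), (1 : ZMod q)) ≠ ((0 : ZMod p), z2) ∧
            (mty ((0 : ZMod p), (1 : ZMod q)) = 0 ∨ mty ((0 : ZMod p), z2) = 0 ∨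
              mty ((0 : ZMod p), (1 : ZMod q)) = mty ((0 : ZMod p), z2))) then
              w ((0 : ZMod p), z2) else 0)
            = if z2 = (0 : ZMod q) then α else if z2 = (1 : ZMod q) then (0 : ℝ) else γ := by
          intro z2
          by_cases h2 : z2 = 0
          · subst h2
            rw [if_pos ⟨by simp [Prod.ext_iff, hq1], Or.inr (Or.inl hmty00)⟩, if_pos rfl, hw]
            simp
          · by_cases h2' : z2 = 1
            · subst h2'
              rw [if_neg (by simp), if_neg h2, if_pos rfl]
            · have hm2 : mty ((0 : ZMod p), z2) = 2 := by simp [mty, h2]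
              rw [if_pos ⟨by simp [Prod.ext_iff, Ne.symm h2'], Or.inr (Or.inr
                (by rw [hmty01, hm2]))⟩, if_neg h2, if_neg h2', hw]
              simp [h2]
        rw [Finset.sum_congr rfl (fun z2 _ => hz z2),
          PGaux.sum_ite_two (0 : ZMod q) 1 (Ne.symm hq1), hcq]
      · rw [if_neg h1]
        have hz : ∀ z2 : ZMod q, (if (((0 : ZMod p), (1 : ZMod q)) ≠ (z1, z2) ∧
            (mty ((0 : ZMod p), (1 : ZMod q)) = 0 ∨ mty (z1, z2) = 0 ∨
              mty ((0 : ZMod p), (1 : ZMod q)) = mty (z1, z2))) then w (z1, z2) else 0)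
            = if z2 = (0 : ZMod q) then (0 : ℝ) else α := by
          intro z2
          by_cases h2 : z2 = 0
          · subst h2
            have hm1 : mty (z1, (0 : ZMod q)) = 1 := by simp [mty, h1]
            rw [if_neg (by
              rintro ⟨-, hc | hc | hc⟩
              · rw [hmty01] at hc; exact two_ne_zero hc
              · rw [hm1] at hc; exact one_ne_zero hc
              · rw [hmty01, hm1] at hc; exact absurd hc (by norm_num)), if_pos rfl]
          · have hm0 : mty (z1, z2) = 0 := by simp [mty, h1, h2]
            rw [if_pos ⟨by simp [Prod.ext_iff, Ne.symm h1], Or.inr (Or.inl hm0)⟩,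
              if_neg h2, hw]
            simp [h1, h2]
        rw [Finset.sum_congr rfl (fun z2 _ => hz z2), PGaux.sum_ite_one, hcq]
    rw [Finset.sum_congr rfl (fun z1 _ => inner z1), PGaux.sum_ite_one, hcp]
  -- replace the natural-number casts
  have cp1 : ((p - 1 : ℕ) : ℝ) = (p : ℝ) - 1 := by
    rw [Nat.cast_sub hp.one_lt.le]; norm_num
  have cp2 : ((p - 2 : ℕ) : ℝ) = (p : ℝ) - 2 := by
    rw [Nat.cast_sub hp.two_le]; norm_num
  have cq1 : ((q - 1 : ℕ) : ℝ) = (q : ℝ) - 1 := by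
    rw [Nat.cast_sub hq.one_lt.le]; norm_num
  have cq2 : ((q - 2 : ℕ) : ℝ) = (q : ℝ) - 2 := by
    rw [Nat.cast_sub hq.two_le]; norm_num
  rw [cp1, cq1] at E1
  rw [cp2, cq1] at E2
  rw [cp1, cq1, cq2] at E3
  have hP2 : (2 : ℝ) ≤ (p : ℝ) := by exact_mod_cast hp.two_le
  have hQ2 : (2 : ℝ) ≤ (q : ℝ) := by exact_mod_cast hq.two_le
  -- α cannot vanish
  have hαne : α ≠ 0 := by
    intro ha
    rw [ha] at E1 E2 E3
    have h2' : ((p : ℝ) - 2) * β = lam * β := by linear_combination E2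
    have h3' : ((q : ℝ) - 2) * γ = lam * γ := by linear_combination E3
    have h1' : ((q : ℝ) - 1) * γ + ((p : ℝ) - 1) * β = 0 := by linear_combination E1
    by_cases hb : β = 0
    · have hg : γ = 0 := by
        have := h1'
        rw [hb] at this
        have h := mul_eq_zero.mp (by linarith : ((q : ℝ) - 1) * γ = 0)
        rcases h with h | h
        · linarith
        · exact h
      exact hnz ⟨ha, hb, hg⟩
    · have hlp : lam = (p : ℝ) - 2 := (mul_right_cancel₀ hb h2').symm
      have hγne : γ ≠ 0 := by
        intro hg
        rw [hg] at h1'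
        rcases mul_eq_zero.mp (by linarith : ((p : ℝ) - 1) * β = 0) with h | h
        · linarith
        · exact hb h
      have hlq : lam = (q : ℝ) - 2 := (mul_right_cancel₀ hγne h3').symm
      have : (p : ℝ) = (q : ℝ) := by linarith
      exact hpq (by exact_mod_cast this)
  -- the determinant relation
  have hD : (lam ^ 3 - ((p : ℝ) * q - 3) * lam ^ 2 - ((p : ℝ) * q + p + q - 4) * lam +
      ((p : ℝ) ^ 2 * q ^ 2 - 2 * p ^ 2 * q - 2 * p * q ^ 2 + p ^ 2 + 5 * p * q + q ^ 2
        - 4 * p - 4 * q + 4)) * α = 0 := by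
    linear_combination (-(((q : ℝ) - 2 - lam) * ((p : ℝ) - 2 - lam))) * E1 +
      (((p : ℝ) - 1) * ((q : ℝ) - 2 - lam)) * E2 +
      (((q : ℝ) - 1) * ((p : ℝ) - 2 - lam)) * E3
  exact (mul_eq_zero.mp hD).resolve_right hαne
end
end

section
/- Let n ≥ 3 be a natural number that is not prime (so the set V₂ of elements of ZMod n that are neither 0 nor additive generators is nonempty), let l = φ(n) + 1, and let Tr_avg = (∑_{v ∈ V₂} Tr(v)) / (n − l) be the average transmission in the power graph P(C_n) of the elements of V₂. Then the distance spectral radius satisfies ρ₁(P(C_n)) ≥ ((Tr_avg − 1) + √((Tr_avg − 2l + 1)² + 4l(n − l))) / 2. -/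
open scoped Classical

noncomputable section

/-- The distance matrix of a graph on a finite vertex set. -/
def distMatrix {V : Type*} [Fintype V] (G : SimpleGraph V) : Matrix V V ℝ :=
  fun x y => (G.dist x y : ℝ)

/-- The transmission of a vertex: the sum of the distances to all vertices. -/
def transmission {V : Type*} [Fintype V] (G : SimpleGraph V) (v : V) : ℕ :=
  ∑ w, G.dist v w

open scoped Pointwise in
/-- Rayleigh quotient bound: for a real symmetric matrix whose spectrum has greatest
element `rho`, every quadratic form value is at most `rho` times the norm squared. -/
lemma rayleigh_le {V : Type*} [Fintype V] [DecidableEq V] (A : Matrix V V ℝ)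
    (hA : A.IsHermitian) {rho : ℝ}
    (h : IsGreatest (spectrum ℝ A) rho) (x : V → ℝ) :
    dotProduct x (A.mulVec x) ≤ rho * dotProduct x x := by
  set B : Matrix V V ℝ := rho • (1 : Matrix V V ℝ) - A with hBdef
  have hAt : A.transpose = A := by
    ext i j
    have := congrFun (congrFun hA.eq i) j
    simpa [Matrix.conjTranspose_apply] using this
  have hBh : B.IsHermitian := by
    simp [Matrix.IsHermitian, hBdef, Matrix.conjTranspose_sub, Matrix.conjTranspose_smul, hAt]
  have hspec : spectrum ℝ B = ({rho} : Set ℝ) - spectrum ℝ A := by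
    rw [hBdef, ← Algebra.algebraMap_eq_smul_one]
    exact (spectrum.singleton_sub_eq A rho).symm
  have heig : ∀ i, 0 ≤ hBh.eigenvalues i := by
    intro i
    have hmem := hBh.eigenvalues_mem_spectrum_real i
    rw [hspec] at hmem
    obtain ⟨r, hr, t, ht, hrt⟩ := Set.mem_sub.mp hmem
    rw [Set.mem_singleton_iff] at hr
    subst hr
    have := h.2 ht
    linarith [hrt ▸ (sub_nonneg.mpr this)]
  have hpsd : B.PosSemidef := hBh.posSemidef_iff_eigenvalues_nonneg.mpr heig
  have hx := hpsd.dotProduct_mulVec_nonneg x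
  have hstar : (star x : V → ℝ) = x := by ext v; simp
  rw [hstar, hBdef, Matrix.sub_mulVec, Matrix.smul_mulVec, Matrix.one_mulVec,
    dotProduct_sub, dotProduct_smul, smul_eq_mul] at hx
  linarith

/-- Distance-spectral-radius lower bound for the power graph of `ZMod n`. -/
theorem distSpectralRadius_powerGraph_cyclic_lower_bound
    (n : ℕ) [NeZero n] (hn : 3 ≤ n) (hnp : ¬ n.Prime) (rho l travg : ℝ)
    (hrho : IsGreatest (spectrum ℝ (distMatrix (addPowerGraph (ZMod n)))) rho)
    (hl : l = (Nat.totient n : ℝ) + 1)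
    (htravg : travg =
      (∑ v ∈ Finset.univ.filter (fun v : ZMod n => v ≠ 0 ∧ addOrderOf v ≠ n),
        (transmission (addPowerGraph (ZMod n)) v : ℝ)) / ((n : ℝ) - l)) :
    ((travg - 1) + Real.sqrt ((travg - 2 * l + 1) ^ 2 + 4 * l * ((n : ℝ) - l))) / 2 ≤ rho := by
  have hn0 : n ≠ 0 := NeZero.ne n
  set G := addPowerGraph (ZMod n) with hG
  set D := distMatrix G with hD
  set S : Finset (ZMod n) :=
    Finset.univ.filter (fun v : ZMod n => v = 0 ∨ addOrderOf v = n) with hSdef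
  -- adjacency of vertices of S with everything else
  have hadj : ∀ v w : ZMod n, v ∈ S → v ≠ w → G.Adj v w := by
    intro v w hv hne
    rw [hSdef, Finset.mem_filter] at hv
    rcases hv.2 with rfl | hv2
    · exact ⟨hne, 0, Or.inl (zero_nsmul w).symm⟩
    · have h2 : ((v.val : ℕ) : ZMod n) = v := by
        simp [ZMod.natCast_val, ZMod.cast_id]
      have hu : IsUnit v := by
        have h1 : addOrderOf ((v.val : ℕ) : ZMod n) = n / n.gcd v.val :=
          ZMod.addOrderOf_coe v.val hn0
        rw [h2, hv2] at h1
        have hgcd : n.gcd v.val = 1 := by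
          by_contra hne1
          have hgpos : 0 < n.gcd v.val := Nat.pos_of_ne_zero (by
            intro h0
            rw [h0, Nat.div_zero] at h1
            omega)
          have h2g : 1 < n.gcd v.val := by omega
          have := Nat.div_lt_self (Nat.pos_of_ne_zero hn0) h2g
          omega
        rw [← h2, ZMod.isUnit_iff_coprime]
        exact Nat.coprime_comm.mp hgcd
      obtain ⟨u, rfl⟩ := hu
      refine ⟨hne, (w * ↑u⁻¹).val, Or.inr ?_⟩
      rw [nsmul_eq_mul]
      simp only [ZMod.natCast_val, ZMod.cast_id]
      rw [mul_assoc]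
      simp
  -- cardinality of S
  have hScard : S.card = n.totient + 1 := by
    have hdvd : n ∣ Fintype.card (ZMod n) := by rw [ZMod.card]
    have hgen := IsAddCyclic.card_addOrderOf_eq_totient (α := ZMod n) (d := n) hdvd
    have h0not : (0 : ZMod n) ∉ Finset.univ.filter (fun a : ZMod n => addOrderOf a = n) := by
      intro hmem
      simp only [Finset.mem_filter, Finset.mem_univ, true_and, addOrderOf_zero] at hmem
      omega
    have hins : S = insert (0 : ZMod n)
        (Finset.univ.filter (fun a : ZMod n => addOrderOf a = n)) := by
      ext v
      simp only [hSdef, Finset.mem_filter, Finset.mem_univ, true_and, Finset.mem_insert]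
    rw [hins, Finset.card_insert_of_notMem h0not, hgen]
  have htotlt : n.totient + 1 < n := by
    have h1 : n.totient < n := Nat.totient_lt n (by omega)
    have h2 : n.totient ≠ n - 1 := fun h => hnp ((Nat.totient_eq_iff_prime (by omega)).mp h)
    omega
  have hlS : (S.card : ℝ) = l := by rw [hScard, hl]; push_cast; ring
  set c : ℝ := (n : ℝ) - l with hcdef
  have hcS : ((Sᶜ : Finset (ZMod n)).card : ℝ) = c := by
    have h1 : (Sᶜ : Finset (ZMod n)).card = n - (n.totient + 1) := by
      rw [Finset.card_compl, hScard, ZMod.card]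
    rw [h1, Nat.cast_sub htotlt.le, hcdef, hl]
    push_cast; ring
  have hcompl : Finset.univ.filter (fun v : ZMod n => v ≠ 0 ∧ addOrderOf v ≠ n)
      = (Sᶜ : Finset (ZMod n)) := by
    ext v
    simp only [Finset.mem_filter, Finset.mem_univ, true_and, Finset.mem_compl, hSdef]
    tauto
  have hlpos : 0 < l := by rw [hl]; positivity
  have hcpos : 0 < c := by
    rw [hcdef, hl]
    have : (n.totient : ℝ) + 1 + 1 ≤ (n : ℝ) := by exact_mod_cast htotlt
    linarith
  -- the square root
  have hdnn : 0 ≤ (travg - 2 * l + 1) ^ 2 + 4 * l * c := by positivity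
  set sq : ℝ := Real.sqrt ((travg - 2 * l + 1) ^ 2 + 4 * l * c) with hsqdef
  have hsq2 : sq ^ 2 = (travg - 2 * l + 1) ^ 2 + 4 * l * c := Real.sq_sqrt hdnn
  set μ : ℝ := (travg - 2 * l + 1 + sq) / 2 with hμdef
  have hmu : μ ^ 2 = (travg - 2 * l + 1) * μ + l * c := by
    rw [hμdef]
    linear_combination hsq2 / 4
  -- the test vector
  set x : ZMod n → ℝ := fun v => if v ∈ S then c else μ with hxdef
  -- distance matrix entries
  have hdist1 : ∀ v w : ZMod n, v ∈ S → v ≠ w → D v w = 1 := by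
    intro v w hv hne
    show ((G.dist v w : ℕ) : ℝ) = 1
    rw [SimpleGraph.dist_eq_one_iff_adj.mpr (hadj v w hv hne)]
    norm_num
  have hdist0 : ∀ v : ZMod n, D v v = 0 := by
    intro v
    show ((G.dist v v : ℕ) : ℝ) = 0
    rw [SimpleGraph.dist_self]
    norm_num
  have hdistsymm : ∀ v w : ZMod n, D v w = D w v := by
    intro v w
    show ((G.dist v w : ℕ) : ℝ) = ((G.dist w v : ℕ) : ℝ)
    rw [SimpleGraph.dist_comm]
  -- row sums for vertices in S
  have hrowS : ∀ v ∈ S, ∑ w, D v w * x w = (l - 1) * c + c * μ := by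
    intro v hv
    rw [← Finset.sum_add_sum_compl S]
    have h1 : ∑ w ∈ S, D v w * x w = (l - 1) * c := by
      have hterm : ∀ w ∈ S, D v w * x w = c - (if w = v then c else 0) := by
        intro w hw
        have hxw : x w = c := by simp [hxdef, hw]
        rcases eq_or_ne w v with rfl | h
        · rw [hdist0, hxw]; simp
        · rw [hdist1 v w hv (Ne.symm h), hxw, if_neg h]; ring
      rw [Finset.sum_congr rfl hterm, Finset.sum_sub_distrib, Finset.sum_const,
        Finset.sum_ite_eq' S v (fun _ => c), if_pos hv, nsmul_eq_mul, hlS]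
      ring
    have h2 : ∑ w ∈ Sᶜ, D v w * x w = c * μ := by
      have hterm : ∀ w ∈ Sᶜ, D v w * x w = μ := by
        intro w hw
        rw [Finset.mem_compl] at hw
        have hne : v ≠ w := fun e => hw (e ▸ hv)
        rw [hdist1 v w hv hne, hxdef]
        simp [hw]
      rw [Finset.sum_congr rfl hterm, Finset.sum_const, nsmul_eq_mul, hcS]
    rw [h1, h2]
  -- row sums for vertices outside S
  have hrowC : ∀ v ∈ (Sᶜ : Finset (ZMod n)), ∑ w, D v w * x w
      = c * l + μ * ((transmission G v : ℝ) - l) := by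
    intro v hv
    rw [Finset.mem_compl] at hv
    have hS1 : ∀ w ∈ S, D v w = 1 := by
      intro w hw
      have hne : w ≠ v := fun e => hv (e ▸ hw)
      rw [hdistsymm]
      exact hdist1 w v hw hne
    have hsum1 : ∑ w ∈ S, D v w * x w = c * l := by
      have hterm : ∀ w ∈ S, D v w * x w = c := by
        intro w hw
        rw [hS1 w hw, hxdef]
        simp [hw]
      rw [Finset.sum_congr rfl hterm, Finset.sum_const, nsmul_eq_mul, hlS]
      ring
    have htr : (transmission G v : ℝ) = ∑ w, D v w := by
      show ((∑ w, G.dist v w : ℕ) : ℝ) = _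
      push_cast
      rfl
    have hsum2 : ∑ w ∈ Sᶜ, D v w * x w = μ * ((transmission G v : ℝ) - l) := by
      have hterm : ∀ w ∈ (Sᶜ : Finset (ZMod n)), D v w * x w = D v w * μ := by
        intro w hw
        rw [Finset.mem_compl] at hw
        rw [hxdef]
        simp [hw]
      rw [Finset.sum_congr rfl hterm, ← Finset.sum_mul]
      have h4 : ∑ w ∈ S, D v w = l := by
        rw [Finset.sum_congr rfl hS1, Finset.sum_const, nsmul_eq_mul, hlS, mul_one]
      have h5 := Finset.sum_add_sum_compl S (fun w => D v w)
      have h3 : ∑ w ∈ Sᶜ, D v w = (transmission G v : ℝ) - l := by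
        rw [htr]
        rw [h4] at h5
        linarith
      rw [h3]
      ring
    rw [← Finset.sum_add_sum_compl S, hsum1, hsum2]
  -- total transmission over the complement
  have hTr : ∑ v ∈ (Sᶜ : Finset (ZMod n)), (transmission G v : ℝ) = travg * c := by
    rw [hcompl] at htravg
    rw [htravg, div_mul_cancel₀ _ (ne_of_gt hcpos)]
  -- quadratic form value
  have hQ : dotProduct x (D.mulVec x)
      = l * (c * ((l - 1) * c + c * μ)) +
        (c * (μ * (c * l)) + μ * μ * (travg * c - c * l)) := by
    have expand : dotProduct x (D.mulVec x) = ∑ v, x v * ∑ w, D v w * x w := rfl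
    rw [expand, ← Finset.sum_add_sum_compl S]
    congr 1
    · have hterm : ∀ v ∈ S, x v * ∑ w, D v w * x w = c * ((l - 1) * c + c * μ) := by
        intro v hv
        rw [hrowS v hv, hxdef]
        simp [hv]
      rw [Finset.sum_congr rfl hterm, Finset.sum_const, nsmul_eq_mul, hlS]
    · have hterm : ∀ v ∈ (Sᶜ : Finset (ZMod n)), x v * ∑ w, D v w * x w
          = μ * (c * l) + μ * μ * ((transmission G v : ℝ) - l) := by
        intro v hv
        rw [hrowC v hv, hxdef]
        have hv' : v ∉ S := Finset.mem_compl.mp hv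
        simp only [if_neg hv']
        ring
      rw [Finset.sum_congr rfl hterm, Finset.sum_add_distrib, Finset.sum_const, nsmul_eq_mul, hcS]
      congr 1
      rw [← Finset.mul_sum, Finset.sum_sub_distrib, Finset.sum_const, nsmul_eq_mul, hcS, hTr]
  -- norm squared
  have hN : dotProduct x x = l * c ^ 2 + c * μ ^ 2 := by
    have expand : dotProduct x x = ∑ v, x v * x v := rfl
    rw [expand, ← Finset.sum_add_sum_compl S]
    have h1 : ∀ v ∈ S, x v * x v = c * c := by
      intro v hv; simp [hxdef, hv]
    have h2 : ∀ v ∈ (Sᶜ : Finset (ZMod n)), x v * x v = μ * μ := by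
      intro v hv
      have hv' : v ∉ S := Finset.mem_compl.mp hv
      simp [hxdef, hv']
    rw [Finset.sum_congr rfl h1, Finset.sum_congr rfl h2, Finset.sum_const, Finset.sum_const,
      nsmul_eq_mul, nsmul_eq_mul, hlS, hcS]
    ring
  -- D is symmetric
  have hDh : D.IsHermitian := by
    unfold Matrix.IsHermitian
    ext i j
    rw [Matrix.conjTranspose_apply, star_trivial]
    exact hdistsymm j i
  have hray := rayleigh_le D hDh hrho x
  have hNpos : 0 < dotProduct x x := by
    rw [hN]
    nlinarith [sq_nonneg μ, hcpos, hlpos]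
  have hlamN : ((travg - 1) + sq) / 2 * dotProduct x x
      = dotProduct x (D.mulVec x) := by
    rw [hN, hQ, hμdef]
    linear_combination (c * (travg - 2 * l + 1 + sq) / 8) * hsq2
  have key : ((travg - 1) + sq) / 2 * dotProduct x x ≤ rho * dotProduct x x := by
    rw [hlamN]
    exact hray
  exact le_of_mul_le_mul_right key hNpos
end
end

section
/- Let n ≥ 3 be a natural number that is not prime (so the set V₂ of elements of ZMod n that are neither 0 nor additive generators is nonempty), let l = φ(n) + 1, and let Tr_max = max_{v ∈ V₂} Tr(v) be the maximum transmission in the power graph P(C_n) over the elements of V₂. Then the distance spectral radius satisfies ρ₁(P(C_n)) ≤ ((Tr_max − 1) + √((Tr_max − 2l + 1)² + 4l(n − l))) / 2. -/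
open scoped Classical

noncomputable section

lemma spec_le_of_subinvariant {V : Type*} [Fintype V] [DecidableEq V] [Nonempty V] (M : Matrix V V ℝ)
    (hM : ∀ i j, 0 ≤ M i j) (y : V → ℝ) (hy : ∀ i, 0 < y i) (lam : ℝ)
    (hle : ∀ i, M.mulVec y i ≤ lam * y i) (mu : ℝ) (hmu : mu ∈ spectrum ℝ M) : mu ≤ lam := by
  rw [spectrum.mem_iff] at hmu
  rw [Matrix.isUnit_iff_isUnit_det, isUnit_iff_ne_zero] at hmu
  push_neg at hmu
  obtain ⟨v, hv0, hv⟩ := (Matrix.exists_mulVec_eq_zero_iff).2 hmu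
  have hEig : M.mulVec v = mu • v := by
    have h1 : (algebraMap ℝ (Matrix V V ℝ) mu).mulVec v - M.mulVec v = 0 := by
      rw [← Matrix.sub_mulVec]; exact hv
    have h2 : (algebraMap ℝ (Matrix V V ℝ) mu).mulVec v = mu • v := by
      rw [Algebra.algebraMap_eq_smul_one, Matrix.smul_mulVec, Matrix.one_mulVec]
    rw [h2] at h1
    exact (sub_eq_zero.mp h1).symm
  obtain ⟨i, -, hi⟩ := Finset.exists_max_image Finset.univ (fun j => |v j| / y j)
    Finset.univ_nonempty
  set c := |v i| / y i with hc
  obtain ⟨j, hj⟩ := Function.ne_iff.mp hv0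
  have hcpos : 0 < c := by
    have h1 : 0 < |v j| / y j := div_pos (abs_pos.mpr hj) (hy j)
    exact lt_of_lt_of_le h1 (hi j (Finset.mem_univ j))
  have hbd : ∀ k, |v k| ≤ c * y k := fun k =>
    (div_le_iff₀ (hy k)).mp (hi k (Finset.mem_univ k))
  have hvi : |v i| = c * y i := (div_mul_cancel₀ _ (hy i).ne').symm
  have key : |mu| * (c * y i) ≤ c * (lam * y i) := by
    have e1 : |mu| * (c * y i) = |M.mulVec v i| := by
      rw [hEig, ← hvi, Pi.smul_apply, smul_eq_mul, abs_mul]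
    rw [e1]
    calc |M.mulVec v i| ≤ ∑ k, |M i k * v k| := by
            rw [Matrix.mulVec, dotProduct]; exact Finset.abs_sum_le_sum_abs _ _
      _ ≤ ∑ k, M i k * (c * y k) := by
            refine Finset.sum_le_sum fun k _ => ?_
            rw [abs_mul, abs_of_nonneg (hM i k)]
            exact mul_le_mul_of_nonneg_left (hbd k) (hM i k)
      _ = c * M.mulVec y i := by
            rw [Matrix.mulVec, dotProduct, Finset.mul_sum]; congr 1; ext k; ring
      _ ≤ c * (lam * y i) := mul_le_mul_of_nonneg_left (hle i) hcpos.le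
  have habs : |mu| ≤ lam := by
    have hpos : 0 < c * y i := mul_pos hcpos (hy i)
    nlinarith [key]
  linarith [le_abs_self mu]

lemma adj_dom {n : ℕ} [NeZero n] {g z : ZMod n} (hg : g = 0 ∨ addOrderOf g = n)
    (hne : g ≠ z) : (addPowerGraph (ZMod n)).Adj g z := by
  refine ⟨hne, ?_⟩
  rcases hg with rfl | hg
  · exact ⟨0, Or.inl (by simp)⟩
  · have hcast : ((g.val : ℕ) : ZMod n) = g := ZMod.natCast_rightInverse g
    have ho : addOrderOf ((g.val : ℕ) : ZMod n) = n / n.gcd g.val :=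
      ZMod.addOrderOf_coe g.val (NeZero.ne n)
    rw [hcast, hg] at ho
    have hgcd : n.gcd g.val = 1 := by
      rcases (Nat.div_eq_self.mp ho.symm) with h | h
      · exact absurd h (NeZero.ne n)
      · exact h
    have hcop : Nat.Coprime g.val n := Nat.coprime_comm.mp hgcd
    have hinv : g * g⁻¹ = 1 := by
      conv_lhs => rw [← hcast]
      exact ZMod.coe_mul_inv_eq_one g.val hcop
    refine ⟨(z * g⁻¹).val, Or.inr ?_⟩
    rw [nsmul_eq_mul, ZMod.natCast_rightInverse (z * g⁻¹)]
    rw [mul_assoc, mul_comm g⁻¹ g, hinv, mul_one]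

lemma card_dom (n : ℕ) [NeZero n] (hn : 3 ≤ n) :
    (Finset.univ.filter (fun v : ZMod n => v = 0 ∨ addOrderOf v = n)).card
      = Nat.totient n + 1 := by
  have hcard : Fintype.card (ZMod n) = n := ZMod.card n
  have h1 : (Finset.univ.filter (fun v : ZMod n => addOrderOf v = n)).card = Nat.totient n := by
    have := IsAddCyclic.card_addOrderOf_eq_totient (α := ZMod n) (d := n)
      (by rw [hcard])
    simpa [Finset.filter] using this
  rw [Finset.filter_or]
  rw [Finset.card_union_of_disjoint]
  · rw [Finset.filter_eq', if_pos (Finset.mem_univ _), Finset.card_singleton, h1]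
    omega
  · rw [Finset.disjoint_left]
    intro a ha hb
    simp only [Finset.mem_filter] at ha hb
    rw [ha.2] at hb
    simp only [addOrderOf_zero] at hb
    omega

/-- Distance-spectral-radius upper bound for the power graph of `ZMod n`, in terms of the
maximum transmission of the non-identity non-generator elements. -/
theorem distSpectralRadius_powerGraph_cyclic_upper_bound
    (n : ℕ) [NeZero n] (hn : 3 ≤ n) (hnp : ¬ n.Prime) (rho l trmax : ℝ)
    (hrho : IsGreatest (spectrum ℝ (distMatrix (addPowerGraph (ZMod n)))) rho)
    (hl : l = (Nat.totient n : ℝ) + 1)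
    (htrmax : trmax =
      (((Finset.univ.filter (fun v : ZMod n => v ≠ 0 ∧ addOrderOf v ≠ n)).sup
        (transmission (addPowerGraph (ZMod n))) : ℕ) : ℝ)) :
    rho ≤ ((trmax - 1) + Real.sqrt ((trmax - 2 * l + 1) ^ 2 + 4 * l * ((n : ℝ) - l))) / 2 := by
  set G := addPowerGraph (ZMod n) with hG
  set φ := Nat.totient n with hφdef
  have hφlt : φ + 1 < n := by
    have h1 : φ < n := Nat.totient_lt n (by omega)
    have h2 : φ ≠ n - 1 := by
      intro h
      exact hnp ((Nat.totient_eq_iff_prime (by omega)).mp (by omega))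
    omega
  set R := Real.sqrt ((trmax - 2 * l + 1) ^ 2 + 4 * l * ((n : ℝ) - l)) with hRdef
  set lam := ((trmax - 1) + R) / 2 with hlam
  have hl0 : (0:ℝ) < l := by rw [hl]; positivity
  have hppos : 0 < (n : ℝ) - l := by
    rw [hl]
    have : ((φ : ℝ) + 1) < (n : ℝ) := by exact_mod_cast hφlt
    linarith
  have harg : (0:ℝ) ≤ (trmax - 2 * l + 1) ^ 2 + 4 * l * ((n : ℝ) - l) := by
    have h4 : (0:ℝ) ≤ 4 * l * ((n : ℝ) - l) := by
      apply mul_nonneg (by linarith) (by linarith)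
    nlinarith [sq_nonneg (trmax - 2 * l + 1)]
  have hR2 : R ^ 2 = (trmax - 2 * l + 1) ^ 2 + 4 * l * ((n : ℝ) - l) := Real.sq_sqrt harg
  have hRnn : 0 ≤ R := Real.sqrt_nonneg _
  have hqpos : 0 < lam - l + 1 := by
    have habs : |trmax - 2 * l + 1| < R := by
      rw [hRdef, ← Real.sqrt_sq_eq_abs]
      apply Real.sqrt_lt_sqrt (sq_nonneg _)
      have : (0:ℝ) < 4 * l * ((n : ℝ) - l) := mul_pos (by linarith) hppos
      linarith
    have := neg_abs_le (trmax - 2 * l + 1)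
    rw [hlam]
    linarith
  have hd1 : ∀ w z : ZMod n, (w = 0 ∨ addOrderOf w = n) → w ≠ z → (G.dist w z : ℝ) = 1 := by
    intro w z hw hne
    rw [SimpleGraph.dist_eq_one_iff_adj.mpr (adj_dom hw hne)]
    norm_num
  have hd1' : ∀ w z : ZMod n, (z = 0 ∨ addOrderOf z = n) → w ≠ z → (G.dist w z : ℝ) = 1 := by
    intro w z hz hne
    rw [SimpleGraph.dist_comm]
    exact hd1 z w hz (Ne.symm hne)
  set P : ZMod n → Prop := fun v => v = 0 ∨ addOrderOf v = n with hP
  set S := Finset.univ.filter P with hS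
  set V2 := Finset.univ.filter (fun v => ¬ P v) with hV2
  have hScard : S.card = φ + 1 := card_dom n hn
  have hV2card : V2.card = n - (φ + 1) := by
    have h := Finset.card_filter_add_card_filter_not (s := Finset.univ) (p := P)
    rw [Finset.card_univ, ZMod.card, ← hS, ← hV2] at h
    omega
  have hfilter_eq : Finset.univ.filter (fun v : ZMod n => v ≠ 0 ∧ addOrderOf v ≠ n) = V2 := by
    rw [hV2]
    apply Finset.filter_congr
    intro x _
    rw [hP]
    tauto
  have hφl : (φ : ℝ) = l - 1 := by rw [hl]; ring
  set y : ZMod n → ℝ := fun v => if P v then (n : ℝ) - l else lam - l + 1 with hy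
  have hypos : ∀ v, 0 < y v := by
    intro v; rw [hy]; dsimp only; split <;> [exact hppos; exact hqpos]
  have hmulvec : ∀ w : ZMod n, (distMatrix G).mulVec y w = ∑ z, (G.dist w z : ℝ) * y z := by
    intro w
    rw [Matrix.mulVec, dotProduct]
    rfl
  have hle : ∀ w : ZMod n, (distMatrix G).mulVec y w ≤ lam * y w := by
    intro w
    rw [hmulvec w, ← Finset.sum_filter_add_sum_filter_not Finset.univ P]
    by_cases hw : P w
    · have hsum1 : ∑ z ∈ S, (G.dist w z : ℝ) * y z = φ * ((n : ℝ) - l) := by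
        have hwS : w ∈ S := by rw [hS]; simp [hw]
        rw [← Finset.add_sum_erase S _ hwS, SimpleGraph.dist_self]
        have : ∀ z ∈ S.erase w, (G.dist w z : ℝ) * y z = (n : ℝ) - l := by
          intro z hz
          obtain ⟨hzw, hzS⟩ := Finset.mem_erase.mp hz
          have hPz : P z := (Finset.mem_filter.mp hzS).2
          rw [hd1 w z hw (Ne.symm hzw), hy]
          simp [hPz]
        rw [Finset.sum_congr rfl this, Finset.sum_const, Finset.card_erase_of_mem hwS, hScard]
        simp
      have hsum2 : ∑ z ∈ V2, (G.dist w z : ℝ) * y z = ((n : ℝ) - (φ + 1)) * (lam - l + 1) := by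
        have : ∀ z ∈ V2, (G.dist w z : ℝ) * y z = lam - l + 1 := by
          intro z hz
          have hPz : ¬ P z := (Finset.mem_filter.mp hz).2
          have hne : w ≠ z := by rintro rfl; exact hPz hw
          rw [hd1 w z hw hne, hy]
          simp [hPz]
        rw [Finset.sum_congr rfl this, Finset.sum_const, hV2card]
        have hcast : ((n - (φ + 1) : ℕ) : ℝ) = (n : ℝ) - ((φ:ℝ) + 1) := by
          rw [Nat.cast_sub (le_of_lt hφlt)]; push_cast; ring
        rw [nsmul_eq_mul, hcast]
      rw [hsum1, hsum2]
      have hyw : y w = (n : ℝ) - l := by rw [hy]; simp [hw]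
      rw [hyw, hφl]
      apply le_of_eq
      ring
    · have hsum1 : ∑ z ∈ S, (G.dist w z : ℝ) * y z = ((φ : ℝ) + 1) * ((n : ℝ) - l) := by
        have : ∀ z ∈ S, (G.dist w z : ℝ) * y z = (n : ℝ) - l := by
          intro z hz
          have hPz : P z := (Finset.mem_filter.mp hz).2
          have hne : w ≠ z := by rintro rfl; exact hw hPz
          rw [hd1' w z hPz hne, hy]
          simp [hPz]
        rw [Finset.sum_congr rfl this, Finset.sum_const, hScard, nsmul_eq_mul]
        push_cast
        ring
      have htr : ((transmission G w : ℕ) : ℝ) = ((φ:ℝ) + 1) + ∑ z ∈ V2, (G.dist w z : ℝ) := by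
        have h0 : ((transmission G w : ℕ) : ℝ) = ∑ z, (G.dist w z : ℝ) := by
          rw [transmission]; push_cast; rfl
        rw [h0, ← Finset.sum_filter_add_sum_filter_not Finset.univ P]
        congr 1
        have : ∀ z ∈ S, (G.dist w z : ℝ) = 1 := by
          intro z hz
          have hPz : P z := (Finset.mem_filter.mp hz).2
          exact hd1' w z hPz (by rintro rfl; exact hw hPz)
        rw [Finset.sum_congr rfl this, Finset.sum_const, hScard, nsmul_eq_mul]
        push_cast
        ring
      have hsum2 : ∑ z ∈ V2, (G.dist w z : ℝ) * y z
          = (((transmission G w : ℕ) : ℝ) - ((φ:ℝ) + 1)) * (lam - l + 1) := by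
        have : ∀ z ∈ V2, (G.dist w z : ℝ) * y z = (G.dist w z : ℝ) * (lam - l + 1) := by
          intro z hz
          have hPz : ¬ P z := (Finset.mem_filter.mp hz).2
          rw [hy]; simp [hPz]
        rw [Finset.sum_congr rfl this, ← Finset.sum_mul]
        congr 1
        linarith [htr]
      have htrle : ((transmission G w : ℕ) : ℝ) ≤ trmax := by
        rw [htrmax]
        have hwmem : w ∈ Finset.univ.filter (fun v : ZMod n => v ≠ 0 ∧ addOrderOf v ≠ n) := by
          rw [hfilter_eq, hV2]
          simp [hw]
        exact_mod_cast Nat.cast_le.mpr (Finset.le_sup (f := transmission G) hwmem)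
      have hyw : y w = lam - l + 1 := by rw [hy]; simp [hw]
      rw [hsum1, hsum2, hyw]
      have hstep : ((φ:ℝ) + 1) * ((n : ℝ) - l)
            + (((transmission G w : ℕ) : ℝ) - ((φ:ℝ) + 1)) * (lam - l + 1)
          ≤ ((φ:ℝ) + 1) * ((n : ℝ) - l) + (trmax - ((φ:ℝ) + 1)) * (lam - l + 1) := by
        have := mul_le_mul_of_nonneg_right (sub_le_sub_right htrle ((φ:ℝ)+1)) hqpos.le
        linarith
      refine le_trans hstep ?_
      have hident : ((φ:ℝ) + 1) * ((n : ℝ) - l) + (trmax - ((φ:ℝ) + 1)) * (lam - l + 1)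
          = lam * (lam - l + 1) := by
        rw [hφl, hlam]
        linear_combination (-(1:ℝ)/4) * hR2
      linarith [hident]
  exact spec_le_of_subinvariant (distMatrix G)
    (fun i j => Nat.cast_nonneg _) y hypos lam hle rho hrho.1
end
end

section
/- Let n ≥ 3 be a natural number that is not prime, let l = φ(n) + 1, let V₂ be the (nonempty) set of elements of ZMod n that are neither 0 nor additive generators, and let Tr_avg = (∑_{v ∈ V₂} Tr(v)) / (n − l) and Tr_max = max_{v ∈ V₂} Tr(v) be the average and maximum transmissions of these elements in the power graph P(C_n). Then ρ₁(P(C_n)) = ((Tr_avg − 1) + √((Tr_avg − 2l + 1)² + 4l(n − l))) / 2 and ρ₁(P(C_n)) = ((Tr_max − 1) + √((Tr_max − 2l + 1)² + 4l(n − l))) / 2 both hold if and only if n = p^m for some prime p and some natural number m ≥ 2. -/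
open scoped Classical

noncomputable section

variable {n : ℕ} [NeZero n]

lemma zmod_mult_iff (x y : ZMod n) : (∃ m : ℕ, x = m • y) ↔ n.gcd y.val ∣ x.val := by
  constructor
  · rintro ⟨m, rfl⟩
    have hy : ((y.val : ℕ) : ZMod n) = y := ZMod.natCast_rightInverse y
    have : (m • y) = ((m * y.val : ℕ) : ZMod n) := by
      rw [nsmul_eq_mul]
      conv_lhs => rw [← hy]
      push_cast
      ring
    rw [this, ZMod.val_natCast]
    exact (Nat.dvd_mod_iff (Nat.gcd_dvd_left _ _)).mpr
      (Dvd.dvd.mul_left (Nat.gcd_dvd_right _ _) m)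
  · intro h
    set d := n.gcd y.val with hd
    obtain ⟨c, hc⟩ := h
    set K : ℤ := c * Nat.gcdB n y.val with hK
    have hbez : (d : ℤ) = n * Nat.gcdA n y.val + y.val * Nat.gcdB n y.val :=
      Nat.gcd_eq_gcd_ab n y.val
    have hcast : (x.val : ℤ) = (d : ℤ) * c := by exact_mod_cast hc
    have hdvd : (n : ℤ) ∣ ((x.val : ℤ) - K * y.val) := by
      refine ⟨Nat.gcdA n y.val * c, ?_⟩
      rw [hcast, hbez, hK]; ring
    have hzero : (((x.val : ℤ) - K * y.val : ℤ) : ZMod n) = 0 :=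
      (ZMod.intCast_zmod_eq_zero_iff_dvd _ n).mpr hdvd
    have hy : ((y.val : ℕ) : ZMod n) = y := ZMod.natCast_rightInverse y
    have hx' : ((x.val : ℕ) : ZMod n) = x := ZMod.natCast_rightInverse x
    have hx : x = (K : ZMod n) * y := by
      push_cast at hzero
      rw [hy, hx'] at hzero
      linear_combination hzero
    refine ⟨(K % n).toNat, ?_⟩
    have hmod : (((K % n).toNat : ℤ) : ZMod n) = (K : ZMod n) := by
      rw [Int.toNat_of_nonneg (Int.emod_nonneg K (by exact_mod_cast (NeZero.ne n)))]
      rw [ZMod.intCast_eq_intCast_iff']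
      simp [Int.emod_emod_of_dvd]
    rw [nsmul_eq_mul, hx]
    congr 1
    exact_mod_cast hmod.symm

lemma zmod_adj_iff (x y : ZMod n) : (addPowerGraph (ZMod n)).Adj x y ↔
    x ≠ y ∧ (n.gcd y.val ∣ x.val ∨ n.gcd x.val ∣ y.val) := by
  show (x ≠ y ∧ ∃ m : ℕ, x = m • y ∨ y = m • x) ↔ _
  constructor
  · rintro ⟨hne, m, h | h⟩
    · exact ⟨hne, Or.inl ((zmod_mult_iff x y).mp ⟨m, h⟩)⟩
    · exact ⟨hne, Or.inr ((zmod_mult_iff y x).mp ⟨m, h⟩)⟩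
  · rintro ⟨hne, h | h⟩
    · obtain ⟨m, hm⟩ := (zmod_mult_iff x y).mpr h
      exact ⟨hne, m, Or.inl hm⟩
    · obtain ⟨m, hm⟩ := (zmod_mult_iff y x).mpr h
      exact ⟨hne, m, Or.inr hm⟩

lemma zmod_ord (y : ZMod n) : addOrderOf y = n / n.gcd y.val := by
  conv_lhs => rw [← ZMod.natCast_rightInverse y]
  exact ZMod.addOrderOf_coe y.val (NeZero.ne n)

lemma zmod_adj_zero (x : ZMod n) (hx : x ≠ 0) : (addPowerGraph (ZMod n)).Adj x 0 := by
  rw [zmod_adj_iff]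
  refine ⟨hx, Or.inr ?_⟩
  simp

lemma zmod_dist_two {v w : ZMod n} (hv : v ≠ 0) (hw : w ≠ 0) (hvw : v ≠ w)
    (hadj : ¬ (addPowerGraph (ZMod n)).Adj v w) : (addPowerGraph (ZMod n)).dist v w = 2 := by
  have h1 : (addPowerGraph (ZMod n)).Adj v 0 := zmod_adj_zero v hv
  have h2 : (addPowerGraph (ZMod n)).Adj 0 w := ((zmod_adj_zero w hw).symm)
  have hle : (addPowerGraph (ZMod n)).dist v w ≤ 2 := by
    have := SimpleGraph.dist_le
      (SimpleGraph.Walk.cons h1 (SimpleGraph.Walk.cons h2 SimpleGraph.Walk.nil))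
    simpa using this
  have hne1 : (addPowerGraph (ZMod n)).dist v w ≠ 1 := by
    intro h
    exact hadj (SimpleGraph.dist_eq_one_iff_adj.mp h)
  have hne0 : (addPowerGraph (ZMod n)).dist v w ≠ 0 := by
    intro h
    have hr : (addPowerGraph (ZMod n)).Reachable v w :=
      ⟨SimpleGraph.Walk.cons h1 (SimpleGraph.Walk.cons h2 SimpleGraph.Walk.nil)⟩
    rw [SimpleGraph.dist_eq_zero_iff_eq_or_not_reachable] at h
    rcases h with h | h
    · exact hvw h
    · exact h hr
  omega

lemma zmod_transmission (v : ZMod n) (hv : v ≠ 0) :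
    transmission (addPowerGraph (ZMod n)) v =
      (n - 1) + (Finset.univ.filter
        (fun w : ZMod n => ¬ (addPowerGraph (ZMod n)).Adj v w ∧ w ≠ v)).card := by
  classical
  have hdist : ∀ w : ZMod n, (addPowerGraph (ZMod n)).dist v w =
      (if w = v then 0 else 1) +
      (if ¬ (addPowerGraph (ZMod n)).Adj v w ∧ w ≠ v then 1 else 0) := by
    intro w
    by_cases hwv : w = v
    · subst hwv; simp
    · by_cases hadj : (addPowerGraph (ZMod n)).Adj v w
      · simp [hwv, hadj, SimpleGraph.dist_eq_one_iff_adj.mpr hadj]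
      · have hw0 : w ≠ 0 := by
          intro h; subst h
          exact hadj (zmod_adj_zero v hv)
        rw [zmod_dist_two hv hw0 (Ne.symm hwv) hadj]
        simp [hwv, hadj]
  unfold transmission
  rw [Finset.sum_congr rfl (fun w _ => hdist w), Finset.sum_add_distrib]
  congr 1
  · rw [Finset.sum_ite, Finset.sum_const, Finset.sum_const]
    simp only [smul_eq_mul, mul_zero, mul_one, zero_add]
    rw [Finset.filter_ne', Finset.card_erase_of_mem (Finset.mem_univ v)]
    simp [Finset.card_univ, ZMod.card]
  · simp [Finset.sum_ite, Finset.sum_const]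

lemma zmod_count_val (P : ℕ → Prop) [DecidablePred P] :
    (Finset.univ.filter (fun y : ZMod n => P y.val)).card =
      ((Finset.range n).filter P).card := by
  apply Finset.card_bij (fun (y : ZMod n) _ => y.val)
  · intro y hy
    rw [Finset.mem_filter] at hy ⊢
    exact ⟨Finset.mem_range.mpr (ZMod.val_lt y), hy.2⟩
  · intro a ha b hb h
    exact ZMod.val_injective n h
  · intro a ha
    rw [Finset.mem_filter, Finset.mem_range] at ha
    refine ⟨(a : ZMod n), ?_, ?_⟩
    · rw [Finset.mem_filter]
      exact ⟨Finset.mem_univ _, by rw [ZMod.val_natCast_of_lt ha.1]; exact ha.2⟩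
    · rw [ZMod.val_natCast_of_lt ha.1]

lemma range_count_dvd {e : ℕ} (he : e ∣ n) :
    ((Finset.range n).filter (fun x => e ∣ x)).card = n / e := by
  have hn0 : n ≠ 0 := NeZero.ne n
  have he0 : e ≠ 0 := by rintro rfl; simp_all
  have himg : ((Finset.range (n / e)).image (fun j => j * e)) =
      (Finset.range n).filter (fun x => e ∣ x) := by
    ext x
    simp only [Finset.mem_image, Finset.mem_filter, Finset.mem_range]
    constructor
    · rintro ⟨j, hj, rfl⟩
      exact ⟨by rwa [Nat.lt_div_iff_mul_lt' he, mul_comm] at hj, dvd_mul_left e j⟩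
    · rintro ⟨hx, hd⟩
      exact ⟨x / e, by rwa [Nat.lt_div_iff_mul_lt' he, mul_comm, Nat.div_mul_cancel hd],
        Nat.div_mul_cancel hd⟩
  rw [← himg, Finset.card_image_of_injective _ (fun a b h => by
    exact Nat.eq_of_mul_eq_mul_right (Nat.pos_of_ne_zero he0) h), Finset.card_range]

lemma zmod_card_V2 (hn3 : 3 ≤ n) :
    (Finset.univ.filter (fun v : ZMod n => v ≠ 0 ∧ addOrderOf v ≠ n)).card =
      n - n.totient - 1 := by
  have hn0 : n ≠ 0 := NeZero.ne n
  have hord : ∀ v : ZMod n, (addOrderOf v = n ↔ n.gcd v.val = 1) := by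
    intro v
    rw [zmod_ord]
    constructor
    · intro h
      rcases (Nat.div_eq_self.mp h) with h' | h'
      · exact absurd h' hn0
      · exact h'
    · intro h; rw [h, Nat.div_one]
  have hpred : ∀ v : ZMod n, (v ≠ 0 ∧ addOrderOf v ≠ n) ↔
      (fun x : ℕ => ¬(x = 0 ∨ n.gcd x = 1)) v.val := by
    intro v
    simp only [not_or, Ne]
    rw [hord, ← ZMod.val_eq_zero]
  rw [Finset.filter_congr (fun v _ => by rw [hpred v]),
    zmod_count_val (fun x : ℕ => ¬(x = 0 ∨ n.gcd x = 1))]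
  have hsplit := Finset.card_filter_add_card_filter_not
    (s := Finset.range n) (p := fun x : ℕ => x = 0 ∨ n.gcd x = 1)
  have hpos : ((Finset.range n).filter (fun x : ℕ => x = 0 ∨ n.gcd x = 1)).card =
      1 + n.totient := by
    have : (Finset.range n).filter (fun x : ℕ => x = 0 ∨ n.gcd x = 1) =
        insert 0 ((Finset.range n).filter n.Coprime) := by
      ext x
      simp only [Finset.mem_filter, Finset.mem_insert, Finset.mem_range, Nat.Coprime]
      constructor
      · rintro ⟨hx, rfl | h⟩
        · exact Or.inl rfl
        · exact Or.inr ⟨hx, h⟩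
      · rintro (rfl | ⟨hx, h⟩)
        · exact ⟨by omega, Or.inl rfl⟩
        · exact ⟨hx, Or.inr h⟩
    rw [this, Finset.card_insert_of_notMem (by
      simp only [Finset.mem_filter, Finset.mem_range, Nat.Coprime]
      rintro ⟨-, h⟩
      rw [Nat.gcd_zero_right] at h
      omega), Nat.totient]
    exact add_comm _ _
  have hcard := Finset.card_range n
  have htot : n.totient ≤ n - 1 := by
    have := Nat.totient_lt n (by omega)
    omega
  omega

lemma zmod_tr_prime {q : ℕ} (hq : q.Prime) (hqn : q ∣ n) (hnp : ¬ n.Prime) :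
    ((n / q : ℕ) : ZMod n) ≠ 0 ∧ addOrderOf ((n / q : ℕ) : ZMod n) ≠ n ∧
    transmission (addPowerGraph (ZMod n)) ((n / q : ℕ) : ZMod n) =
      (n - 1) + (n / q ^ (n.factorization q) - 1) := by
  classical
  have hn0 : n ≠ 0 := NeZero.ne n
  have hnpos : 0 < n := Nat.pos_of_ne_zero hn0
  have hq1 : 1 < q := hq.one_lt
  have hnq_lt : n / q < n := Nat.div_lt_self hnpos hq1
  have hnq_pos : 0 < n / q := Nat.div_pos (Nat.le_of_dvd hnpos hqn) (by omega)
  set a : ZMod n := ((n / q : ℕ) : ZMod n) with ha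
  have haval : a.val = n / q := ZMod.val_natCast_of_lt hnq_lt
  have hgcd : n.gcd a.val = n / q := by
    rw [haval]; exact Nat.gcd_eq_right (Nat.div_dvd_of_dvd hqn)
  have hord : addOrderOf a = q := by
    rw [zmod_ord, hgcd, Nat.div_div_self hqn hn0]
  have ha0 : a ≠ 0 := by
    intro h
    rw [h, ZMod.val_zero] at haval
    omega
  set k := n.factorization q with hk
  have hk1 : 0 < k := hq.factorization_pos_of_dvd hn0 hqn
  have hpk : q ^ k ∣ n := Nat.ordProj_dvd n q
  set m0 := n / q ^ k with hm0
  have hqm0 : ¬ q ∣ m0 := Nat.not_dvd_ordCompl hq hn0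
  have hn_eq : q ^ k * m0 = n := Nat.ordProj_mul_ordCompl_eq_self n q
  have helperA : ¬ q ^ k ∣ n / q := by
    intro h
    have h2 : q ^ (k + 1) ∣ n := by
      rw [pow_succ']
      exact (Nat.dvd_div_iff_mul_dvd hqn).mp h
    have := (Nat.Prime.pow_dvd_iff_le_factorization hq hn0).mp h2
    omega
  have key : ∀ w : ZMod n,
      ((¬ (addPowerGraph (ZMod n)).Adj a w ∧ w ≠ a) ↔ (q ^ k ∣ w.val ∧ w ≠ 0)) := by
    intro w
    set g := n.gcd w.val with hg
    have hgn : g ∣ n := Nat.gcd_dvd_left _ _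
    have hgw : g ∣ w.val := Nat.gcd_dvd_right _ _
    rw [zmod_adj_iff]
    rw [haval, Nat.gcd_eq_right (Nat.div_dvd_of_dvd hqn), ← hg]
    constructor
    · rintro ⟨hnadj, hwa⟩
      have hconj : ¬ (g ∣ n / q) ∧ ¬ (n / q ∣ w.val) := by
        by_contra hc
        apply hnadj
        refine ⟨Ne.symm hwa, ?_⟩
        rcases not_and_or.mp hc with h | h
        · exact Or.inl (not_not.mp h)
        · exact Or.inr (not_not.mp h)
      obtain ⟨h1, h2⟩ := hconj
      have hw0 : w ≠ 0 := by
        rintro rfl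
        exact h2 (by simp)
      refine ⟨?_, hw0⟩
      have hq_ndvd : ¬ q ∣ n / g := by
        intro h
        apply h1
        rw [Nat.dvd_div_iff_mul_dvd hqn]
        have := (Nat.dvd_div_iff_mul_dvd hgn).mp h
        rwa [mul_comm] at this
      have hcop : Nat.Coprime (q ^ k) (n / g) :=
        Nat.Coprime.pow_left k ((Nat.Prime.coprime_iff_not_dvd hq).mpr hq_ndvd)
      have hqkg : q ^ k ∣ g := by
        refine hcop.dvd_of_dvd_mul_right ?_
        rw [Nat.mul_div_cancel' hgn]
        exact hpk
      exact hqkg.trans hgw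
    · rintro ⟨hdvd, hw0⟩
      have hqkg : q ^ k ∣ g := Nat.dvd_gcd hpk hdvd
      have hwa : w ≠ a := by
        rintro rfl
        rw [haval] at hdvd
        exact helperA hdvd
      refine ⟨?_, hwa⟩
      rintro ⟨-, h | h⟩
      · exact helperA (hqkg.trans h)
      · -- h : n / q ∣ w.val
        have hm0nq : m0 ∣ n / q := by
          rw [Nat.dvd_div_iff_mul_dvd hqn]
          calc q * m0 ∣ q ^ k * m0 :=
                mul_dvd_mul_right (dvd_pow_self q hk1.ne') m0
            _ = n := hn_eq
        have hm0w : m0 ∣ w.val := hm0nq.trans h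
        have hcop : Nat.Coprime (q ^ k) m0 :=
          Nat.Coprime.pow_left k ((Nat.Prime.coprime_iff_not_dvd hq).mpr hqm0)
        have hnw : n ∣ w.val := by
          have h9 := hcop.mul_dvd_of_dvd_of_dvd hdvd hm0w
          rwa [hn_eq] at h9
        have : w.val = 0 := Nat.eq_zero_of_dvd_of_lt hnw (ZMod.val_lt w)
        exact hw0 (by rwa [ZMod.val_eq_zero] at this)
  refine ⟨ha0, by rw [hord]; intro h; exact hnp (h ▸ hq), ?_⟩
  rw [zmod_transmission a ha0]
  congr 1
  rw [Finset.filter_congr (fun w _ => key w)]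
  have : ∀ w : ZMod n, ((q ^ k ∣ w.val ∧ w ≠ 0) ↔
      ((fun x : ℕ => q ^ k ∣ x ∧ x ≠ 0) w.val)) := by
    intro w
    simp only [Ne, ← ZMod.val_eq_zero]
  rw [Finset.filter_congr (fun w _ => this w),
    zmod_count_val (fun x : ℕ => q ^ k ∣ x ∧ x ≠ 0)]
  have herase : (Finset.range n).filter (fun x : ℕ => q ^ k ∣ x ∧ x ≠ 0) =
      ((Finset.range n).filter (fun x : ℕ => q ^ k ∣ x)).erase 0 := by
    ext x
    simp only [Finset.mem_filter, Finset.mem_erase, Finset.mem_range]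
    tauto
  rw [herase, Finset.card_erase_of_mem (by
    simp only [Finset.mem_filter, Finset.mem_range]
    exact ⟨hnpos, dvd_zero _⟩), range_count_dvd hpk]

lemma zmod_complete {p m : ℕ} (hp : p.Prime) (hnpm : n = p ^ m)
    {x y : ZMod n} (hxy : x ≠ y) : (addPowerGraph (ZMod n)).Adj x y := by
  rw [zmod_adj_iff]
  refine ⟨hxy, ?_⟩
  have hx : n.gcd x.val ∣ p ^ m := hnpm ▸ Nat.gcd_dvd_left _ _
  have hy : n.gcd y.val ∣ p ^ m := hnpm ▸ Nat.gcd_dvd_left _ _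
  obtain ⟨i, hi, hxi⟩ := (Nat.dvd_prime_pow hp).mp hx
  obtain ⟨j, hj, hyj⟩ := (Nat.dvd_prime_pow hp).mp hy
  rcases le_total j i with h | h
  · exact Or.inl ((hyj ▸ (pow_dvd_pow p h) : n.gcd y.val ∣ p ^ i).trans
      (hxi ▸ Nat.gcd_dvd_right n x.val))
  · exact Or.inr ((hxi ▸ (pow_dvd_pow p h) : n.gcd x.val ∣ p ^ j).trans
      (hyj ▸ Nat.gcd_dvd_right n y.val))

lemma zmod_tr_complete {p m : ℕ} (hp : p.Prime) (hnpm : n = p ^ m) (v : ZMod n) (hv : v ≠ 0) :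
    transmission (addPowerGraph (ZMod n)) v = n - 1 := by
  rw [zmod_transmission v hv]
  have : (Finset.univ.filter
      (fun w : ZMod n => ¬ (addPowerGraph (ZMod n)).Adj v w ∧ w ≠ v)) = ∅ := by
    rw [Finset.filter_eq_empty_iff]
    rintro w - ⟨hnadj, hwv⟩
    exact hnadj (zmod_complete hp hnpm (Ne.symm hwv))
  rw [this]
  simp

lemma zmod_spec_complete {p m : ℕ} (hp : p.Prime) (hnpm : n = p ^ m) :
    IsGreatest (spectrum ℝ (distMatrix (addPowerGraph (ZMod n)))) ((n : ℝ) - 1) := by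
  classical
  have hcard : Fintype.card (ZMod n) = n := ZMod.card n
  have hM : ∀ x y : ZMod n, distMatrix (addPowerGraph (ZMod n)) x y =
      if x = y then 0 else 1 := by
    intro x y
    by_cases h : x = y
    · subst h; simp [distMatrix]
    · simp only [distMatrix, if_neg h]
      rw [SimpleGraph.dist_eq_one_iff_adj.mpr (zmod_complete hp hnpm h)]
      norm_num
  set M := distMatrix (addPowerGraph (ZMod n)) with hMdef
  constructor
  · -- (n-1) is in the spectrum
    rw [spectrum.mem_iff]
    intro hunit
    rw [Matrix.isUnit_iff_isUnit_det, isUnit_iff_ne_zero] at hunit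
    apply hunit
    rw [← Matrix.exists_mulVec_eq_zero_iff]
    refine ⟨fun _ => 1, ?_, ?_⟩
    · intro h
      have := congrFun h 0
      simp at this
    · funext i
      simp only [Matrix.mulVec, dotProduct, Matrix.sub_apply,
        Matrix.algebraMap_matrix_apply, hM, Pi.zero_apply]
      rw [Finset.sum_congr rfl (fun j _ => by
        show (((if i = j then algebraMap ℝ ℝ ((n:ℝ)-1) else 0) - if i = j then 0 else 1) * 1 : ℝ)
          = (if i = j then (n : ℝ) else 0) - 1
        by_cases h : i = j <;> simp [h])]
      rw [Finset.sum_sub_distrib, Finset.sum_ite_eq, if_pos (Finset.mem_univ i)]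
      simp [Finset.card_univ, hcard]
  · -- upper bound
    rintro μ hμ
    rw [spectrum.mem_iff, Matrix.isUnit_iff_isUnit_det, isUnit_iff_ne_zero, not_not,
      ← Matrix.exists_mulVec_eq_zero_iff] at hμ
    obtain ⟨v, hv0, hv⟩ := hμ
    have heig : Module.End.HasEigenvalue (Matrix.toLin' M) μ := by
      refine Module.End.hasEigenvalue_of_hasEigenvector ⟨?_, hv0⟩
      rw [Module.End.mem_eigenspace_iff, Matrix.toLin'_apply]
      have h1 : (algebraMap ℝ (Matrix (ZMod n) (ZMod n) ℝ) μ).mulVec v - M.mulVec v = 0 := by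
        rw [← Matrix.sub_mulVec]
        exact hv
      have halg : (algebraMap ℝ (Matrix (ZMod n) (ZMod n) ℝ) μ).mulVec v = μ • v := by
        funext z
        simp [Matrix.mulVec, dotProduct, Matrix.algebraMap_matrix_apply, ite_mul,
          Finset.sum_ite_eq]
      rw [halg] at h1
      exact (sub_eq_zero.mp h1).symm
    obtain ⟨i, hi⟩ := eigenvalue_mem_ball heig
    rw [Metric.mem_closedBall, Real.dist_eq, hM, if_pos rfl, sub_zero] at hi
    have hsum : (∑ j ∈ Finset.univ.erase i, ‖M i j‖) = (n : ℝ) - 1 := by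
      have hone : ∀ j ∈ Finset.univ.erase i, ‖M i j‖ = (1 : ℝ) := fun j hj => by
        rw [hM, if_neg (Ne.symm (Finset.ne_of_mem_erase hj))]
        exact norm_one
      rw [Finset.sum_congr rfl hone]
      rw [Finset.sum_const, Finset.card_erase_of_mem (Finset.mem_univ i)]
      have hn1 : 1 ≤ n := Nat.one_le_iff_ne_zero.mpr (NeZero.ne n)
      simp only [Finset.card_univ, hcard, nsmul_eq_mul, norm_one, mul_one]
      push_cast [Nat.cast_sub hn1]
      ring
    rw [hsum] at hi
    exact le_trans (le_abs_self μ) hi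

lemma sqrt_strict_aux {c s1 s2 : ℝ} (hc : 0 < c) (h : s1 < s2) :
    s1 + Real.sqrt (s1 ^ 2 + c) < s2 + Real.sqrt (s2 ^ 2 + c) := by
  set a := Real.sqrt (s1 ^ 2 + c) with hadef
  set b := Real.sqrt (s2 ^ 2 + c) with hbdef
  have ha2 : a ^ 2 = s1 ^ 2 + c := Real.sq_sqrt (by positivity)
  have hb2 : b ^ 2 = s2 ^ 2 + c := Real.sq_sqrt (by positivity)
  have habs1 : |s1| < a := by
    rw [hadef, ← Real.sqrt_sq_eq_abs]
    exact Real.sqrt_lt_sqrt (sq_nonneg s1) (by linarith)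
  have habs2 : |s2| < b := by
    rw [hbdef, ← Real.sqrt_sq_eq_abs]
    exact Real.sqrt_lt_sqrt (sq_nonneg s2) (by linarith)
  have h1 : -s1 < a := lt_of_le_of_lt (neg_le_abs s1) habs1
  have h2 : s1 < a := lt_of_le_of_lt (le_abs_self s1) habs1
  have h3 : -s2 < b := lt_of_le_of_lt (neg_le_abs s2) habs2
  have h4 : s2 < b := lt_of_le_of_lt (le_abs_self s2) habs2
  by_contra hcon
  push_neg at hcon
  -- hcon : s2 + b ≤ s1 + a
  have hkey : (b + s2) * (a - s1) ≤ (a + s1) * (a - s1) :=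
    mul_le_mul_of_nonneg_right (by linarith) (by linarith)
  have hprod : (a + s1) * (a - s1) = (b + s2) * (b - s2) := by
    have : a ^ 2 - s1 ^ 2 = b ^ 2 - s2 ^ 2 := by rw [ha2, hb2]; ring
    nlinarith [this]
  rw [hprod] at hkey
  have hfin : a - s1 ≤ b - s2 := le_of_mul_le_mul_left
    (by linarith [hkey]) (by linarith : (0:ℝ) < b + s2)
  linarith

/-- Equality holds in both distance-spectral-radius bounds for the power graph of `ZMod n`
if and only if `n` is a prime power `p ^ m` with `m ≥ 2`. -/
theorem distSpectralRadius_powerGraph_cyclic_eq_iff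
    (n : ℕ) [NeZero n] (hn : 3 ≤ n) (hnp : ¬ n.Prime) (rho l travg trmax : ℝ)
    (hrho : IsGreatest (spectrum ℝ (distMatrix (addPowerGraph (ZMod n)))) rho)
    (hl : l = (Nat.totient n : ℝ) + 1)
    (htravg : travg =
      (∑ v ∈ Finset.univ.filter (fun v : ZMod n => v ≠ 0 ∧ addOrderOf v ≠ n),
        (transmission (addPowerGraph (ZMod n)) v : ℝ)) / ((n : ℝ) - l))
    (htrmax : trmax =
      (((Finset.univ.filter (fun v : ZMod n => v ≠ 0 ∧ addOrderOf v ≠ n)).sup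
        (transmission (addPowerGraph (ZMod n))) : ℕ) : ℝ)) :
    (rho = ((travg - 1) + Real.sqrt ((travg - 2 * l + 1) ^ 2 + 4 * l * ((n : ℝ) - l))) / 2 ∧
     rho = ((trmax - 1) + Real.sqrt ((trmax - 2 * l + 1) ^ 2 + 4 * l * ((n : ℝ) - l))) / 2)
    ↔ ∃ p m : ℕ, p.Prime ∧ 2 ≤ m ∧ n = p ^ m := by
  classical
  have hn0 : n ≠ 0 := NeZero.ne n
  have htot2 : n.totient ≤ n - 2 := by
    have h1 := Nat.totient_lt n (by omega)
    by_contra hcon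
    push_neg at hcon
    have : n.totient = n - 1 := by omega
    exact hnp ((Nat.totient_eq_iff_prime (by omega)).mp this)
  set S := Finset.univ.filter (fun v : ZMod n => v ≠ 0 ∧ addOrderOf v ≠ n) with hS
  have hcardS : S.card = n - n.totient - 1 := zmod_card_V2 hn
  have hcardpos : 0 < n - n.totient - 1 := by omega
  have hnl : (n : ℝ) - l = ((n - n.totient - 1 : ℕ) : ℝ) := by
    rw [hl]
    push_cast [Nat.cast_sub (show 1 ≤ n - n.totient by omega),
      Nat.cast_sub (show n.totient ≤ n by omega)]
    ring
  have hnlpos : (0 : ℝ) < (n : ℝ) - l := by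
    rw [hnl]
    exact_mod_cast hcardpos
  have hlpos : (0 : ℝ) < l := by
    rw [hl]; positivity
  have hcpos : (0 : ℝ) < 4 * l * ((n : ℝ) - l) := by positivity
  set G := addPowerGraph (ZMod n) with hG
  set Tr := transmission G with hTr
  constructor
  · rintro ⟨E1, E2⟩
    -- first, travg = trmax
    have heq : travg = trmax := by
      by_contra hne
      rcases lt_or_gt_of_ne hne with hlt | hlt
      · have := sqrt_strict_aux hcpos
          (show travg - 2 * l + 1 < trmax - 2 * l + 1 by linarith)
        rw [E1] at E2
        have hE : (travg - 1) + Real.sqrt ((travg - 2 * l + 1) ^ 2 + 4 * l * ((n:ℝ) - l)) =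
            (trmax - 1) + Real.sqrt ((trmax - 2 * l + 1) ^ 2 + 4 * l * ((n:ℝ) - l)) := by
          linarith
        linarith
      · have := sqrt_strict_aux hcpos
          (show trmax - 2 * l + 1 < travg - 2 * l + 1 by linarith)
        rw [E1] at E2
        have hE : (travg - 1) + Real.sqrt ((travg - 2 * l + 1) ^ 2 + 4 * l * ((n:ℝ) - l)) =
            (trmax - 1) + Real.sqrt ((trmax - 2 * l + 1) ^ 2 + 4 * l * ((n:ℝ) - l)) := by
          linarith
        linarith
    -- hence the sum is card * max, so all transmissions are equal to the max
    set T := S.sup Tr with hT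
    have hsum : ∑ v ∈ S, Tr v = S.card * T := by
      have hr : ((∑ v ∈ S, Tr v : ℕ) : ℝ) = ((S.card * T : ℕ) : ℝ) := by
        push_cast
        rw [← Nat.cast_sum]
        have h5 : (∑ v ∈ S, (Tr v : ℝ)) = travg * ((n : ℝ) - l) := by
          rw [htravg]
          field_simp
        rw [show ((∑ v ∈ S, Tr v : ℕ) : ℝ) = ∑ v ∈ S, (Tr v : ℝ) from by push_cast; rfl, h5,
          heq, htrmax, hnl, hcardS]
        ring
      exact_mod_cast hr
    have hall : ∀ v ∈ S, Tr v = T := by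
      intro v hv
      by_contra hne
      have hlt : Tr v < T := lt_of_le_of_ne (Finset.le_sup hv) hne
      have : ∑ v ∈ S, Tr v < ∑ _v ∈ S, T :=
        Finset.sum_lt_sum (fun i hi => Finset.le_sup hi) ⟨v, hv, hlt⟩
      rw [Finset.sum_const, smul_eq_mul] at this
      omega
    -- each prime divisor q of n gives element with transmission (n-1)+(n/q^k - 1)
    have hqval : ∀ q : ℕ, q.Prime → q ∣ n →
        (n - 1) + (n / q ^ (n.factorization q) - 1) = T := by
      intro q hq hqn
      obtain ⟨h1, h2, h3⟩ := zmod_tr_prime (n := n) hq hqn hnp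
      have hmem : ((n / q : ℕ) : ZMod n) ∈ S := by
        rw [hS, Finset.mem_filter]
        exact ⟨Finset.mem_univ _, h1, h2⟩
      rw [← h3]
      exact (hall _ hmem)
    set p := n.minFac with hpdef
    have hp : p.Prime := Nat.minFac_prime (by omega)
    have hpn : p ∣ n := Nat.minFac_dvd n
    have huniq : ∀ {d : ℕ}, d.Prime → d ∣ n → d = p := by
      intro d hd hdn
      have e1 := hqval d hd hdn
      have e2 := hqval p hp hpn
      have hdiv : n / d ^ (n.factorization d) = n / p ^ (n.factorization p) := by
        have hd1 : 0 < n / d ^ (n.factorization d) :=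
          Nat.div_pos (Nat.le_of_dvd (by omega) (Nat.ordProj_dvd n d)) (pow_pos hd.pos _)
        have hp1 : 0 < n / p ^ (n.factorization p) :=
          Nat.div_pos (Nat.le_of_dvd (by omega) (Nat.ordProj_dvd n p)) (pow_pos hp.pos _)
        omega
      have hpow : d ^ (n.factorization d) = p ^ (n.factorization p) := by
        have hA := Nat.div_div_self (Nat.ordProj_dvd n d) hn0
        have hB := Nat.div_div_self (Nat.ordProj_dvd n p) hn0
        rw [← hA, ← hB, hdiv]
      have hkd : 0 < n.factorization d := hd.factorization_pos_of_dvd hn0 hdn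
      have hddvd : d ∣ p ^ (n.factorization p) := by
        rw [← hpow]
        exact dvd_pow_self d hkd.ne'
      exact (Nat.prime_dvd_prime_iff_eq hd hp).mp (hd.dvd_of_dvd_pow hddvd)
    have hn_eq : n = p ^ n.primeFactorsList.length :=
      Nat.eq_prime_pow_of_unique_prime_dvd hn0 (fun {d} hd hdn => huniq hd hdn)
    refine ⟨p, n.primeFactorsList.length, hp, ?_, hn_eq⟩
    by_contra hm
    push_neg at hm
    interval_cases h : n.primeFactorsList.length
    · rw [pow_zero] at hn_eq; omega
    · rw [pow_one] at hn_eq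
      exact hnp (hn_eq ▸ hp)
  · rintro ⟨p, m, hp, hm2, hnpm⟩
    have hrho' : rho = (n : ℝ) - 1 := hrho.unique (zmod_spec_complete hp hnpm)
    have hSne : S.Nonempty := Finset.card_pos.mp (by rw [hcardS]; omega)
    have hconst : ∀ v ∈ S, Tr v = n - 1 := by
      intro v hv
      rw [hS, Finset.mem_filter] at hv
      exact zmod_tr_complete hp hnpm v hv.2.1
    have htrmax' : trmax = (n : ℝ) - 1 := by
      rw [htrmax]
      have : S.sup Tr = n - 1 := by
        apply le_antisymm
        · exact Finset.sup_le (fun v hv => (hconst v hv).le)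
        · obtain ⟨v0, hv0⟩ := hSne
          exact (hconst v0 hv0).ge.trans (Finset.le_sup hv0)
      rw [this]
      push_cast [Nat.cast_sub (by omega : 1 ≤ n)]
      ring
    have htravg' : travg = (n : ℝ) - 1 := by
      rw [htravg]
      have hsum : (∑ v ∈ S, (Tr v : ℝ)) = ((n - n.totient - 1 : ℕ) : ℝ) * ((n : ℝ) - 1) := by
        rw [Finset.sum_congr rfl (fun v hv => by
          rw [hconst v hv, Nat.cast_sub (by omega : 1 ≤ n), Nat.cast_one])]
        rw [Finset.sum_const, hcardS, nsmul_eq_mul]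
      rw [hsum, hnl]
      field_simp
    have hform : ∀ t : ℝ, t = (n : ℝ) - 1 →
        ((t - 1) + Real.sqrt ((t - 2 * l + 1) ^ 2 + 4 * l * ((n : ℝ) - l))) / 2 = (n : ℝ) - 1 := by
      intro t ht
      subst ht
      have harg : (((n : ℝ) - 1) - 2 * l + 1) ^ 2 + 4 * l * ((n : ℝ) - l) = (n : ℝ) ^ 2 := by
        ring
      rw [harg, Real.sqrt_sq (by positivity)]
      ring
    exact ⟨by rw [hrho', hform travg htravg'], by rw [hrho', hform trmax htrmax']⟩
end
end

section
/- Let n ≥ 3 and let T_avg = (∑_{v ∈ ZMod n} Tr(v)) / n be the average transmission of the power graph P(C_n) of the cyclic group ZMod n. Then the distance spectral radius of the power graph of the dihedral group of order 2n satisfies ρ₁(P(D_{2n})) ≥ ((T_avg + 2n − 2) + √((T_avg − 2n + 2)² + 4(2n − 1)²)) / 2. -/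
open scoped Classical

noncomputable section

/-! ### Auxiliary lemmas -/

open Matrix in
/-- Rayleigh-quotient lower bound for the largest spectral point of a real symmetric matrix. -/
lemma quad_le_rho {V : Type*} [Fintype V] [DecidableEq V] {M : Matrix V V ℝ}
    (hM : M.IsHermitian) {rho : ℝ} (h : IsGreatest (spectrum ℝ M) rho) (x : V → ℝ) :
    x ⬝ᵥ (M *ᵥ x) ≤ rho * (x ⬝ᵥ x) := by
  classical
  set U : Matrix V V ℝ := (hM.eigenvectorUnitary : Matrix V V ℝ) with hU
  have hstar : star U = Uᵀ := by
    ext i j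
    simp [Matrix.star_apply]
  set c : V → ℝ := Uᵀ *ᵥ x with hc
  have hUU : U * Uᵀ = 1 := by
    have := (Matrix.mem_unitaryGroup_iff).mp hM.eigenvectorUnitary.2
    rwa [hstar] at this
  have h1 : x ⬝ᵥ (M *ᵥ x) = ∑ i, hM.eigenvalues i * (c i * c i) := by
    conv_lhs => rw [hM.spectral_theorem]
    rw [Unitary.conjStarAlgAut_apply, hstar, ← Matrix.mulVec_mulVec, ← Matrix.mulVec_mulVec,
      Matrix.dotProduct_mulVec, ← Matrix.mulVec_transpose]
    simp [dotProduct, Matrix.mulVec_diagonal, c, hU, mul_comm, mul_assoc, mul_left_comm]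
  have h2 : x ⬝ᵥ x = ∑ i, c i * c i := by
    have : (c ⬝ᵥ c) = x ⬝ᵥ x := by
      rw [hc, Matrix.dotProduct_mulVec, ← Matrix.mulVec_transpose, Matrix.transpose_transpose,
        Matrix.mulVec_mulVec, hUU, Matrix.one_mulVec]
    rw [← this]; rfl
  rw [h1, h2, Finset.mul_sum]
  apply Finset.sum_le_sum
  intro i _
  have hle : hM.eigenvalues i ≤ rho := h.2 (hM.eigenvalues_mem_spectrum_real i)
  nlinarith [mul_self_nonneg (c i)]

/-- A vertex at graph-distance 2. -/
lemma dist_eq_two_of {V : Type*} {G : SimpleGraph V} {u v w : V} (hne : u ≠ v)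
    (hnadj : ¬ G.Adj u v) (h1 : G.Adj u w) (h2 : G.Adj w v) : G.dist u v = 2 := by
  have hle := G.dist_le (SimpleGraph.Walk.cons h1 (SimpleGraph.Walk.cons h2 SimpleGraph.Walk.nil))
  simp only [SimpleGraph.Walk.length_cons, SimpleGraph.Walk.length_nil] at hle
  have h0 : G.dist u v ≠ 0 := by
    rw [SimpleGraph.dist_ne_zero_iff_ne_and_reachable]
    exact ⟨hne, ⟨SimpleGraph.Walk.cons h1 (SimpleGraph.Walk.cons h2 SimpleGraph.Walk.nil)⟩⟩
  have h1' : G.dist u v ≠ 1 := fun hd => hnadj (SimpleGraph.dist_eq_one_iff_adj.mp hd)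
  omega

namespace DihedralGroup

variable {n : ℕ}

lemma my_r_pow (j : ZMod n) (m : ℕ) : (r j) ^ m = r (m • j) := by
  induction m with
  | zero => simp [-r_zero, one_def]
  | succ k ih => rw [pow_succ, ih, r_mul_r, succ_nsmul]

lemma my_sr_pow (j : ZMod n) (m : ℕ) : (sr j) ^ m = if Even m then 1 else sr j := by
  induction m with
  | zero => simp
  | succ k ih =>
      rw [pow_succ, ih]
      rcases Nat.even_or_odd k with hk | hk
      · simp [hk, Nat.even_add_one, Nat.not_even_iff_odd.mpr hk.add_one]
      · have h2 : Even (k+1) := hk.add_one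
        simp [Nat.not_even_iff_odd.mpr hk, h2, -r_zero, DihedralGroup.one_def]

end DihedralGroup

open DihedralGroup

variable {n : ℕ}

lemma adj_one_powerGraph {G : Type*} [Group G] {v : G} (h : v ≠ 1) :
    (powerGraph G).Adj 1 v := ⟨Ne.symm h, 0, Or.inl (pow_zero v).symm⟩

lemma adj_zero_addPowerGraph {G : Type*} [AddGroup G] {v : G} (h : v ≠ 0) :
    (addPowerGraph G).Adj 0 v := ⟨Ne.symm h, 0, Or.inl (zero_smul ℕ v).symm⟩

lemma adj_r_r_iff (i j : ZMod n) :
    (powerGraph (DihedralGroup n)).Adj (r i) (r j) ↔ (addPowerGraph (ZMod n)).Adj i j := by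
  constructor
  · rintro ⟨hne, m, h | h⟩
    · rw [my_r_pow] at h
      exact ⟨fun he => hne (by rw [he]), m, Or.inl (r.injEq _ _ ▸ h : i = m • j)⟩
    · rw [my_r_pow] at h
      exact ⟨fun he => hne (by rw [he]), m, Or.inr (r.injEq _ _ ▸ h : j = m • i)⟩
  · rintro ⟨hne, m, h | h⟩
    · exact ⟨fun he => hne (by injection he), m, Or.inl (by rw [my_r_pow, h])⟩
    · exact ⟨fun he => hne (by injection he), m, Or.inr (by rw [my_r_pow, h])⟩

lemma adj_sr_eq_one {i : ZMod n} {v : DihedralGroup n}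
    (h : (powerGraph (DihedralGroup n)).Adj (sr i) v) : v = 1 := by
  obtain ⟨hne, m, hm | hm⟩ := h
  · rcases v with j | j
    · rw [my_r_pow] at hm; exact absurd hm (by simp)
    · rw [my_sr_pow] at hm
      split_ifs at hm with he
      · exact absurd hm (by simp [-r_zero, DihedralGroup.one_def])
      · injection hm with h'; exact absurd (by rw [h']) hne
  · rw [my_sr_pow] at hm
    split_ifs at hm with he
    · exact hm
    · exact absurd hm.symm hne

lemma dist_sr_sr {i j : ZMod n} (h : i ≠ j) :
    (powerGraph (DihedralGroup n)).dist (sr i) (sr j) = 2 := by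
  have hne : (sr i : DihedralGroup n) ≠ sr j := by simp [h]
  have h1 : (powerGraph (DihedralGroup n)).Adj (sr i) 1 :=
    (adj_one_powerGraph (by simp [-r_zero, DihedralGroup.one_def])).symm
  have h2 : (powerGraph (DihedralGroup n)).Adj 1 (sr j) :=
    adj_one_powerGraph (by simp [-r_zero, DihedralGroup.one_def])
  refine dist_eq_two_of hne (fun ha => ?_) h1 h2
  have := adj_sr_eq_one ha
  simp [-r_zero, DihedralGroup.one_def] at this

lemma dist_sr_r (i j : ZMod n) :
    (powerGraph (DihedralGroup n)).dist (sr i) (r j) = if j = 0 then 1 else 2 := by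
  split_ifs with hj
  · subst hj
    rw [SimpleGraph.dist_eq_one_iff_adj]
    exact (adj_one_powerGraph (by simp [-r_zero, DihedralGroup.one_def])).symm
  · have h1 : (powerGraph (DihedralGroup n)).Adj (sr i) 1 :=
      (adj_one_powerGraph (by simp [-r_zero, DihedralGroup.one_def])).symm
    have h2 : (powerGraph (DihedralGroup n)).Adj 1 (r j) :=
      adj_one_powerGraph (by simp [-r_zero, DihedralGroup.one_def, hj])
    refine dist_eq_two_of (by simp) (fun ha => ?_) h1 h2
    have := adj_sr_eq_one ha
    simp [-r_zero, DihedralGroup.one_def, hj] at this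

lemma dist_r_r (i j : ZMod n) :
    (powerGraph (DihedralGroup n)).dist (r i) (r j) = (addPowerGraph (ZMod n)).dist i j := by
  by_cases hij : i = j
  · subst hij; rw [SimpleGraph.dist_self, SimpleGraph.dist_self]
  by_cases hadj : (addPowerGraph (ZMod n)).Adj i j
  · rw [SimpleGraph.dist_eq_one_iff_adj.mpr ((adj_r_r_iff i j).mpr hadj),
      SimpleGraph.dist_eq_one_iff_adj.mpr hadj]
  · have hi0 : i ≠ 0 := by
      rintro rfl; exact hadj (adj_zero_addPowerGraph (Ne.symm hij))
    have hj0 : j ≠ 0 := by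
      rintro rfl; exact hadj (adj_zero_addPowerGraph hij).symm
    rw [dist_eq_two_of hij hadj ((adj_zero_addPowerGraph hi0).symm) (adj_zero_addPowerGraph hj0)]
    refine (dist_eq_two_of (by simp [hij]) (fun ha => hadj ((adj_r_r_iff i j).mp ha))
      ((adj_r_r_iff i 0).mpr (adj_zero_addPowerGraph hi0).symm)
      ((adj_r_r_iff 0 j).mpr (adj_zero_addPowerGraph hj0))).symm ▸ rfl

lemma sum_dihedral [NeZero n] {M : Type*} [AddCommMonoid M] (f : DihedralGroup n → M) :
    ∑ g, f g = (∑ i : ZMod n, f (r i)) + ∑ i : ZMod n, f (sr i) := by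
  let e : (ZMod n) ⊕ (ZMod n) ≃ DihedralGroup n :=
    { toFun := Sum.elim r sr
      invFun := fun g => match g with | r i => Sum.inl i | sr i => Sum.inr i
      left_inv := by rintro (i | i) <;> rfl
      right_inv := by rintro (i | i) <;> rfl }
  rw [← e.sum_comp f, Fintype.sum_sum_type]
  simp [e]

lemma sum_if_eq [NeZero n] (t : ZMod n) (c1 c2 : ℝ) :
    ∑ i : ZMod n, (if i = t then c1 else c2) = c1 + ((n : ℝ) - 1) * c2 := by
  rw [← Finset.add_sum_erase _ _ (Finset.mem_univ t), if_pos rfl]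
  congr 1
  rw [Finset.sum_congr rfl fun i hi => if_neg (Finset.mem_erase.mp hi).1,
    Finset.sum_const, Finset.card_erase_of_mem (Finset.mem_univ _), Finset.card_univ, ZMod.card]
  have h1 : 1 ≤ n := NeZero.one_le
  rw [nsmul_eq_mul, Nat.cast_sub h1, Nat.cast_one]

open Matrix in
/-- Distance-spectral-radius lower bound for the power graph of the dihedral group of
order `2n`, in terms of the average transmission of the power graph of `ZMod n`. -/
theorem distSpectralRadius_powerGraph_dihedral_lower_bound
    (n : ℕ) [NeZero n] (hn : 3 ≤ n) (rho Tavg : ℝ)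
    (hrho : IsGreatest (spectrum ℝ (distMatrix (powerGraph (DihedralGroup n)))) rho)
    (hTavg : Tavg =
      (∑ v : ZMod n, (transmission (addPowerGraph (ZMod n)) v : ℝ)) / (n : ℝ)) :
    ((Tavg + 2 * n - 2) +
      Real.sqrt ((Tavg - 2 * n + 2) ^ 2 + 4 * (2 * (n : ℝ) - 1) ^ 2)) / 2 ≤ rho := by
  classical
  set G := powerGraph (DihedralGroup n) with hG
  have hn0 : (0 : ℝ) < n := by positivity
  have hM : (distMatrix G).IsHermitian := by
    unfold Matrix.IsHermitian
    ext u v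
    simp [distMatrix, Matrix.conjTranspose_apply, SimpleGraph.dist_comm]
  set s : ℝ := Real.sqrt ((Tavg - 2 * n + 2) ^ 2 + 4 * (2 * (n : ℝ) - 1) ^ 2) with hs
  set lam : ℝ := ((Tavg + 2 * n - 2) + s) / 2 with hlam
  set a : ℝ := 2 * n - 1 with ha
  set b : ℝ := lam - Tavg with hb
  set x : DihedralGroup n → ℝ := fun g => match g with
    | DihedralGroup.r _ => a
    | DihedralGroup.sr _ => b with hx
  have hxr : ∀ i : ZMod n, x (r i) = a := fun _ => rfl
  have hxsr : ∀ i : ZMod n, x (sr i) = b := fun _ => rfl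
  have key := quad_le_rho hM hrho x
  -- sum of all transmissions
  have hT : ∑ i : ZMod n, ((transmission (addPowerGraph (ZMod n)) i : ℝ)) = n * Tavg := by
    rw [hTavg]; field_simp
  -- row sums
  have hRrr : ∑ i : ZMod n, ∑ j : ZMod n, (G.dist (r i) (r j) : ℝ) = n * Tavg := by
    rw [← hT]
    refine Finset.sum_congr rfl fun i _ => ?_
    rw [transmission]
    push_cast
    exact Finset.sum_congr rfl fun j _ => by rw [dist_r_r]
  have hRrs : ∀ i : ZMod n, ∑ j : ZMod n, (G.dist (r i) (sr j) : ℝ)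
      = if i = 0 then (n : ℝ) else 2 * n := by
    intro i
    have : ∀ j : ZMod n, (G.dist (r i) (sr j) : ℝ) = if i = 0 then (1:ℝ) else 2 := by
      intro j
      rw [SimpleGraph.dist_comm, dist_sr_r]
      split_ifs <;> norm_num
    rw [Finset.sum_congr rfl fun j _ => this j, Finset.sum_const, Finset.card_univ, ZMod.card,
      nsmul_eq_mul]
    split_ifs <;> ring
  have hRsr : ∀ i : ZMod n, ∑ j : ZMod n, (G.dist (sr i) (r j) : ℝ) = 2 * n - 1 := by
    intro i
    have : ∀ j : ZMod n, (G.dist (sr i) (r j) : ℝ) = if j = 0 then (1:ℝ) else 2 := by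
      intro j
      rw [dist_sr_r]
      split_ifs <;> norm_num
    rw [Finset.sum_congr rfl fun j _ => this j, sum_if_eq]
    ring
  have hRss : ∀ i : ZMod n, ∑ j : ZMod n, (G.dist (sr i) (sr j) : ℝ) = 2 * n - 2 := by
    intro i
    have : ∀ j : ZMod n, (G.dist (sr i) (sr j) : ℝ) = if j = i then (0:ℝ) else 2 := by
      intro j
      split_ifs with h
      · subst h; rw [SimpleGraph.dist_self]; norm_num
      · rw [dist_sr_sr (Ne.symm h)]; norm_num
    rw [Finset.sum_congr rfl fun j _ => this j, sum_if_eq]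
    ring
  -- expand the quadratic form
  have inner : ∀ u, (distMatrix G *ᵥ x) u =
      (∑ j : ZMod n, (G.dist u (r j) : ℝ)) * a + (∑ j : ZMod n, (G.dist u (sr j) : ℝ)) * b := by
    intro u
    show ∑ v, (G.dist u v : ℝ) * x v = _
    rw [sum_dihedral (f := fun v => (G.dist u v : ℝ) * x v), ← Finset.sum_mul, ← Finset.sum_mul]
  have hQ : dotProduct x (distMatrix G *ᵥ x)
      = (n : ℝ) * (a ^ 2 * Tavg + 2 * a * b * (2 * n - 1) + b ^ 2 * (2 * n - 2)) := by
    show (∑ u, x u * (distMatrix G *ᵥ x) u) = _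
    rw [sum_dihedral (f := fun u => x u * (distMatrix G *ᵥ x) u)]
    have e1 : ∑ i : ZMod n, x (r i) * (distMatrix G *ᵥ x) (r i)
        = a * a * (n * Tavg) + a * b * (n + ((n : ℝ) - 1) * (2 * n)) := by
      have step : ∀ i : ZMod n, x (r i) * (distMatrix G *ᵥ x) (r i)
          = a * a * (∑ j : ZMod n, (G.dist (r i) (r j) : ℝ))
            + a * b * (∑ j : ZMod n, (G.dist (r i) (sr j) : ℝ)) := by
        intro i
        rw [inner (r i), hxr i]
        ring
      have h2 : ∑ i : ZMod n, ∑ j : ZMod n, (G.dist (r i) (sr j) : ℝ)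
          = (n : ℝ) + ((n : ℝ) - 1) * (2 * n) := by
        rw [Finset.sum_congr rfl (fun i _ => hRrs i), sum_if_eq]
      rw [Finset.sum_congr rfl (fun i _ => step i),
        Finset.sum_add_distrib, ← Finset.mul_sum, ← Finset.mul_sum, hRrr, h2]
    have e2 : ∑ i : ZMod n, x (sr i) * (distMatrix G *ᵥ x) (sr i)
        = (n : ℝ) * (b * ((2 * n - 1) * a + (2 * n - 2) * b)) := by
      have step : ∀ i : ZMod n, x (sr i) * (distMatrix G *ᵥ x) (sr i)
          = b * ((2 * n - 1) * a + (2 * n - 2) * b) := by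
        intro i
        rw [inner (sr i), hxsr i, hRsr i, hRss i]
      rw [Finset.sum_congr rfl (fun i _ => step i),
        Finset.sum_const, Finset.card_univ, ZMod.card, nsmul_eq_mul]
    rw [e1, e2]
    ring
  have hX : dotProduct x x = (n : ℝ) * (a ^ 2 + b ^ 2) := by
    show (∑ u, x u * x u) = _
    have s1 : (∑ i : ZMod n, x (r i) * x (r i)) = ∑ _i : ZMod n, a * a :=
      Finset.sum_congr rfl (fun i _ => by rw [hxr i])
    have s2 : (∑ i : ZMod n, x (sr i) * x (sr i)) = ∑ _i : ZMod n, b * b :=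
      Finset.sum_congr rfl (fun i _ => by rw [hxsr i])
    rw [sum_dihedral (f := fun u => x u * x u), s1, s2,
      Finset.sum_const, Finset.sum_const, Finset.card_univ, ZMod.card, nsmul_eq_mul,
      nsmul_eq_mul]
    ring
  -- the chosen vector is an eigen-direction of the quotient matrix
  have hs2 : s ^ 2 = (Tavg - 2 * n + 2) ^ 2 + 4 * (2 * (n : ℝ) - 1) ^ 2 := by
    rw [hs]; exact Real.sq_sqrt (by positivity)
  have hprod : (lam - Tavg) * (lam - (2 * n - 2)) = (2 * (n : ℝ) - 1) ^ 2 := by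
    rw [hlam]
    linear_combination hs2 / 4
  have hEig : a ^ 2 * Tavg + 2 * a * b * (2 * n - 1) + b ^ 2 * (2 * n - 2)
      = lam * (a ^ 2 + b ^ 2) := by
    linear_combination (Tavg - lam) * hprod
  have hX0 : (0 : ℝ) < dotProduct x x := by
    rw [hX]
    have : (3 : ℝ) ≤ n := by exact_mod_cast hn
    nlinarith [sq_nonneg b]
  rw [hQ, hX] at key
  rw [hX] at hX0
  have : lam * ((n : ℝ) * (a ^ 2 + b ^ 2)) ≤ rho * ((n : ℝ) * (a ^ 2 + b ^ 2)) := by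
    calc lam * ((n : ℝ) * (a ^ 2 + b ^ 2))
        = (n : ℝ) * (a ^ 2 * Tavg + 2 * a * b * (2 * n - 1) + b ^ 2 * (2 * n - 2)) := by
          rw [hEig]; ring
      _ ≤ rho * ((n : ℝ) * (a ^ 2 + b ^ 2)) := key
  exact le_of_mul_le_mul_right this hX0
end
end
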